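/- arXiv:1311.2758 — 7 statements merged into one kernel-verified Lean document; each statement's English description precedes it below -/
import Mathlib

section
/- Fix integers d ≥ 1 and 1 ≤ k ≤ d. Let G be the group of all bijections of E = {±1, …, ±d} commuting with negation ι(e) = −e, acting diagonally on R̂_k × R̂_k. Then two pairs (A, B) and (A′, B′) in R̂_k × R̂_k lie in the same G-orbit if and only if #(A ∩ B) = #(A′ ∩ B′) and #(p(A) ∩ p(B)) = #(p(A′) ∩ p(B′)). Moreover, the pairs (ℓ̃, ℓ) = (#(A ∩ B), #(p(A) ∩ p(B))) realized by elements of R̂_k × R̂_k are exactly those satisfying 0 ≤ ℓ̃ ≤ ℓ ≤ k and ℓ ≥ 2k − d. -/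
/-- The set `E = {±1, …, ±d}` of nonzero integers of absolute value at most `d`. -/
noncomputable def Eset (d : ℕ) : Finset ℤ := (Finset.Icc (-(d : ℤ)) d).filter (· ≠ 0)

/-- `A` belongs to `R̂_k`: a `k`-element subset of `E` containing no pair `{i, −i}`. -/
def RhatP (d k : ℕ) (A : Finset ℤ) : Prop :=
  A ⊆ Eset d ∧ A.card = k ∧ ∀ a ∈ A, -a ∉ A

namespace Stmt12

noncomputable def Pset (d : ℕ) : Finset ℤ := Finset.Icc 1 (d : ℤ)

lemma mem_Eset {d : ℕ} {e : ℤ} : e ∈ Eset d ↔ e ≠ 0 ∧ |e| ≤ (d : ℤ) := by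
  simp only [Eset, Finset.mem_filter, Finset.mem_Icc, abs_le]
  tauto

lemma mem_Pset {d : ℕ} {n : ℤ} : n ∈ Pset d ↔ 1 ≤ n ∧ n ≤ (d : ℤ) := Finset.mem_Icc

lemma mem_Eset_iff_abs {d : ℕ} {e : ℤ} : e ∈ Eset d ↔ |e| ∈ Pset d := by
  rw [mem_Eset, mem_Pset]
  constructor
  · rintro ⟨h1, h2⟩; exact ⟨by rcases (Ne.lt_or_gt h1) with h|h <;> [exact (abs_of_neg h).symm ▸ (by omega); exact (abs_of_pos h).symm ▸ (by omega)], h2⟩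
  · rintro ⟨h1, h2⟩; refine ⟨fun h => by simp [h] at h1, h2⟩

lemma neg_mem_Eset {d : ℕ} {e : ℤ} : -e ∈ Eset d ↔ e ∈ Eset d := by
  simp [mem_Eset_iff_abs]

lemma card_Pset {d : ℕ} : (Pset d).card = d := by
  simp [Pset]

lemma absInjOn {d k : ℕ} {A : Finset ℤ} (hA : RhatP d k A) : Set.InjOn (fun x : ℤ => |x|) A := by
  intro a ha b hb hab
  simp only at hab
  rcases abs_eq_abs.1 hab with h | h
  · exact h
  · have hb' : b = -a := by omega
    rw [hb'] at hb
    exact (hA.2.2 a ha hb).elim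

lemma mem_ne_zero {d k : ℕ} {A : Finset ℤ} (hA : RhatP d k A) {a : ℤ} (ha : a ∈ A) : a ≠ 0 :=
  (mem_Eset.1 (hA.1 ha)).1

lemma pA_subset {d k : ℕ} {A : Finset ℤ} (hA : RhatP d k A) :
    A.image (fun x : ℤ => |x|) ⊆ Pset d := by
  intro n hn
  obtain ⟨a, ha, rfl⟩ := Finset.mem_image.1 hn
  exact mem_Eset_iff_abs.1 (hA.1 ha)

lemma card_pA {d k : ℕ} {A : Finset ℤ} (hA : RhatP d k A) :
    (A.image (fun x : ℤ => |x|)).card = k := by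
  rw [Finset.card_image_of_injOn (absInjOn hA), hA.2.1]


lemma mem_image_abs {A : Finset ℤ} {n : ℤ} (hn : 0 ≤ n) :
    n ∈ A.image (fun x : ℤ => |x|) ↔ n ∈ A ∨ -n ∈ A := by
  simp only [Finset.mem_image]
  constructor
  · rintro ⟨a, ha, rfl⟩
    rcases abs_choice a with h | h
    · left; rwa [h]
    · right; rwa [h, neg_neg]
  · rintro (h | h)
    · exact ⟨n, h, abs_of_nonneg hn⟩
    · exact ⟨-n, h, by rw [abs_neg, abs_of_nonneg hn]⟩

/-- signed representative of `n` : the element of `A` (or failing that `B`) above `n`. -/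
def repFn (A B : Finset ℤ) (n : ℤ) : ℤ :=
  if n ∈ A then n else if -n ∈ A then -n
  else if n ∈ B then n else if -n ∈ B then -n else n

lemma repFn_eq_or (A B : Finset ℤ) (n : ℤ) : repFn A B n = n ∨ repFn A B n = -n := by
  unfold repFn; split_ifs <;> simp

lemma abs_repFn (A B : Finset ℤ) (n : ℤ) : |repFn A B n| = |n| := by
  rcases repFn_eq_or A B n with h | h <;> simp [h]

lemma repFn_mem_A {A B : Finset ℤ} {n : ℤ} (hn : 0 ≤ n)
    (h : n ∈ A.image (fun x : ℤ => |x|)) : repFn A B n ∈ A := by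
  rcases (mem_image_abs hn).1 h with h' | h' <;> unfold repFn <;> split_ifs <;> tauto

lemma repFn_mem_B {A B : Finset ℤ} {n : ℤ} (hn : 0 ≤ n)
    (hnA : n ∉ A.image (fun x : ℤ => |x|)) (h : n ∈ B.image (fun x : ℤ => |x|)) :
    repFn A B n ∈ B := by
  have h1 : ¬ (n ∈ A ∨ -n ∈ A) := fun hc => hnA ((mem_image_abs hn).2 hc)
  push_neg at h1
  rcases (mem_image_abs hn).1 h with h' | h' <;> unfold repFn <;> split_ifs <;> tauto

/-- uniqueness: the representative equals any element of `A` with the same abs value. -/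
lemma repFn_eq_of_mem_A {d k : ℕ} {A B : Finset ℤ} (hA : RhatP d k A) {n a : ℤ} (hn : 0 ≤ n)
    (ha : a ∈ A) (han : |a| = n) : repFn A B n = a := by
  have hmem : n ∈ A.image (fun x : ℤ => |x|) := Finset.mem_image.2 ⟨a, ha, han⟩
  have h1 := repFn_mem_A (B := B) hn hmem
  refine absInjOn hA h1 ha ?_
  simp only [abs_repFn, han, abs_of_nonneg hn]

lemma repFn_eq_of_mem_B {d k : ℕ} {A B : Finset ℤ} (hB : RhatP d k B) {n b : ℤ} (hn : 0 ≤ n)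
    (hnA : n ∉ A.image (fun x : ℤ => |x|)) (hb : b ∈ B) (hbn : |b| = n) : repFn A B n = b := by
  have hmem : n ∈ B.image (fun x : ℤ => |x|) := Finset.mem_image.2 ⟨b, hb, hbn⟩
  have h1 := repFn_mem_B hn hnA hmem
  refine absInjOn hB h1 hb ?_
  simp only [abs_repFn, hbn, abs_of_nonneg hn]

/-! ### The five classes -/

def D1 (A B : Finset ℤ) : Finset ℤ := (A ∩ B).image (fun x : ℤ => |x|)
def D2 (A B : Finset ℤ) : Finset ℤ :=
  (A.image (fun x : ℤ => |x|) ∩ B.image (fun x : ℤ => |x|)) \ D1 A B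
def D3 (A B : Finset ℤ) : Finset ℤ :=
  A.image (fun x : ℤ => |x|) \ B.image (fun x : ℤ => |x|)
def D4 (A B : Finset ℤ) : Finset ℤ :=
  B.image (fun x : ℤ => |x|) \ A.image (fun x : ℤ => |x|)
noncomputable def D5 (d : ℕ) (A B : Finset ℤ) : Finset ℤ :=
  Pset d \ (A.image (fun x : ℤ => |x|) ∪ B.image (fun x : ℤ => |x|))

lemma D1_subset_inter (A B : Finset ℤ) :
    D1 A B ⊆ A.image (fun x : ℤ => |x|) ∩ B.image (fun x : ℤ => |x|) := by
  intro n hn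
  obtain ⟨a, ha, rfl⟩ := Finset.mem_image.1 hn
  simp only [Finset.mem_inter] at ha ⊢
  exact ⟨Finset.mem_image.2 ⟨a, ha.1, rfl⟩, Finset.mem_image.2 ⟨a, ha.2, rfl⟩⟩

lemma classify {d k : ℕ} {A B : Finset ℤ} (hA : RhatP d k A) (hB : RhatP d k B) {n : ℤ}
    (hn : n ∈ Pset d) :
    n ∈ D1 A B ∨ n ∈ D2 A B ∨ n ∈ D3 A B ∨ n ∈ D4 A B ∨ n ∈ D5 d A B := by
  by_cases h1 : n ∈ D1 A B
  · tauto
  by_cases h2 : n ∈ A.image (fun x : ℤ => |x|) <;>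
    by_cases h3 : n ∈ B.image (fun x : ℤ => |x|) <;>
      simp [D2, D3, D4, D5, h1, h2, h3, hn]

lemma D1_subset_Pset {d k : ℕ} {A B : Finset ℤ} (hA : RhatP d k A) (hB : RhatP d k B) :
    D1 A B ⊆ Pset d := (D1_subset_inter A B).trans ((Finset.inter_subset_left).trans (pA_subset hA))
lemma D2_subset_Pset {d k : ℕ} {A B : Finset ℤ} (hA : RhatP d k A) (hB : RhatP d k B) :
    D2 A B ⊆ Pset d :=
  (Finset.sdiff_subset).trans ((Finset.inter_subset_left).trans (pA_subset hA))
lemma D3_subset_Pset {d k : ℕ} {A B : Finset ℤ} (hA : RhatP d k A) (hB : RhatP d k B) :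
    D3 A B ⊆ Pset d := (Finset.sdiff_subset).trans (pA_subset hA)
lemma D4_subset_Pset {d k : ℕ} {A B : Finset ℤ} (hA : RhatP d k A) (hB : RhatP d k B) :
    D4 A B ⊆ Pset d := (Finset.sdiff_subset).trans (pA_subset hB)
lemma D5_subset_Pset {d : ℕ} {A B : Finset ℤ} : D5 d A B ⊆ Pset d := Finset.sdiff_subset


/-! ### disjointness / coverage -/

lemma not_mem_D1_of_D2 {A B : Finset ℤ} {n : ℤ} (h : n ∈ D2 A B) : n ∉ D1 A B :=
  (Finset.mem_sdiff.1 h).2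

lemma D3_not_pB {A B : Finset ℤ} {n : ℤ} (h : n ∈ D3 A B) :
    n ∉ B.image (fun x : ℤ => |x|) := (Finset.mem_sdiff.1 h).2

lemma D1_subset_pB (A B : Finset ℤ) : D1 A B ⊆ B.image (fun x : ℤ => |x|) :=
  (D1_subset_inter A B).trans Finset.inter_subset_right
lemma D1_subset_pA (A B : Finset ℤ) : D1 A B ⊆ A.image (fun x : ℤ => |x|) :=
  (D1_subset_inter A B).trans Finset.inter_subset_left
lemma D2_subset_pA (A B : Finset ℤ) : D2 A B ⊆ A.image (fun x : ℤ => |x|) :=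
  Finset.sdiff_subset.trans Finset.inter_subset_left
lemma D2_subset_pB (A B : Finset ℤ) : D2 A B ⊆ B.image (fun x : ℤ => |x|) :=
  Finset.sdiff_subset.trans Finset.inter_subset_right
lemma D3_subset_pA (A B : Finset ℤ) : D3 A B ⊆ A.image (fun x : ℤ => |x|) :=
  Finset.sdiff_subset
lemma D4_subset_pB (A B : Finset ℤ) : D4 A B ⊆ B.image (fun x : ℤ => |x|) :=
  Finset.sdiff_subset
lemma D4_not_pA {A B : Finset ℤ} {n : ℤ} (h : n ∈ D4 A B) :
    n ∉ A.image (fun x : ℤ => |x|) := (Finset.mem_sdiff.1 h).2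
lemma D5_not_pA {d : ℕ} {A B : Finset ℤ} {n : ℤ} (h : n ∈ D5 d A B) :
    n ∉ A.image (fun x : ℤ => |x|) := fun hc =>
  (Finset.mem_sdiff.1 h).2 (Finset.mem_union_left _ hc)
lemma D5_not_pB {d : ℕ} {A B : Finset ℤ} {n : ℤ} (h : n ∈ D5 d A B) :
    n ∉ B.image (fun x : ℤ => |x|) := fun hc =>
  (Finset.mem_sdiff.1 h).2 (Finset.mem_union_right _ hc)

lemma pA_cases {A B : Finset ℤ} {n : ℤ} (h : n ∈ A.image (fun x : ℤ => |x|)) :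
    n ∈ D1 A B ∨ n ∈ D2 A B ∨ n ∈ D3 A B := by
  by_cases h1 : n ∈ D1 A B
  · tauto
  by_cases h2 : n ∈ B.image (fun x : ℤ => |x|) <;> simp [D2, D3, h, h1, h2]

lemma pB_cases {A B : Finset ℤ} {n : ℤ} (h : n ∈ B.image (fun x : ℤ => |x|)) :
    n ∈ D1 A B ∨ n ∈ D2 A B ∨ n ∈ D4 A B := by
  by_cases h1 : n ∈ D1 A B
  · tauto
  by_cases h2 : n ∈ A.image (fun x : ℤ => |x|) <;> simp [D2, D4, h, h1, h2]

/-! ### cardinalities -/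

lemma card_facts {d k : ℕ} {A B : Finset ℤ} (hA : RhatP d k A) (hB : RhatP d k B) :
    (D1 A B).card = (A ∩ B).card ∧
    (D2 A B).card + (D1 A B).card
      = (A.image (fun x : ℤ => |x|) ∩ B.image (fun x : ℤ => |x|)).card ∧
    (D3 A B).card + (A.image (fun x : ℤ => |x|) ∩ B.image (fun x : ℤ => |x|)).card = k ∧
    (D4 A B).card + (A.image (fun x : ℤ => |x|) ∩ B.image (fun x : ℤ => |x|)).card = k ∧
    (D5 d A B).card
      + (A.image (fun x : ℤ => |x|) ∪ B.image (fun x : ℤ => |x|)).card = d ∧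
    (A.image (fun x : ℤ => |x|) ∪ B.image (fun x : ℤ => |x|)).card
      + (A.image (fun x : ℤ => |x|) ∩ B.image (fun x : ℤ => |x|)).card = k + k := by
  refine ⟨?_, ?_, ?_, ?_, ?_, ?_⟩
  · exact Finset.card_image_of_injOn ((absInjOn hA).mono (by simp [Set.subset_def]; intro a ha _; exact ha))
  · exact Finset.card_sdiff_add_card_eq_card (D1_subset_inter A B)
  · unfold D3; rw [Finset.card_sdiff_add_card_inter, card_pA hA]
  · unfold D4; rw [Finset.inter_comm, Finset.card_sdiff_add_card_inter, card_pA hB]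
  · unfold D5; rw [Finset.card_sdiff_add_card_eq_card
      (Finset.union_subset (pA_subset hA) (pA_subset hB)), card_Pset]
  · rw [Finset.card_union_add_card_inter, card_pA hA, card_pA hB]

/-! ### a bijection pair between finsets of equal cardinality -/

lemma exists_bijOn_pair {s t : Finset ℤ} (h : s.card = t.card) :
    ∃ f g : ℤ → ℤ, (∀ n ∈ s, f n ∈ t) ∧ (∀ m ∈ t, g m ∈ s) ∧
      (∀ n ∈ s, g (f n) = n) ∧ (∀ m ∈ t, f (g m) = m) := by
  classical
  let e := Finset.equivOfCardEq h
  refine ⟨fun n => if hn : n ∈ s then (e ⟨n, hn⟩ : ℤ) else n,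
          fun m => if hm : m ∈ t then (e.symm ⟨m, hm⟩ : ℤ) else m, ?_, ?_, ?_, ?_⟩
  · intro n hn; simp only [dif_pos hn]; exact (e ⟨n, hn⟩).2
  · intro m hm; simp only [dif_pos hm]; exact (e.symm ⟨m, hm⟩).2
  · intro n hn
    have h1 : (↑(e ⟨n, hn⟩) : ℤ) ∈ t := (e ⟨n, hn⟩).2
    simp only [dif_pos hn, dif_pos h1]
    have h2 : (⟨(e ⟨n, hn⟩ : ℤ), h1⟩ : {x // x ∈ t}) = e ⟨n, hn⟩ := rfl
    rw [h2, Equiv.symm_apply_apply]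
  · intro m hm
    have h1 : (↑(e.symm ⟨m, hm⟩) : ℤ) ∈ s := (e.symm ⟨m, hm⟩).2
    simp only [dif_pos hm, dif_pos h1]
    have h2 : (⟨(e.symm ⟨m, hm⟩ : ℤ), h1⟩ : {x // x ∈ s}) = e.symm ⟨m, hm⟩ := rfl
    rw [h2, Equiv.apply_symm_apply]


lemma abs_repFn_Pset {d : ℕ} (A B : Finset ℤ) {n : ℤ} (hn : n ∈ Pset d) :
    |repFn A B n| = n := by
  rw [abs_repFn, abs_of_pos (mem_Pset.1 hn).1]

lemma repFn_or (A B : Finset ℤ) (e : ℤ) : repFn A B |e| = e ∨ repFn A B |e| = -e := by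
  rcases repFn_eq_or A B |e| with h | h <;> rw [h] <;> rcases abs_choice e with h2 | h2 <;>
    simp [h2]

/-! ### the signed permutation built from a positive-level map `Φ` -/

noncomputable def Gfun (d : ℕ) (A B A' B' : Finset ℤ) (Φ : ℤ → ℤ) (e : ℤ) : ℤ :=
  if e ∈ Eset d then
    (if repFn A B |e| = e then repFn A' B' (Φ |e|) else -(repFn A' B' (Φ |e|)))
  else e

lemma Gfun_leftInv (d : ℕ) (A B A' B' : Finset ℤ) (Φ Ψ : ℤ → ℤ)
    (hΦP : ∀ n ∈ Pset d, Φ n ∈ Pset d) (hΨΦ : ∀ n ∈ Pset d, Ψ (Φ n) = n) (e : ℤ) :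
    Gfun d A' B' A B Ψ (Gfun d A B A' B' Φ e) = e := by
  by_cases he : e ∈ Eset d
  · have hn : |e| ∈ Pset d := mem_Eset_iff_abs.1 he
    have hΦn : Φ |e| ∈ Pset d := hΦP _ hn
    have hrabs : |repFn A' B' (Φ |e|)| = Φ |e| := abs_repFn_Pset A' B' hΦn
    have hrE : repFn A' B' (Φ |e|) ∈ Eset d := mem_Eset_iff_abs.2 (by rw [hrabs]; exact hΦn)
    have hrne : repFn A' B' (Φ |e|) ≠ 0 := (mem_Eset.1 hrE).1
    have he0 : e ≠ 0 := (mem_Eset.1 he).1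
    by_cases hcase : repFn A B |e| = e
    · have hGe : Gfun d A B A' B' Φ e = repFn A' B' (Φ |e|) := by
        unfold Gfun; rw [if_pos he, if_pos hcase]
      rw [hGe]
      unfold Gfun
      rw [if_pos hrE, hrabs, if_pos rfl, hΨΦ _ hn, hcase]
    · have hGe : Gfun d A B A' B' Φ e = -(repFn A' B' (Φ |e|)) := by
        unfold Gfun; rw [if_pos he, if_neg hcase]
      rw [hGe]
      have hnegE : -(repFn A' B' (Φ |e|)) ∈ Eset d := neg_mem_Eset.2 hrE
      have habsneg : |(-(repFn A' B' (Φ |e|)))| = Φ |e| := by rw [abs_neg, hrabs]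
      unfold Gfun
      rw [if_pos hnegE, habsneg,
        if_neg (by intro hc; exact hrne (by omega)), hΨΦ _ hn]
      rcases repFn_or A B e with h | h
      · exact absurd h hcase
      · omega
  · have hGe : Gfun d A B A' B' Φ e = e := by unfold Gfun; rw [if_neg he]
    rw [hGe]; unfold Gfun; rw [if_neg he]

lemma Gfun_mem_Eset (d : ℕ) (A B A' B' : Finset ℤ) (Φ : ℤ → ℤ)
    (hΦP : ∀ n ∈ Pset d, Φ n ∈ Pset d) (e : ℤ) :
    e ∈ Eset d ↔ Gfun d A B A' B' Φ e ∈ Eset d := by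
  by_cases he : e ∈ Eset d
  · have hn : |e| ∈ Pset d := mem_Eset_iff_abs.1 he
    have hΦn : Φ |e| ∈ Pset d := hΦP _ hn
    have hrabs : |repFn A' B' (Φ |e|)| = Φ |e| := abs_repFn_Pset A' B' hΦn
    have hrE : repFn A' B' (Φ |e|) ∈ Eset d := mem_Eset_iff_abs.2 (by rw [hrabs]; exact hΦn)
    simp only [he, true_iff]
    unfold Gfun; rw [if_pos he]
    split_ifs
    · exact hrE
    · exact neg_mem_Eset.2 hrE
  · unfold Gfun; rw [if_neg he]

lemma Gfun_neg (d : ℕ) (A B A' B' : Finset ℤ) (Φ : ℤ → ℤ) (e : ℤ) (he : e ∈ Eset d) :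
    Gfun d A B A' B' Φ (-e) = -(Gfun d A B A' B' Φ e) := by
  have he' : -e ∈ Eset d := neg_mem_Eset.2 he
  have he0 : e ≠ 0 := (mem_Eset.1 he).1
  unfold Gfun
  rw [if_pos he, if_pos he', abs_neg]
  rcases repFn_or A B e with h | h
  · rw [if_neg (show repFn A B |e| ≠ -e by rw [h]; omega), if_pos h]
  · rw [if_pos h, if_neg (show repFn A B |e| ≠ e by rw [h]; omega), neg_neg]

lemma repFn_mem_inter_of_D1 {d k : ℕ} {A B : Finset ℤ} (hA : RhatP d k A) {n : ℤ}
    (h : n ∈ D1 A B) : repFn A B n ∈ A ∩ B := by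
  obtain ⟨c, hc, hcn⟩ := Finset.mem_image.1 h
  have hn0 : 0 ≤ n := hcn ▸ abs_nonneg c
  rw [repFn_eq_of_mem_A hA hn0 (Finset.mem_inter.1 hc).1 hcn]
  exact hc

lemma repFn_of_D2 {d k : ℕ} {A B : Finset ℤ} (hA : RhatP d k A) {n : ℤ}
    (h : n ∈ D2 A B) : repFn A B n ∈ A ∧ -(repFn A B n) ∈ B := by
  have hpA : n ∈ A.image (fun x : ℤ => |x|) := D2_subset_pA A B h
  have hpB : n ∈ B.image (fun x : ℤ => |x|) := D2_subset_pB A B h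
  obtain ⟨a, ha, han⟩ := Finset.mem_image.1 hpA
  have hn0 : 0 ≤ n := han ▸ abs_nonneg a
  have hrA : repFn A B n ∈ A := repFn_mem_A hn0 hpA
  refine ⟨hrA, ?_⟩
  obtain ⟨b, hb, hbn⟩ := Finset.mem_image.1 hpB
  have habs : |b| = |repFn A B n| := by rw [abs_repFn, hbn, abs_of_nonneg hn0]
  rcases abs_eq_abs.1 habs with hbr | hbr
  · exfalso
    apply not_mem_D1_of_D2 h
    exact Finset.mem_image.2 ⟨b, Finset.mem_inter.2 ⟨hbr ▸ hrA, hb⟩, hbn⟩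
  · rw [← hbr]; exact hb

lemma repFn_mem_B_of_D4 {A B : Finset ℤ} {n : ℤ} (hn0 : 0 ≤ n)
    (h : n ∈ D4 A B) : repFn A B n ∈ B :=
  repFn_mem_B hn0 (D4_not_pA h) (D4_subset_pB A B h)


lemma abs_repFn_abs (A B : Finset ℤ) (e : ℤ) : abs (repFn A B |e|) = |e| := by
  rw [abs_repFn, abs_abs]

lemma Gfun_maps_A {d k : ℕ} {A B A' B' : Finset ℤ} (hA : RhatP d k A) (Φ : ℤ → ℤ)
    (hΦA : ∀ n ∈ A.image (fun x : ℤ => |x|), Φ n ∈ A'.image (fun x : ℤ => |x|)) :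
    ∀ a ∈ A, Gfun d A B A' B' Φ a ∈ A' := by
  intro a ha
  have haE : a ∈ Eset d := hA.1 ha
  have hpa : |a| ∈ A.image (fun x : ℤ => |x|) := Finset.mem_image.2 ⟨a, ha, rfl⟩
  have hr : repFn A B |a| = a := repFn_eq_of_mem_A hA (abs_nonneg a) ha rfl
  have hΦm : Φ |a| ∈ A'.image (fun x : ℤ => |x|) := hΦA _ hpa
  have h0 : 0 ≤ Φ |a| := by
    obtain ⟨x, _, hx⟩ := Finset.mem_image.1 hΦm
    exact hx ▸ abs_nonneg x
  unfold Gfun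
  rw [if_pos haE, if_pos hr]
  exact repFn_mem_A h0 hΦm

lemma Gfun_maps_B {d k : ℕ} {A B A' B' : Finset ℤ} (hA : RhatP d k A) (hB : RhatP d k B)
    (hA' : RhatP d k A') (hB' : RhatP d k B') (Φ : ℤ → ℤ)
    (hΦ1 : ∀ n ∈ D1 A B, Φ n ∈ D1 A' B') (hΦ2 : ∀ n ∈ D2 A B, Φ n ∈ D2 A' B')
    (hΦ4 : ∀ n ∈ D4 A B, Φ n ∈ D4 A' B') :
    ∀ b ∈ B, Gfun d A B A' B' Φ b ∈ B' := by
  intro b hb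
  have hbE : b ∈ Eset d := hB.1 hb
  have hb0 : b ≠ 0 := (mem_Eset.1 hbE).1
  have hpb : |b| ∈ B.image (fun x : ℤ => |x|) := Finset.mem_image.2 ⟨b, hb, rfl⟩
  rcases pB_cases hpb with h | h | h
  · have hr := repFn_mem_inter_of_D1 hA h
    have hrb : repFn A B |b| = b :=
      absInjOn hB (Finset.mem_inter.1 hr).2 hb (abs_repFn_abs A B b)
    unfold Gfun
    rw [if_pos hbE, if_pos hrb]
    exact (Finset.mem_inter.1 (repFn_mem_inter_of_D1 hA' (hΦ1 _ h))).2
  · obtain ⟨hrA, hrB⟩ := repFn_of_D2 hA h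
    have habs : abs (-(repFn A B |b|)) = |b| := by
      rw [abs_neg]; exact abs_repFn_abs A B b
    have heq : -(repFn A B |b|) = b := absInjOn hB hrB hb habs
    unfold Gfun
    rw [if_pos hbE, if_neg (show repFn A B |b| ≠ b by omega)]
    exact (repFn_of_D2 hA' (hΦ2 _ h)).2
  · have hrB : repFn A B |b| ∈ B := repFn_mem_B_of_D4 (abs_nonneg b) h
    have hrb : repFn A B |b| = b := absInjOn hB hrB hb (abs_repFn_abs A B b)
    have h4' := hΦ4 _ h
    have h0 : 0 ≤ Φ |b| := by
      obtain ⟨x, _, hx⟩ := Finset.mem_image.1 (D4_subset_pB A' B' h4')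
      exact hx ▸ abs_nonneg x
    unfold Gfun
    rw [if_pos hbE, if_pos hrb]
    exact repFn_mem_B_of_D4 h0 h4'


lemma notD1_of_D3 {A B : Finset ℤ} {n : ℤ} (h : n ∈ D3 A B) : n ∉ D1 A B :=
  fun hc => D3_not_pB h (D1_subset_pB A B hc)
lemma notD2_of_D3 {A B : Finset ℤ} {n : ℤ} (h : n ∈ D3 A B) : n ∉ D2 A B :=
  fun hc => D3_not_pB h (D2_subset_pB A B hc)
lemma notD1_of_D4 {A B : Finset ℤ} {n : ℤ} (h : n ∈ D4 A B) : n ∉ D1 A B :=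
  fun hc => D4_not_pA h (D1_subset_pA A B hc)
lemma notD2_of_D4 {A B : Finset ℤ} {n : ℤ} (h : n ∈ D4 A B) : n ∉ D2 A B :=
  fun hc => D4_not_pA h (D2_subset_pA A B hc)
lemma notD3_of_D4 {A B : Finset ℤ} {n : ℤ} (h : n ∈ D4 A B) : n ∉ D3 A B :=
  fun hc => D4_not_pA h (D3_subset_pA A B hc)
lemma notD1_of_D5 {d : ℕ} {A B : Finset ℤ} {n : ℤ} (h : n ∈ D5 d A B) : n ∉ D1 A B :=
  fun hc => D5_not_pA h (D1_subset_pA A B hc)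
lemma notD2_of_D5 {d : ℕ} {A B : Finset ℤ} {n : ℤ} (h : n ∈ D5 d A B) : n ∉ D2 A B :=
  fun hc => D5_not_pA h (D2_subset_pA A B hc)
lemma notD3_of_D5 {d : ℕ} {A B : Finset ℤ} {n : ℤ} (h : n ∈ D5 d A B) : n ∉ D3 A B :=
  fun hc => D5_not_pA h (D3_subset_pA A B hc)
lemma notD4_of_D5 {d : ℕ} {A B : Finset ℤ} {n : ℤ} (h : n ∈ D5 d A B) : n ∉ D4 A B :=
  fun hc => D5_not_pB h (D4_subset_pB A B hc)

lemma exists_g {d k : ℕ} {A B A' B' : Finset ℤ}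
    (hA : RhatP d k A) (hB : RhatP d k B) (hA' : RhatP d k A') (hB' : RhatP d k B')
    (h1 : (A ∩ B).card = (A' ∩ B').card)
    (h2 : (A.image (fun x : ℤ => |x|) ∩ B.image (fun x : ℤ => |x|)).card
        = (A'.image (fun x : ℤ => |x|) ∩ B'.image (fun x : ℤ => |x|)).card) :
    ∃ g : Equiv.Perm ℤ, (∀ e : ℤ, e ∈ Eset d ↔ g e ∈ Eset d) ∧
      (∀ e ∈ Eset d, g (-e) = -(g e)) ∧ A' = A.image g ∧ B' = B.image g := by
  classical
  obtain ⟨c1, c2, c3, c4, c5, c6⟩ := card_facts hA hB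
  obtain ⟨c1', c2', c3', c4', c5', c6'⟩ := card_facts hA' hB'
  obtain ⟨f₁, g₁, hf₁, hg₁, hgf₁, hfg₁⟩ :=
    exists_bijOn_pair (s := D1 A B) (t := D1 A' B') (by omega)
  obtain ⟨f₂, g₂, hf₂, hg₂, hgf₂, hfg₂⟩ :=
    exists_bijOn_pair (s := D2 A B) (t := D2 A' B') (by omega)
  obtain ⟨f₃, g₃, hf₃, hg₃, hgf₃, hfg₃⟩ :=
    exists_bijOn_pair (s := D3 A B) (t := D3 A' B') (by omega)
  obtain ⟨f₄, g₄, hf₄, hg₄, hgf₄, hfg₄⟩ :=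
    exists_bijOn_pair (s := D4 A B) (t := D4 A' B') (by omega)
  obtain ⟨f₅, g₅, hf₅, hg₅, hgf₅, hfg₅⟩ :=
    exists_bijOn_pair (s := D5 d A B) (t := D5 d A' B') (by omega)
  set Φ : ℤ → ℤ := fun n =>
    if n ∈ D1 A B then f₁ n else if n ∈ D2 A B then f₂ n else if n ∈ D3 A B then f₃ n
    else if n ∈ D4 A B then f₄ n else if n ∈ D5 d A B then f₅ n else n with hPhidef
  set Ψ : ℤ → ℤ := fun m =>
    if m ∈ D1 A' B' then g₁ m else if m ∈ D2 A' B' then g₂ m else if m ∈ D3 A' B' then g₃ m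
    else if m ∈ D4 A' B' then g₄ m else if m ∈ D5 d A' B' then g₅ m else m with hPsidef
  have hPe1 : ∀ n ∈ D1 A B, Φ n = f₁ n := by
    intro n h; simp only [hPhidef]; rw [if_pos h]
  have hPe2 : ∀ n ∈ D2 A B, Φ n = f₂ n := by
    intro n h; simp only [hPhidef]; rw [if_neg (not_mem_D1_of_D2 h), if_pos h]
  have hPe3 : ∀ n ∈ D3 A B, Φ n = f₃ n := by
    intro n h; simp only [hPhidef]
    rw [if_neg (notD1_of_D3 h), if_neg (notD2_of_D3 h), if_pos h]
  have hPe4 : ∀ n ∈ D4 A B, Φ n = f₄ n := by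
    intro n h; simp only [hPhidef]
    rw [if_neg (notD1_of_D4 h), if_neg (notD2_of_D4 h), if_neg (notD3_of_D4 h), if_pos h]
  have hPe5 : ∀ n ∈ D5 d A B, Φ n = f₅ n := by
    intro n h; simp only [hPhidef]
    rw [if_neg (notD1_of_D5 h), if_neg (notD2_of_D5 h), if_neg (notD3_of_D5 h),
      if_neg (notD4_of_D5 h), if_pos h]
  have hPe0 : ∀ n, n ∉ Pset d → Φ n = n := by
    intro n h; simp only [hPhidef]
    rw [if_neg (fun hc => h (D1_subset_Pset hA hB hc)),
      if_neg (fun hc => h (D2_subset_Pset hA hB hc)),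
      if_neg (fun hc => h (D3_subset_Pset hA hB hc)),
      if_neg (fun hc => h (D4_subset_Pset hA hB hc)),
      if_neg (fun hc => h (D5_subset_Pset hc))]
  have hQe1 : ∀ m ∈ D1 A' B', Ψ m = g₁ m := by
    intro m h; simp only [hPsidef]; rw [if_pos h]
  have hQe2 : ∀ m ∈ D2 A' B', Ψ m = g₂ m := by
    intro m h; simp only [hPsidef]; rw [if_neg (not_mem_D1_of_D2 h), if_pos h]
  have hQe3 : ∀ m ∈ D3 A' B', Ψ m = g₃ m := by
    intro m h; simp only [hPsidef]
    rw [if_neg (notD1_of_D3 h), if_neg (notD2_of_D3 h), if_pos h]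
  have hQe4 : ∀ m ∈ D4 A' B', Ψ m = g₄ m := by
    intro m h; simp only [hPsidef]
    rw [if_neg (notD1_of_D4 h), if_neg (notD2_of_D4 h), if_neg (notD3_of_D4 h), if_pos h]
  have hQe5 : ∀ m ∈ D5 d A' B', Ψ m = g₅ m := by
    intro m h; simp only [hPsidef]
    rw [if_neg (notD1_of_D5 h), if_neg (notD2_of_D5 h), if_neg (notD3_of_D5 h),
      if_neg (notD4_of_D5 h), if_pos h]
  have hQe0 : ∀ m, m ∉ Pset d → Ψ m = m := by
    intro m h; simp only [hPsidef]
    rw [if_neg (fun hc => h (D1_subset_Pset hA' hB' hc)),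
      if_neg (fun hc => h (D2_subset_Pset hA' hB' hc)),
      if_neg (fun hc => h (D3_subset_Pset hA' hB' hc)),
      if_neg (fun hc => h (D4_subset_Pset hA' hB' hc)),
      if_neg (fun hc => h (D5_subset_Pset hc))]
  have hPm1 : ∀ n ∈ D1 A B, Φ n ∈ D1 A' B' := fun n h => (hPe1 n h) ▸ hf₁ n h
  have hPm2 : ∀ n ∈ D2 A B, Φ n ∈ D2 A' B' := fun n h => (hPe2 n h) ▸ hf₂ n h
  have hPm3 : ∀ n ∈ D3 A B, Φ n ∈ D3 A' B' := fun n h => (hPe3 n h) ▸ hf₃ n h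
  have hPm4 : ∀ n ∈ D4 A B, Φ n ∈ D4 A' B' := fun n h => (hPe4 n h) ▸ hf₄ n h
  have hPm5 : ∀ n ∈ D5 d A B, Φ n ∈ D5 d A' B' := fun n h => (hPe5 n h) ▸ hf₅ n h
  have hQm1 : ∀ m ∈ D1 A' B', Ψ m ∈ D1 A B := fun m h => (hQe1 m h) ▸ hg₁ m h
  have hQm2 : ∀ m ∈ D2 A' B', Ψ m ∈ D2 A B := fun m h => (hQe2 m h) ▸ hg₂ m h
  have hQm3 : ∀ m ∈ D3 A' B', Ψ m ∈ D3 A B := fun m h => (hQe3 m h) ▸ hg₃ m h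
  have hQm4 : ∀ m ∈ D4 A' B', Ψ m ∈ D4 A B := fun m h => (hQe4 m h) ▸ hg₄ m h
  have hQm5 : ∀ m ∈ D5 d A' B', Ψ m ∈ D5 d A B := fun m h => (hQe5 m h) ▸ hg₅ m h
  have hPP : ∀ n ∈ Pset d, Φ n ∈ Pset d := by
    intro n hn
    rcases classify hA hB hn with h | h | h | h | h
    · exact D1_subset_Pset hA' hB' (hPm1 n h)
    · exact D2_subset_Pset hA' hB' (hPm2 n h)
    · exact D3_subset_Pset hA' hB' (hPm3 n h)
    · exact D4_subset_Pset hA' hB' (hPm4 n h)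
    · exact D5_subset_Pset (hPm5 n h)
  have hQP : ∀ m ∈ Pset d, Ψ m ∈ Pset d := by
    intro m hm
    rcases classify hA' hB' hm with h | h | h | h | h
    · exact D1_subset_Pset hA hB (hQm1 m h)
    · exact D2_subset_Pset hA hB (hQm2 m h)
    · exact D3_subset_Pset hA hB (hQm3 m h)
    · exact D4_subset_Pset hA hB (hQm4 m h)
    · exact D5_subset_Pset (hQm5 m h)
  have hQPhi : ∀ n ∈ Pset d, Ψ (Φ n) = n := by
    intro n hn
    rcases classify hA hB hn with h | h | h | h | h
    · rw [hPe1 n h, hQe1 _ (hf₁ n h)]; exact hgf₁ n h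
    · rw [hPe2 n h, hQe2 _ (hf₂ n h)]; exact hgf₂ n h
    · rw [hPe3 n h, hQe3 _ (hf₃ n h)]; exact hgf₃ n h
    · rw [hPe4 n h, hQe4 _ (hf₄ n h)]; exact hgf₄ n h
    · rw [hPe5 n h, hQe5 _ (hf₅ n h)]; exact hgf₅ n h
  have hPPsi : ∀ m ∈ Pset d, Φ (Ψ m) = m := by
    intro m hm
    rcases classify hA' hB' hm with h | h | h | h | h
    · rw [hQe1 m h, hPe1 _ (hg₁ m h)]; exact hfg₁ m h
    · rw [hQe2 m h, hPe2 _ (hg₂ m h)]; exact hfg₂ m h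
    · rw [hQe3 m h, hPe3 _ (hg₃ m h)]; exact hfg₃ m h
    · rw [hQe4 m h, hPe4 _ (hg₄ m h)]; exact hfg₄ m h
    · rw [hQe5 m h, hPe5 _ (hg₅ m h)]; exact hfg₅ m h
  have linv : Function.LeftInverse (Gfun d A' B' A B Ψ) (Gfun d A B A' B' Φ) :=
    fun e => Gfun_leftInv d A B A' B' Φ Ψ hPP hQPhi e
  have rinv : Function.RightInverse (Gfun d A' B' A B Ψ) (Gfun d A B A' B' Φ) :=
    fun m => Gfun_leftInv d A' B' A B Ψ Φ hQP hPPsi m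
  refine ⟨⟨Gfun d A B A' B' Φ, Gfun d A' B' A B Ψ, linv, rinv⟩,
    fun e => Gfun_mem_Eset d A B A' B' Φ hPP e,
    fun e he => Gfun_neg d A B A' B' Φ e he, ?_, ?_⟩
  · have hΦpA : ∀ n ∈ A.image (fun x : ℤ => |x|), Φ n ∈ A'.image (fun x : ℤ => |x|) := by
      intro n h
      rcases pA_cases (B := B) h with h | h | h
      · exact D1_subset_pA _ _ (hPm1 n h)
      · exact D2_subset_pA _ _ (hPm2 n h)
      · exact D3_subset_pA _ _ (hPm3 n h)
    have hsub : A.image (Gfun d A B A' B' Φ) ⊆ A' := by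
      intro x hx
      obtain ⟨a, ha, rfl⟩ := Finset.mem_image.1 hx
      exact Gfun_maps_A hA Φ hΦpA a ha
    have hinj : Function.Injective (Gfun d A B A' B' Φ) := linv.injective
    have hcard : A'.card ≤ (A.image (Gfun d A B A' B' Φ)).card := by
      rw [Finset.card_image_of_injective _ hinj, hA.2.1, hA'.2.1]
    exact (Finset.eq_of_subset_of_card_le hsub hcard).symm
  · have hsub : B.image (Gfun d A B A' B' Φ) ⊆ B' := by
      intro x hx
      obtain ⟨b, hb, rfl⟩ := Finset.mem_image.1 hx
      exact Gfun_maps_B hA hB hA' hB' Φ hPm1 hPm2 hPm4 b hb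
    have hinj : Function.Injective (Gfun d A B A' B' Φ) := linv.injective
    have hcard : B'.card ≤ (B.image (Gfun d A B A' B' Φ)).card := by
      rw [Finset.card_image_of_injective _ hinj, hB.2.1, hB'.2.1]
    exact (Finset.eq_of_subset_of_card_le hsub hcard).symm


lemma Pset_mem_Eset {d : ℕ} {n : ℤ} (h : n ∈ Pset d) : n ∈ Eset d :=
  mem_Eset_iff_abs.2 (by rwa [abs_of_pos (mem_Pset.1 h).1])

lemma invariants_of_g {d k : ℕ} {A B A' B' : Finset ℤ}
    (hA : RhatP d k A) (hB : RhatP d k B) (g : Equiv.Perm ℤ)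
    (hgE : ∀ e : ℤ, e ∈ Eset d ↔ g e ∈ Eset d)
    (hgneg : ∀ e ∈ Eset d, g (-e) = -(g e))
    (hA' : A' = A.image g) (hB' : B' = B.image g) :
    (A ∩ B).card = (A' ∩ B').card ∧
    (A.image (fun x : ℤ => |x|) ∩ B.image (fun x : ℤ => |x|)).card =
      (A'.image (fun x : ℤ => |x|) ∩ B'.image (fun x : ℤ => |x|)).card := by
  subst hA' hB'
  have hinj : Function.Injective (g : ℤ → ℤ) := g.injective
  constructor
  · rw [← Finset.image_inter _ _ hinj, Finset.card_image_of_injective _ hinj]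
  · have step1 : ∀ e ∈ Eset d, |g e| = abs (g |e|) := by
      intro e he
      rcases abs_choice e with h | h
      · rw [h]
      · rw [h, hgneg e he, abs_neg]
    have step2 : (A.image g).image (fun x : ℤ => |x|)
        = (A.image (fun x : ℤ => |x|)).image (fun n => |g n|) := by
      rw [Finset.image_image, Finset.image_image]
      apply Finset.image_congr
      intro a ha
      exact step1 a (hA.1 ha)
    have step2' : (B.image g).image (fun x : ℤ => |x|)
        = (B.image (fun x : ℤ => |x|)).image (fun n => |g n|) := by
      rw [Finset.image_image, Finset.image_image]
      apply Finset.image_congr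
      intro b hb
      exact step1 b (hB.1 hb)
    have hφinj : Set.InjOn (fun n => |g n|)
        (↑(A.image (fun x : ℤ => |x|)) ∪ ↑(B.image (fun x : ℤ => |x|))) := by
      intro n hn m hm hnm
      have hn' : n ∈ A.image (fun x : ℤ => |x|) ∪ B.image (fun x : ℤ => |x|) := by
        rw [Finset.mem_union]; simpa using hn
      have hm' : m ∈ A.image (fun x : ℤ => |x|) ∪ B.image (fun x : ℤ => |x|) := by
        rw [Finset.mem_union]; simpa using hm
      have hnP : n ∈ Pset d := by
        rcases Finset.mem_union.1 hn' with h | h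
        exacts [pA_subset hA h, pA_subset hB h]
      have hmP : m ∈ Pset d := by
        rcases Finset.mem_union.1 hm' with h | h
        exacts [pA_subset hA h, pA_subset hB h]
      simp only at hnm
      rcases abs_eq_abs.1 hnm with h | h
      · exact hinj h
      · exfalso
        rw [← hgneg m (Pset_mem_Eset hmP)] at h
        have hneg := hinj h
        have h1 := (mem_Pset.1 hnP).1
        have h2 := (mem_Pset.1 hmP).1
        omega
    rw [step2, step2', ← Finset.image_inter_of_injOn _ _ hφinj,
      Finset.card_image_of_injOn (hφinj.mono (by
        exact_mod_cast Finset.coe_subset.2 (Finset.inter_subset_union)))]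

/-! ### realization -/

lemma image_abs_Icc (a b : ℤ) (ha : 1 ≤ a) :
    (Finset.Icc a b).image (fun x : ℤ => |x|) = Finset.Icc a b := by
  ext n
  simp only [Finset.mem_image, Finset.mem_Icc]
  constructor
  · rintro ⟨x, ⟨h1, h2⟩, rfl⟩
    rw [abs_of_pos (by omega)]
    exact ⟨h1, h2⟩
  · rintro ⟨h1, h2⟩
    exact ⟨n, ⟨h1, h2⟩, abs_of_pos (by omega)⟩

lemma image_abs_negIcc (a b : ℤ) (ha : 1 ≤ a) :
    (Finset.Icc (-b) (-a)).image (fun x : ℤ => |x|) = Finset.Icc a b := by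
  ext n
  simp only [Finset.mem_image, Finset.mem_Icc]
  constructor
  · rintro ⟨x, ⟨h1, h2⟩, rfl⟩
    rw [abs_of_neg (by omega)]
    omega
  · rintro ⟨h1, h2⟩
    exact ⟨-n, ⟨by omega, by omega⟩, by rw [abs_neg, abs_of_pos (by omega)]⟩

lemma realize (d k l₁ l₂ : ℕ) (hk : 1 ≤ k) (hkd : k ≤ d) (h12 : l₁ ≤ l₂) (h2k : l₂ ≤ k)
    (h2kd : 2 * k ≤ l₂ + d) :
    ∃ A B : Finset ℤ, RhatP d k A ∧ RhatP d k B ∧ (A ∩ B).card = l₁ ∧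
      (A.image (fun x : ℤ => |x|) ∩ B.image (fun x : ℤ => |x|)).card = l₂ := by
  have memE : ∀ x : ℤ, x ∈ Eset d ↔ (-(d:ℤ) ≤ x ∧ x ≤ d) ∧ x ≠ 0 := by
    intro x; simp [Eset, Finset.mem_filter, Finset.mem_Icc]
  set B1 : Finset ℤ := Finset.Icc (-(l₂:ℤ)) (-((l₁:ℤ)+1)) with hB1
  set B2 : Finset ℤ := Finset.Icc 1 (l₁:ℤ) with hB2
  set B3 : Finset ℤ := Finset.Icc ((k:ℤ)+1) (2*(k:ℤ)-(l₂:ℤ)) with hB3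
  refine ⟨Finset.Icc 1 (k:ℤ), B1 ∪ B2 ∪ B3, ⟨?_, ?_, ?_⟩, ⟨?_, ?_, ?_⟩, ?_, ?_⟩
  · intro x hx
    rw [memE]
    rw [Finset.mem_Icc] at hx
    omega
  · rw [Int.card_Icc]; omega
  · intro a ha
    rw [Finset.mem_Icc] at ha ⊢
    omega
  · intro x hx
    rw [memE]
    simp only [hB1, hB2, hB3, Finset.mem_union, Finset.mem_Icc] at hx
    omega
  · rw [Finset.card_union_of_disjoint (by
        rw [Finset.disjoint_left]
        intro a h1 h2
        simp only [hB1, hB2, hB3, Finset.mem_union, Finset.mem_Icc] at h1 h2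
        omega),
      Finset.card_union_of_disjoint (by
        rw [Finset.disjoint_left]
        intro a h1 h2
        simp only [hB1, hB2, Finset.mem_Icc] at h1 h2
        omega)]
    simp only [hB1, hB2, hB3]
    rw [Int.card_Icc, Int.card_Icc, Int.card_Icc]
    omega
  · intro a ha
    simp only [hB1, hB2, hB3, Finset.mem_union, Finset.mem_Icc] at ha ⊢
    omega
  · have hint : Finset.Icc 1 (k:ℤ) ∩ (B1 ∪ B2 ∪ B3) = Finset.Icc 1 (l₁:ℤ) := by
      ext x
      simp only [hB1, hB2, hB3, Finset.mem_inter, Finset.mem_union, Finset.mem_Icc]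
      omega
    rw [hint, Int.card_Icc]
    omega
  · rw [Finset.image_union, Finset.image_union]
    simp only [hB1, hB2, hB3]
    rw [image_abs_Icc 1 (k:ℤ) le_rfl,
      image_abs_negIcc ((l₁:ℤ)+1) (l₂:ℤ) (by omega),
      image_abs_Icc 1 (l₁:ℤ) le_rfl,
      image_abs_Icc ((k:ℤ)+1) (2*(k:ℤ)-(l₂:ℤ)) (by omega)]
    have hint : Finset.Icc 1 (k:ℤ) ∩
        (Finset.Icc ((l₁:ℤ)+1) (l₂:ℤ) ∪ Finset.Icc 1 (l₁:ℤ)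
          ∪ Finset.Icc ((k:ℤ)+1) (2*(k:ℤ)-(l₂:ℤ))) = Finset.Icc 1 (l₂:ℤ) := by
      ext x
      simp only [Finset.mem_inter, Finset.mem_union, Finset.mem_Icc]
      omega
    rw [hint, Int.card_Icc]
    omega

end Stmt12

/-- Two pairs `(A, B)`, `(A′, B′)` in `R̂_k × R̂_k` are in the same orbit of
the group of bijections of `E` commuting with negation (acting diagonally) iff
`#(A ∩ B) = #(A′ ∩ B′)` and `#(p(A) ∩ p(B)) = #(p(A′) ∩ p(B′))`; and the realized pairs
`(ℓ̃, ℓ)` of such cardinalities are exactly those with `0 ≤ ℓ̃ ≤ ℓ ≤ k` and `ℓ ≥ 2k − d`. -/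
theorem stmt_12 (d k : ℕ) (hd : 1 ≤ d) (hk : 1 ≤ k) (hkd : k ≤ d) :
    (∀ A B A' B' : Finset ℤ, RhatP d k A → RhatP d k B → RhatP d k A' → RhatP d k B' →
      ((∃ g : Equiv.Perm ℤ,
          (∀ e : ℤ, e ∈ Eset d ↔ g e ∈ Eset d) ∧
          (∀ e ∈ Eset d, g (-e) = -(g e)) ∧
          A' = A.image g ∧ B' = B.image g) ↔
        ((A ∩ B).card = (A' ∩ B').card ∧
          (A.image (fun x => |x|) ∩ B.image (fun x => |x|)).card =
            (A'.image (fun x => |x|) ∩ B'.image (fun x => |x|)).card))) ∧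
    (∀ l₁ l₂ : ℕ,
      (∃ A B : Finset ℤ, RhatP d k A ∧ RhatP d k B ∧ (A ∩ B).card = l₁ ∧
          (A.image (fun x => |x|) ∩ B.image (fun x => |x|)).card = l₂) ↔
        (l₁ ≤ l₂ ∧ l₂ ≤ k ∧ 2 * k ≤ l₂ + d)) := by
  constructor
  · intro A B A' B' hA hB hA' hB'
    constructor
    · rintro ⟨g, hgE, hgneg, hA'', hB''⟩
      exact Stmt12.invariants_of_g hA hB g hgE hgneg hA'' hB''
    · rintro ⟨h1, h2⟩
      exact Stmt12.exists_g hA hB hA' hB' h1 h2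
  · intro l₁ l₂
    constructor
    · rintro ⟨A, B, hA, hB, rfl, rfl⟩
      obtain ⟨c1, c2, c3, c4, c5, c6⟩ := Stmt12.card_facts hA hB
      omega
    · rintro ⟨h12, h2k, h2kd⟩
      exact Stmt12.realize d k l₁ l₂ hk hkd h12 h2k h2kd
end

section
/- Fix integers d ≥ 1 and 1 ≤ k ≤ d. Let V be a real vector space of dimension 2d with basis (v_e)_{e ∈ E} indexed by E = {±1, …, ±d}, and let ω be a symplectic (nondegenerate alternating bilinear) form on V such that ω(v_i, v_{−i}) ≠ 0 for each i ∈ {1, …, d} and ω(v_e, v_f) = 0 whenever f ≠ −e. Let C : V → V be a linear map preserving ω, i.e., ω(Cx, Cy) = ω(x, y) for all x, y ∈ V. Then for every A ∈ R̂_k there exists B ∈ R̂_k such that the k×k matrix (c_{b,a})_{b ∈ B, a ∈ A} is invertible, where the coefficients c_{e,a} are defined by C(v_a) = Σ_{e ∈ E} c_{e,a} v_e. -/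
open Finset Submodule Module Matrix

set_option linter.unusedSectionVars false

section aux

variable {ι : Type*} [Fintype ι] [DecidableEq ι]
variable {α : Type*} [Fintype α] [DecidableEq α]

lemma aux_inj_iff (M : α → ι → ℝ) (hM : LinearIndependent ℝ M) (B : Finset ι) :
    (∀ x ∈ Submodule.span ℝ (Set.range M), (∀ b ∈ B, x b = 0) → x = 0) ↔
      LinearIndependent ℝ (fun a => fun b : ↥B => M a b) := by
  constructor
  · intro h
    rw [Fintype.linearIndependent_iff]
    intro g hg
    have hxW : (∑ a, g a • M a) ∈ Submodule.span ℝ (Set.range M) :=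
      sum_mem fun a _ => smul_mem _ _ (subset_span (Set.mem_range_self a))
    have hx : (∑ a, g a • M a) = 0 := by
      refine h _ hxW fun b hb => ?_
      have := congrFun hg (⟨b, hb⟩ : ↥B)
      simpa [Finset.sum_apply] using this
    exact Fintype.linearIndependent_iff.mp hM g hx
  · intro h x hx hxB
    obtain ⟨cf, rfl⟩ := (mem_span_range_iff_exists_fun ℝ).mp hx
    have hz : ∀ a, cf a = 0 := by
      apply Fintype.linearIndependent_iff.mp h
      funext b
      have := hxB (b : ι) b.2
      simpa [Finset.sum_apply] using this
    simp [hz]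

lemma aux_exchange (neg : ι → ι) (hneg : ∀ e, neg (neg e) = e) (hne : ∀ e, neg e ≠ e)
    (c : ι → ℝ) (hc : ∀ e, c e ≠ 0)
    (M : α → ι → ℝ) (hM : LinearIndependent ℝ M)
    (hiso : ∀ x ∈ Submodule.span ℝ (Set.range M), ∀ y ∈ Submodule.span ℝ (Set.range M),
      ∑ e, x e * (y (neg e) * c e) = 0)
    (B : Finset ι) (hcard : B.card = Fintype.card α)
    (hgood : ∀ x ∈ Submodule.span ℝ (Set.range M), (∀ b ∈ B, x b = 0) → x = 0)
    {i : ι} (hi : i ∈ B) (hni : neg i ∈ B) :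
    ∃ B' : Finset ι, B'.card = Fintype.card α ∧
      (∀ x ∈ Submodule.span ℝ (Set.range M), (∀ b ∈ B', x b = 0) → x = 0) ∧
      (B'.filter (fun x => neg x ∈ B')).card < (B.filter (fun x => neg x ∈ B)).card := by
  have hα : Nonempty α := by
    have h0 : 0 < Fintype.card α := by
      rw [← hcard]; exact Finset.card_pos.mpr ⟨i, hi⟩
    exact Fintype.card_pos_iff.mp h0
  have hind := (aux_inj_iff M hM B).mp hgood
  have hfr : Fintype.card α = finrank ℝ (↥B → ℝ) := by
    rw [Module.finrank_pi, Fintype.card_coe, hcard]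
  let β : Basis α ℝ (↥B → ℝ) := basisOfLinearIndependentOfCardEqFinrank hind hfr
  have hβ : ∀ a, β a = fun b : ↥B => M a b :=
    fun a => congrFun (coe_basisOfLinearIndependentOfCardEqFinrank hind hfr) a
  -- for each target δ, a vector in the span restricting to δ on B
  have hvec : ∀ δ : ↥B → ℝ,
      (∑ a, β.repr δ a • M a) ∈ Submodule.span ℝ (Set.range M) ∧
      ∀ b (hb : b ∈ B), (∑ a, β.repr δ a • M a) b = δ ⟨b, hb⟩ := by
    intro δ
    constructor
    · exact sum_mem fun a _ => smul_mem _ _ (subset_span (Set.mem_range_self a))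
    · intro b hb
      have h1 : (∑ a, β.repr δ a • β a) = δ := β.sum_repr δ
      have h2 : (∑ a, β.repr δ a • (fun bb : ↥B => M a bb)) = δ := by
        simpa only [hβ] using h1
      have := congrFun h2 ⟨b, hb⟩
      simpa [Finset.sum_apply] using this
  set δi : ↥B → ℝ := Pi.single (⟨i, hi⟩ : ↥B) 1 with hδi
  set δn : ↥B → ℝ := Pi.single (⟨neg i, hni⟩ : ↥B) 1 with hδn
  set u : ι → ℝ := ∑ a, β.repr δi a • M a with hu
  set w : ι → ℝ := ∑ a, β.repr δn a • M a with hw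
  obtain ⟨huW, huB⟩ := hvec δi
  obtain ⟨hwW, hwB⟩ := hvec δn
  have hui : u i = 1 := by rw [hu, huB i hi, hδi, Pi.single_eq_same]
  have hub : ∀ b ∈ B, b ≠ i → u b = 0 := by
    intro b hb hbne
    rw [hu, huB b hb, hδi, Pi.single_eq_of_ne (fun h => hbne (congrArg Subtype.val h))]
  have hwni : w (neg i) = 1 := by rw [hw, hwB _ hni, hδn, Pi.single_eq_same]
  have hwb : ∀ b ∈ B, b ≠ neg i → w b = 0 := by
    intro b hb hbne
    rw [hw, hwB b hb, hδn, Pi.single_eq_of_ne (fun h => hbne (congrArg Subtype.val h))]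
  have hsum : ∑ e, u e * (w (neg e) * c e) = 0 := by rw [hu, hw]; exact hiso _ huW _ hwW
  -- find an exchange coordinate
  have hex : ∃ e, e ≠ i ∧ u e * (w (neg e) * c e) ≠ 0 := by
    by_contra hcon
    push_neg at hcon
    have : ∑ e, u e * (w (neg e) * c e) = u i * (w (neg i) * c i) :=
      Finset.sum_eq_single_of_mem i (Finset.mem_univ i)
        (fun e _ he => hcon e he)
    rw [hsum, hui, hwni] at this
    simp at this
    exact hc i this.symm
  obtain ⟨e, hei, hterm⟩ := hex
  have hue : u e ≠ 0 := fun h => hterm (by rw [h, zero_mul])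
  have hwne : w (neg e) ≠ 0 := by
    intro h; exact hterm (by rw [h, zero_mul, mul_zero])
  have heB : e ∉ B := fun h => hue (hub e h hei)
  have hneB : neg e ∉ B := by
    intro h
    refine hwne (hwb _ h fun hcon => ?_)
    exact hei (by rw [← hneg e, hcon, hneg])
  refine ⟨insert e (B.erase i), ?_, ?_, ?_⟩
  · rw [Finset.card_insert_of_notMem (fun h => heB (Finset.mem_of_mem_erase h)),
      Finset.card_erase_of_mem hi, hcard]
    have : 0 < Fintype.card α := Fintype.card_pos
    omega
  · intro x hx hxB'
    have hyW : x - x i • u ∈ Submodule.span ℝ (Set.range M) :=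
      sub_mem hx (smul_mem _ _ huW)
    have hy0 : x - x i • u = 0 := by
      refine hgood _ hyW fun b hb => ?_
      by_cases hbi : b = i
      · subst hbi
        simp [hui]
      · have hxb : x b = 0 :=
          hxB' b (Finset.mem_insert_of_mem (Finset.mem_erase.mpr ⟨hbi, hb⟩))
        simp [hxb, hub b hb hbi]
    have hxu : x = x i • u := by rwa [sub_eq_zero] at hy0
    have hxe : x e = 0 := hxB' e (Finset.mem_insert_self _ _)
    have hxi0 : x i = 0 := by
      have := congrFun hxu e
      rw [hxe] at this
      rcases mul_eq_zero.mp this.symm with h | h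
      · exact h
      · exact absurd h hue
    rw [hxu, hxi0, zero_smul]
  · apply Finset.card_lt_card
    constructor
    · intro x hx
      rw [Finset.mem_filter] at hx ⊢
      obtain ⟨hx1, hx2⟩ := hx
      have hxe : x ≠ e := by
        intro h
        rw [h] at hx2
        rcases Finset.mem_insert.mp hx2 with h2 | h2
        · exact hne e h2
        · exact hneB (Finset.mem_of_mem_erase h2)
      have hxB : x ∈ B.erase i := by
        rcases Finset.mem_insert.mp hx1 with h | h
        · exact absurd h hxe
        · exact h
      have hnxe : neg x ≠ e := by
        intro h
        have : x = neg e := by rw [← hneg x, h]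
        exact hneB (by rw [← this]; exact Finset.mem_of_mem_erase hxB)
      have hnxB : neg x ∈ B := by
        rcases Finset.mem_insert.mp hx2 with h | h
        · exact absurd h hnxe
        · exact Finset.mem_of_mem_erase h
      exact ⟨Finset.mem_of_mem_erase hxB, hnxB⟩
    · intro hsub
      have hiS : i ∈ B.filter (fun x => neg x ∈ B) := Finset.mem_filter.mpr ⟨hi, hni⟩
      have := hsub hiS
      rw [Finset.mem_filter, Finset.mem_insert] at this
      obtain ⟨h1, _⟩ := this
      rcases h1 with h | h
      · subst h; exact heB hi
      · exact (Finset.mem_erase.mp h).1 rfl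


lemma aux_descent (neg : ι → ι) (hneg : ∀ e, neg (neg e) = e) (hne : ∀ e, neg e ≠ e)
    (c : ι → ℝ) (hc : ∀ e, c e ≠ 0)
    (M : α → ι → ℝ) (hM : LinearIndependent ℝ M)
    (hiso : ∀ x ∈ Submodule.span ℝ (Set.range M), ∀ y ∈ Submodule.span ℝ (Set.range M),
      ∑ e, x e * (y (neg e) * c e) = 0) :
    ∀ n (B : Finset ι), B.card = Fintype.card α →
      (∀ x ∈ Submodule.span ℝ (Set.range M), (∀ b ∈ B, x b = 0) → x = 0) →
      (B.filter (fun x => neg x ∈ B)).card ≤ n →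
      ∃ B' : Finset ι, B'.card = Fintype.card α ∧ (∀ b ∈ B', neg b ∉ B') ∧
        (∀ x ∈ Submodule.span ℝ (Set.range M), (∀ b ∈ B', x b = 0) → x = 0) := by
  intro n
  induction n with
  | zero =>
    intro B hcard hgood hp
    refine ⟨B, hcard, ?_, hgood⟩
    intro b hb hnb
    have : b ∈ B.filter (fun x => neg x ∈ B) := Finset.mem_filter.mpr ⟨hb, hnb⟩
    have h0 : (B.filter (fun x => neg x ∈ B)).card = 0 := Nat.le_zero.mp hp
    rw [Finset.card_eq_zero] at h0
    rw [h0] at this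
    exact absurd this (Finset.notMem_empty b)
  | succ n ih =>
    intro B hcard hgood hp
    by_cases hpair : ∃ i ∈ B, neg i ∈ B
    · obtain ⟨i, hi, hni⟩ := hpair
      obtain ⟨B', hc', hg', hlt'⟩ :=
        aux_exchange neg hneg hne c hc M hM hiso B hcard hgood hi hni
      exact ih B' hc' hg' (by omega)
    · push_neg at hpair
      exact ⟨B, hcard, hpair, hgood⟩

lemma aux_initial (M : α → ι → ℝ) (hM : LinearIndependent ℝ M) :
    ∃ B : Finset ι, B.card = Fintype.card α ∧
      (∀ x ∈ Submodule.span ℝ (Set.range M), (∀ b ∈ B, x b = 0) → x = 0) := by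
  classical
  set col : ι → (α → ℝ) := fun e a => M a e with hcol
  have hspan : Submodule.span ℝ (Set.range col) = ⊤ := by
    have h1 : (Matrix.of M).rank = Fintype.card α := hM.rank_matrix
    have h2 : ((Matrix.of M)ᵀ).rank = Fintype.card α := by
      rw [Matrix.rank_transpose]; exact h1
    have hr : Set.range ((Matrix.of M)ᵀ) = Set.range col := rfl
    have h3 : finrank ℝ (Submodule.span ℝ (Set.range col)) = Fintype.card α := by
      rw [Matrix.rank_eq_finrank_span_row] at h2; exact h2
    apply Submodule.eq_top_of_finrank_eq
    rw [h3, Module.finrank_pi]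
  obtain ⟨t, hts, htspan, htind⟩ := exists_linearIndependent ℝ (Set.range col)
  have htfin : t.Finite := htind.setFinite
  haveI := htfin.fintype
  have hcardt : t.toFinset.card = Fintype.card α := by
    have h1 := finrank_span_set_eq_card htind
    rw [htspan, hspan, finrank_top, Module.finrank_pi] at h1
    exact h1.symm
  choose f hf using fun x : t => hts x.2
  have hfinj : Function.Injective f := by
    intro x y hxy
    apply Subtype.ext
    rw [← hf x, ← hf y, hxy]
  refine ⟨Finset.univ.image f, ?_, ?_⟩
  · rw [Finset.card_image_of_injective _ hfinj, Finset.card_univ, ← Set.toFinset_card, hcardt]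
  · intro x hx hxB
    obtain ⟨lam, rfl⟩ := (mem_span_range_iff_exists_fun ℝ).mp hx
    set φ : (α → ℝ) →ₗ[ℝ] ℝ := ∑ a, lam a • LinearMap.proj a with hφ
    have hφt : ∀ z ∈ t, φ z = 0 := by
      intro z hz
      have hb : f ⟨z, hz⟩ ∈ Finset.univ.image f :=
        Finset.mem_image_of_mem f (Finset.mem_univ _)
      have h0 := hxB _ hb
      have hz' : col (f ⟨z, hz⟩) = z := hf ⟨z, hz⟩
      rw [hφ]
      simp only [LinearMap.sum_apply, LinearMap.smul_apply, LinearMap.proj_apply,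
        smul_eq_mul]
      rw [← hz']
      simpa [Finset.sum_apply, hcol, mul_comm] using h0
    have hφ0 : ∀ z : α → ℝ, φ z = 0 := by
      intro z
      have hzt : z ∈ Submodule.span ℝ t := by
        rw [htspan, hspan]; trivial
      have hle : Submodule.span ℝ t ≤ LinearMap.ker φ :=
        Submodule.span_le.mpr fun w hw => LinearMap.mem_ker.mpr (hφt w hw)
      exact LinearMap.mem_ker.mp (hle hzt)
    have hsq : ∑ a, lam a * lam a = 0 := by
      have := hφ0 lam
      rw [hφ] at this
      simpa [LinearMap.sum_apply, LinearMap.smul_apply, LinearMap.proj_apply,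
        smul_eq_mul] using this
    have hlam : ∀ a, lam a = 0 := by
      intro a
      have h := (Finset.sum_eq_zero_iff_of_nonneg
        (fun i _ => mul_self_nonneg (lam i))).mp hsq a (Finset.mem_univ a)
      exact mul_self_eq_zero.mp h
    simp [hlam]

lemma aux_core (neg : ι → ι) (hneg : ∀ e, neg (neg e) = e) (hne : ∀ e, neg e ≠ e)
    (c : ι → ℝ) (hc : ∀ e, c e ≠ 0)
    (M : α → ι → ℝ) (hM : LinearIndependent ℝ M)
    (hiso : ∀ x ∈ Submodule.span ℝ (Set.range M), ∀ y ∈ Submodule.span ℝ (Set.range M),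
      ∑ e, x e * (y (neg e) * c e) = 0) :
    ∃ B : Finset ι, B.card = Fintype.card α ∧ (∀ b ∈ B, neg b ∉ B) ∧
      LinearIndependent ℝ (fun a => fun b : ↥B => M a b) := by
  obtain ⟨B0, hc0, hg0⟩ := aux_initial M hM
  obtain ⟨B, hBc, hBnp, hBg⟩ :=
    aux_descent neg hneg hne c hc M hM hiso (B0.filter (fun x => neg x ∈ B0)).card
      B0 hc0 hg0 le_rfl
  exact ⟨B, hBc, hBnp, (aux_inj_iff M hM B).mp hBg⟩

end aux


/-- If `ω` is a symplectic form with `ω(v_i, v_{−i}) ≠ 0` and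
`ω(v_e, v_f) = 0` for `f ≠ −e`, and `C` preserves `ω`, then for every `A ∈ R̂_k` there is
`B ∈ R̂_k` such that the `k×k` matrix `(c_{b,a})` of coefficients of `C` is invertible
(equivalently, its columns are linearly independent). -/
theorem stmt_13 (d k : ℕ) (hd : 1 ≤ d) (hk : 1 ≤ k) (hkd : k ≤ d)
    (V : Type*) [AddCommGroup V] [Module ℝ V]
    (v : Module.Basis {e : ℤ // e ∈ Eset d} ℝ V)
    (ω : V →ₗ[ℝ] V →ₗ[ℝ] ℝ)
    (halt : ∀ x : V, ω x x = 0)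
    (hnondeg : ∀ x : V, (∀ y : V, ω x y = 0) → x = 0)
    (hzero : ∀ e f : {e : ℤ // e ∈ Eset d}, (f : ℤ) ≠ -(e : ℤ) → ω (v e) (v f) = 0)
    (hpair : ∀ e f : {e : ℤ // e ∈ Eset d}, (f : ℤ) = -(e : ℤ) → ω (v e) (v f) ≠ 0)
    (C : V →ₗ[ℝ] V)
    (hC : ∀ x y : V, ω (C x) (C y) = ω x y)
    (A : Finset ℤ) (hA : RhatP d k A) :
    ∃ B : Finset ℤ, ∃ hB : RhatP d k B,
      LinearIndependent ℝ (fun a : {x // x ∈ A} => fun b : {x // x ∈ B} =>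
        v.repr (C (v ⟨(a : ℤ), hA.1 a.2⟩)) ⟨(b : ℤ), hB.1 b.2⟩) := by
  classical
  have hmem_neg : ∀ e : {e : ℤ // e ∈ Eset d}, (-(e : ℤ)) ∈ Eset d := by
    intro e
    have he := e.2
    simp only [Eset, Finset.mem_filter, Finset.mem_Icc] at he ⊢
    omega
  set neg : {e : ℤ // e ∈ Eset d} → {e : ℤ // e ∈ Eset d} :=
    fun e => ⟨-(e : ℤ), hmem_neg e⟩ with hnegdef
  have hneg : ∀ e, neg (neg e) = e := fun e => Subtype.ext (neg_neg _)
  have hne : ∀ e, neg e ≠ e := by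
    intro e h
    have h1 : -(e : ℤ) = (e : ℤ) := congrArg Subtype.val h
    have he := e.2
    simp only [Eset, Finset.mem_filter, Finset.mem_Icc] at he
    omega
  set c : {e : ℤ // e ∈ Eset d} → ℝ := fun e => ω (v e) (v (neg e)) with hcdef
  have hc : ∀ e, c e ≠ 0 := fun e => hpair e (neg e) rfl
  set va : {x // x ∈ A} → V := fun a => v ⟨(a : ℤ), hA.1 a.2⟩ with hvadef
  -- C is injective
  have hCker : LinearMap.ker C = ⊥ := by
    rw [LinearMap.ker_eq_bot']
    intro m hm
    apply hnondeg
    intro y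
    have h1 := hC m y
    rw [hm] at h1
    simpa using h1.symm
  -- the coordinate family
  set T : V →ₗ[ℝ] ({e : ℤ // e ∈ Eset d} → ℝ) :=
    (v.equivFun : V ≃ₗ[ℝ] ({e : ℤ // e ∈ Eset d} → ℝ)).toLinearMap ∘ₗ C with hTdef
  set M : {x // x ∈ A} → {e : ℤ // e ∈ Eset d} → ℝ := fun a => T (va a) with hMdef
  have hva_ind : LinearIndependent ℝ va := by
    apply v.linearIndependent.comp
      (fun a : {x // x ∈ A} => (⟨(a : ℤ), hA.1 a.2⟩ : {e : ℤ // e ∈ Eset d}))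
    intro x y h
    have h2 := Subtype.ext_iff.mp h
    exact Subtype.ext h2
  have hM_ind : LinearIndependent ℝ M :=
    (hva_ind.map' C hCker).map'
      (v.equivFun : V ≃ₗ[ℝ] ({e : ℤ // e ∈ Eset d} → ℝ)).toLinearMap
      (LinearEquiv.ker _)
  -- coordinate expansion of ω
  have key : ∀ x y : V, ∑ e, v.equivFun x e * (v.equivFun y (neg e) * c e) = ω x y := by
    intro x y
    have h1 : ω x y = ∑ e, v.repr x e * (ω (v e) y) := by
      conv_lhs => rw [← Basis.sum_repr v x]
      rw [map_sum, LinearMap.sum_apply]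
      exact Finset.sum_congr rfl fun e _ => by
        rw [_root_.map_smul, LinearMap.smul_apply, smul_eq_mul]
    have h2 : ∀ e : {e : ℤ // e ∈ Eset d}, ω (v e) y = v.repr y (neg e) * c e := by
      intro e
      conv_lhs => rw [← Basis.sum_repr v y]
      rw [map_sum]
      rw [Finset.sum_eq_single (neg e)]
      · rw [_root_.map_smul, smul_eq_mul, hcdef]
      · intro f _ hf
        have hfne : (f : ℤ) ≠ -(e : ℤ) := fun hco => hf (Subtype.ext hco)
        rw [_root_.map_smul, hzero e f hfne, smul_zero]
      · intro h
        exact absurd (Finset.mem_univ _) h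
    rw [h1]
    exact Finset.sum_congr rfl fun e _ => by
      rw [h2 e, Basis.equivFun_apply, Basis.equivFun_apply]
  -- the span of the v a's is isotropic
  have hSiso : ∀ x ∈ Submodule.span ℝ (Set.range va), ∀ y ∈ Submodule.span ℝ (Set.range va),
      ω x y = 0 := by
    intro x hx y hy
    induction hx, hy using Submodule.span_induction₂ with
    | mem_mem x y hx hy =>
      obtain ⟨a, rfl⟩ := hx
      obtain ⟨a', rfl⟩ := hy
      refine hzero ⟨(a : ℤ), hA.1 a.2⟩ ⟨(a' : ℤ), hA.1 a'.2⟩ ?_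
      intro hco
      have hmem : ((a' : ℤ)) ∈ A := a'.2
      rw [hco] at hmem
      exact hA.2.2 (a : ℤ) a.2 hmem
    | zero_left y hy => simp
    | zero_right x hx => simp
    | add_left x y z hx hy hz h1 h2 => rw [map_add, LinearMap.add_apply, h1, h2, add_zero]
    | add_right x y z hx hy hz h1 h2 => rw [map_add, h1, h2, add_zero]
    | smul_left r x y hx hy h1 => rw [_root_.map_smul, LinearMap.smul_apply, h1, smul_zero]
    | smul_right r x y hx hy h1 => rw [_root_.map_smul, h1, smul_zero]
  -- isotropy in coordinates
  have hiso : ∀ x ∈ Submodule.span ℝ (Set.range M), ∀ y ∈ Submodule.span ℝ (Set.range M),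
      ∑ e, x e * (y (neg e) * c e) = 0 := by
    have hrange : Set.range M = T '' Set.range va := by
      rw [← Set.range_comp]; rfl
    intro x hx y hy
    rw [hrange, Submodule.span_image] at hx hy
    obtain ⟨x0, hx0, rfl⟩ := hx
    obtain ⟨y0, hy0, rfl⟩ := hy
    have h1 : ∑ e, (T x0) e * ((T y0) (neg e) * c e) = ω (C x0) (C y0) := key (C x0) (C y0)
    rw [h1, hC, hSiso x0 hx0 y0 hy0]
  -- apply the combinatorial core
  obtain ⟨B, hBcard, hBnp, hBind⟩ := aux_core neg hneg hne c hc M hM_ind hiso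
  have hcardα : Fintype.card {x // x ∈ A} = k := by
    rw [Fintype.card_coe, hA.2.1]
  -- package the answer
  set Bz : Finset ℤ := B.map ⟨Subtype.val, Subtype.val_injective⟩ with hBzdef
  have hBzmem : ∀ {z : ℤ}, z ∈ Bz → z ∈ Eset d := by
    intro z hz
    rw [hBzdef, Finset.mem_map] at hz
    obtain ⟨b, hb, rfl⟩ := hz
    exact b.2
  have hBz : RhatP d k Bz := by
    refine ⟨fun z hz => hBzmem hz, ?_, ?_⟩
    · rw [hBzdef, Finset.card_map, hBcard, hcardα]
    · intro z hz hnz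
      rw [hBzdef, Finset.mem_map] at hz hnz
      obtain ⟨b, hb, rfl⟩ := hz
      obtain ⟨b', hb', hb'eq⟩ := hnz
      have hbeq : b' = neg b := Subtype.ext hb'eq
      rw [hbeq] at hb'
      exact hBnp b hb hb'
  have hmemB : ∀ b : {x // x ∈ Bz}, (⟨(b : ℤ), hBz.1 b.2⟩ : {e : ℤ // e ∈ Eset d}) ∈ B := by
    intro b
    have hb : (b : ℤ) ∈ B.map ⟨Subtype.val, Subtype.val_injective⟩ := b.2
    rw [Finset.mem_map] at hb
    obtain ⟨x, hx, hxe⟩ := hb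
    have hxx : x = ⟨(b : ℤ), hBz.1 b.2⟩ := Subtype.ext hxe
    rwa [hxx] at hx
  set eqv : {x // x ∈ Bz} ≃ {x // x ∈ B} :=
    { toFun := fun b => ⟨⟨(b : ℤ), hBz.1 b.2⟩, hmemB b⟩
      invFun := fun b => ⟨(((b : {e : ℤ // e ∈ Eset d}) : ℤ)), Finset.mem_map_of_mem _ b.2⟩
      left_inv := fun b => Subtype.ext rfl
      right_inv := fun b => Subtype.ext (Subtype.ext rfl) } with heqv
  set L : ({x // x ∈ B} → ℝ) ≃ₗ[ℝ] ({x // x ∈ Bz} → ℝ) :=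
    LinearEquiv.funCongrLeft ℝ ℝ eqv with hL
  have hfinal := hBind.map' L.toLinearMap (LinearEquiv.ker _)
  refine ⟨Bz, hBz, ?_⟩
  have hEq : (fun a : {x // x ∈ A} => fun b : {x // x ∈ Bz} =>
      v.repr (C (v ⟨(a : ℤ), hA.1 a.2⟩)) ⟨(b : ℤ), hBz.1 b.2⟩) =
      (L.toLinearMap ∘ fun a : {x // x ∈ A} => fun b : {x // x ∈ B} => M a b) := by
    funext a b
    simp only [Function.comp_apply, hL, LinearEquiv.funCongrLeft_apply,
      LinearMap.funLeft_apply, LinearEquiv.coe_coe]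
    rw [hMdef]
    simp only [hTdef, LinearMap.comp_apply, LinearEquiv.coe_coe, Basis.equivFun_apply]
    rfl
  rw [hEq]
  exact hfinal
end

section
/- Let ω be the standard symplectic form on ℝ⁴. For a 2-dimensional subspace H ⊆ ℝ⁴ on which ω is nondegenerate (a symplectic plane), and for any basis (e, f) of H with ω(e, f) = 1, the bivector i(H) := e ∧ f ∈ Λ²ℝ⁴ does not depend on the choice of such a basis; set v(H) := i(H) − i(H^⊥) ∈ Λ²ℝ⁴, where H^⊥ is the symplectic orthogonal of H. Then for symplectic planes H and H′ in ℝ⁴, the bivector v(H′) is a real scalar multiple of v(H) if and only if H′ = H or H′ = H^⊥. -/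
/-- The standard symplectic form on `ℝ⁴`. -/
def omega4 (x y : Fin 4 → ℝ) : ℝ := x 0 * y 2 - x 2 * y 0 + x 1 * y 3 - x 3 * y 1

/-- A symplectic plane: a 2-dimensional subspace of `ℝ⁴` on which `omega4` is nondegenerate. -/
def IsSympPlane (H : Submodule ℝ (Fin 4 → ℝ)) : Prop :=
  Module.finrank ℝ H = 2 ∧ ∀ x ∈ H, (∀ y ∈ H, omega4 x y = 0) → x = 0

/-- The wedge product `e ∧ f` as an element of the exterior algebra of `ℝ⁴`. -/
noncomputable def wedge (e f : Fin 4 → ℝ) : ExteriorAlgebra ℝ (Fin 4 → ℝ) :=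
  ExteriorAlgebra.ι ℝ e * ExteriorAlgebra.ι ℝ f

/- ### Auxiliary material -/

lemma omega4_skew (x y : Fin 4 → ℝ) : omega4 x y = -omega4 y x := by
  simp only [omega4]; ring

/-- the Plücker alternating form -/
def plAlt (i j : Fin 4) : (Fin 4 → ℝ) [⋀^Fin 2]→ₗ[ℝ] ℝ where
  toFun v := v 0 i * v 1 j - v 0 j * v 1 i
  map_update_add' := by
    intro dec m a x y
    fin_cases a <;> simp [Function.update_apply, Fin.ext_iff] <;> ring
  map_update_smul' := by
    intro dec m a r x
    fin_cases a <;> simp [Function.update_apply, Fin.ext_iff] <;> ring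
  map_eq_zero_of_eq' := by
    intro v a b hab hne
    have h01 : v 0 = v 1 := by
      fin_cases a <;> fin_cases b <;>
        first | exact hab | exact hab.symm | exact absurd rfl hne
    simp only [h01]; ring

noncomputable def pl (i j : Fin 4) : ExteriorAlgebra ℝ (Fin 4 → ℝ) →ₗ[ℝ] ℝ :=
  ExteriorAlgebra.liftAlternating (fun n => match n with
    | 2 => plAlt i j
    | _ => 0)

lemma pl_wedge (i j : Fin 4) (x y : Fin 4 → ℝ) :
    pl i j (wedge x y) = x i * y j - x j * y i := by
  have h : wedge x y = ExteriorAlgebra.ιMulti ℝ 2 ![x, y] := by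
    simp [wedge, ExteriorAlgebra.ιMulti_apply, List.ofFn_succ]
  rw [h, pl, ExteriorAlgebra.liftAlternating_apply_ιMulti]
  simp [plAlt]

lemma iota_swap (x y : Fin 4 → ℝ) :
    ExteriorAlgebra.ι ℝ y * ExteriorAlgebra.ι ℝ x
      = -(ExteriorAlgebra.ι ℝ x * ExteriorAlgebra.ι ℝ y) := by
  have h := ExteriorAlgebra.ι_sq_zero (R := ℝ) (x + y)
  rw [map_add, add_mul, mul_add, mul_add, ExteriorAlgebra.ι_sq_zero,
    ExteriorAlgebra.ι_sq_zero, zero_add, add_zero] at h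
  rw [eq_neg_iff_add_eq_zero, add_comm]
  exact h

lemma wedge_comb (e f : Fin 4 → ℝ) (a b c d : ℝ) :
    wedge (a • e + b • f) (c • e + d • f) = (a * d - b * c) • wedge e f := by
  unfold wedge
  simp only [map_add, map_smul, add_mul, mul_add, smul_mul_assoc, mul_smul_comm,
    ExteriorAlgebra.ι_sq_zero, iota_swap e f, smul_neg, smul_zero, smul_smul, zero_add, add_zero]
  module

/-- independence of `i(H)` w.r.t. the choice of a normalized basis -/
lemma wedge_eq_of_mem (e f e' f' : Fin 4 → ℝ)
    (he : e' ∈ Submodule.span ℝ ({e, f} : Set (Fin 4 → ℝ)))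
    (hf : f' ∈ Submodule.span ℝ ({e, f} : Set (Fin 4 → ℝ)))
    (h1 : omega4 e f = 1) (h2 : omega4 e' f' = 1) :
    wedge e' f' = wedge e f := by
  rw [Submodule.mem_span_pair] at he hf
  obtain ⟨a, b, rfl⟩ := he
  obtain ⟨c, d, rfl⟩ := hf
  have h1p : e 0 * f 2 - e 2 * f 0 + e 1 * f 3 - e 3 * f 1 = 1 := h1
  have h2p : (a * e 0 + b * f 0) * (c * e 2 + d * f 2)
      - (a * e 2 + b * f 2) * (c * e 0 + d * f 0)
      + (a * e 1 + b * f 1) * (c * e 3 + d * f 3)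
      - (a * e 3 + b * f 3) * (c * e 1 + d * f 1) = 1 := by
    have := h2
    simpa [omega4] using this
  have hd : a * d - b * c = 1 := by linear_combination h2p - (a * d - b * c) * h1p
  rw [wedge_comb, hd, one_smul]

/-- Plücker coordinates of the bivector `e∧f - g∧h`. -/
def pk (e f g h : Fin 4 → ℝ) (i j : Fin 4) : ℝ :=
  (e i * f j - e j * f i) - (g i * h j - g j * h i)

/-- Contraction of a vector with the bivector `e∧f - g∧h`, composed with `ω⁻¹`. -/
def phiv (e f g h x : Fin 4 → ℝ) : Fin 4 → ℝ :=
  ![x 0 * pk e f g h 1 3 - x 1 * pk e f g h 0 3 + x 3 * pk e f g h 0 1,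
    -(x 0 * pk e f g h 1 2) + x 1 * pk e f g h 0 2 - x 2 * pk e f g h 0 1,
    -(x 1 * pk e f g h 2 3) + x 2 * pk e f g h 1 3 - x 3 * pk e f g h 1 2,
    x 0 * pk e f g h 2 3 - x 2 * pk e f g h 0 3 + x 3 * pk e f g h 0 2]

section eigen
variable (e f g h : Fin 4 → ℝ)
  (h1 : omega4 e f = 1) (h2 : omega4 g h = 1)
  (h3 : omega4 e g = 0) (h4 : omega4 e h = 0)
  (h5 : omega4 f g = 0) (h6 : omega4 f h = 0)

include h2 h3 h4 in
lemma phiv_e : phiv e f g h e = -e := by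
  have h2p : g 0 * h 2 - g 2 * h 0 + g 1 * h 3 - g 3 * h 1 = 1 := h2
  have h3p : e 0 * g 2 - e 2 * g 0 + e 1 * g 3 - e 3 * g 1 = 0 := h3
  have h4p : e 0 * h 2 - e 2 * h 0 + e 1 * h 3 - e 3 * h 1 = 0 := h4
  funext k
  fin_cases k <;> simp [phiv, pk] <;>
    [linear_combination (-(e 0)) * h2p + (-(h 0)) * h3p + (g 0) * h4p;
     linear_combination (-(e 1)) * h2p + (-(h 1)) * h3p + (g 1) * h4p;
     linear_combination (-(e 2)) * h2p + (-(h 2)) * h3p + (g 2) * h4p;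
     linear_combination (-(e 3)) * h2p + (-(h 3)) * h3p + (g 3) * h4p]

include h2 h5 h6 in
lemma phiv_f : phiv e f g h f = -f := by
  have h2p : g 0 * h 2 - g 2 * h 0 + g 1 * h 3 - g 3 * h 1 = 1 := h2
  have h5p : f 0 * g 2 - f 2 * g 0 + f 1 * g 3 - f 3 * g 1 = 0 := h5
  have h6p : f 0 * h 2 - f 2 * h 0 + f 1 * h 3 - f 3 * h 1 = 0 := h6
  funext k
  fin_cases k <;> simp [phiv, pk] <;>
    [linear_combination (-(f 0)) * h2p + (-(h 0)) * h5p + (g 0) * h6p;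
     linear_combination (-(f 1)) * h2p + (-(h 1)) * h5p + (g 1) * h6p;
     linear_combination (-(f 2)) * h2p + (-(h 2)) * h5p + (g 2) * h6p;
     linear_combination (-(f 3)) * h2p + (-(h 3)) * h5p + (g 3) * h6p]

include h1 h3 h5 in
lemma phiv_g : phiv e f g h g = g := by
  have h1p : e 0 * f 2 - e 2 * f 0 + e 1 * f 3 - e 3 * f 1 = 1 := h1
  have h3p : e 0 * g 2 - e 2 * g 0 + e 1 * g 3 - e 3 * g 1 = 0 := h3
  have h5p : f 0 * g 2 - f 2 * g 0 + f 1 * g 3 - f 3 * g 1 = 0 := h5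
  funext k
  fin_cases k <;> simp [phiv, pk] <;>
    [linear_combination (g 0) * h1p + (-(f 0)) * h3p + (e 0) * h5p;
     linear_combination (g 1) * h1p + (-(f 1)) * h3p + (e 1) * h5p;
     linear_combination (g 2) * h1p + (-(f 2)) * h3p + (e 2) * h5p;
     linear_combination (g 3) * h1p + (-(f 3)) * h3p + (e 3) * h5p]

include h1 h4 h6 in
lemma phiv_h : phiv e f g h h = h := by
  have h1p : e 0 * f 2 - e 2 * f 0 + e 1 * f 3 - e 3 * f 1 = 1 := h1
  have h4p : e 0 * h 2 - e 2 * h 0 + e 1 * h 3 - e 3 * h 1 = 0 := h4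
  have h6p : f 0 * h 2 - f 2 * h 0 + f 1 * h 3 - f 3 * h 1 = 0 := h6
  funext k
  fin_cases k <;> simp [phiv, pk] <;>
    [linear_combination (h 0) * h1p + (-(f 0)) * h4p + (e 0) * h6p;
     linear_combination (h 1) * h1p + (-(f 1)) * h4p + (e 1) * h6p;
     linear_combination (h 2) * h1p + (-(f 2)) * h4p + (e 2) * h6p;
     linear_combination (h 3) * h1p + (-(f 3)) * h4p + (e 3) * h6p]

include h1 h2 h3 h4 h5 h6 in
lemma indep4 (α β γ δ : ℝ) (heq : α • e + β • f + γ • g + δ • h = 0) :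
    α = 0 ∧ β = 0 ∧ γ = 0 ∧ δ = 0 := by
  have h1p : e 0 * f 2 - e 2 * f 0 + e 1 * f 3 - e 3 * f 1 = 1 := h1
  have h2p : g 0 * h 2 - g 2 * h 0 + g 1 * h 3 - g 3 * h 1 = 1 := h2
  have h3p : e 0 * g 2 - e 2 * g 0 + e 1 * g 3 - e 3 * g 1 = 0 := h3
  have h4p : e 0 * h 2 - e 2 * h 0 + e 1 * h 3 - e 3 * h 1 = 0 := h4
  have h5p : f 0 * g 2 - f 2 * g 0 + f 1 * g 3 - f 3 * g 1 = 0 := h5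
  have h6p : f 0 * h 2 - f 2 * h 0 + f 1 * h 3 - f 3 * h 1 = 0 := h6
  have E0 : α * e 0 + β * f 0 + γ * g 0 + δ * h 0 = 0 := by simpa using congrFun heq 0
  have E1 : α * e 1 + β * f 1 + γ * g 1 + δ * h 1 = 0 := by simpa using congrFun heq 1
  have E2 : α * e 2 + β * f 2 + γ * g 2 + δ * h 2 = 0 := by simpa using congrFun heq 2
  have E3 : α * e 3 + β * f 3 + γ * g 3 + δ * h 3 = 0 := by simpa using congrFun heq 3
  refine ⟨?_, ?_, ?_, ?_⟩
  · linear_combination (f 2) * E0 + (f 3) * E1 - (f 0) * E2 - (f 1) * E3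
      - α * h1p + γ * h5p + δ * h6p
  · linear_combination (-(e 2)) * E0 - (e 3) * E1 + (e 0) * E2 + (e 1) * E3
      - β * h1p - γ * h3p - δ * h4p
  · linear_combination (h 2) * E0 + (h 3) * E1 - (h 0) * E2 - (h 1) * E3
      - α * h4p - β * h6p - γ * h2p
  · linear_combination (-(g 2)) * E0 - (g 3) * E1 + (g 0) * E2 + (g 1) * E3
      + α * h3p + β * h5p - δ * h2p

include h1 h2 h3 h4 h5 h6 in
lemma span4 (x : Fin 4 → ℝ) : ∃ α β γ δ : ℝ, x = α • e + β • f + γ • g + δ • h := by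
  have hli : LinearIndependent ℝ ![e, f, g, h] := by
    rw [Fintype.linearIndependent_iff]
    intro c hc i
    have hc' : c 0 • e + c 1 • f + c 2 • g + c 3 • h = 0 := by
      have := hc
      rwa [Fin.sum_univ_four] at this
    obtain ⟨ha, hb, hg, hd⟩ := indep4 e f g h h1 h2 h3 h4 h5 h6 _ _ _ _ hc'
    fin_cases i <;> assumption
  have htop : Submodule.span ℝ (Set.range ![e, f, g, h]) = ⊤ :=
    hli.span_eq_top_of_card_eq_finrank (by simp [Module.finrank_fin_fun])
  have hx : x ∈ Submodule.span ℝ (Set.range ![e, f, g, h]) := by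
    rw [htop]; trivial
  rw [Submodule.mem_span_range_iff_exists_fun] at hx
  obtain ⟨c, hc⟩ := hx
  refine ⟨c 0, c 1, c 2, c 3, ?_⟩
  rw [← hc, Fin.sum_univ_four]
  simp

end eigen

lemma span_pair_le {x y : Fin 4 → ℝ} {S : Submodule ℝ (Fin 4 → ℝ)}
    (hx : x ∈ S) (hy : y ∈ S) :
    Submodule.span ℝ ({x, y} : Set (Fin 4 → ℝ)) ≤ S :=
  Submodule.span_le.mpr (Set.insert_subset_iff.mpr ⟨hx, Set.singleton_subset_iff.mpr hy⟩)

/-- The key rigidity lemma. -/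
lemma lemA (c : ℝ) (e f g h e' f' g' h' : Fin 4 → ℝ)
    (h1 : omega4 e f = 1) (h2 : omega4 g h = 1)
    (h3 : omega4 e g = 0) (h4 : omega4 e h = 0)
    (h5 : omega4 f g = 0) (h6 : omega4 f h = 0)
    (h1' : omega4 e' f' = 1) (h2' : omega4 g' h' = 1)
    (h3' : omega4 e' g' = 0) (h4' : omega4 e' h' = 0)
    (h5' : omega4 f' g' = 0) (h6' : omega4 f' h' = 0)
    (hw : ∀ i j : Fin 4, pk e' f' g' h' i j = c * pk e f g h i j) :
    (c = 1 ∧ e' ∈ Submodule.span ℝ ({e, f} : Set (Fin 4 → ℝ))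
        ∧ f' ∈ Submodule.span ℝ ({e, f} : Set (Fin 4 → ℝ))) ∨
    (c = -1 ∧ e' ∈ Submodule.span ℝ ({g, h} : Set (Fin 4 → ℝ))
        ∧ f' ∈ Submodule.span ℝ ({g, h} : Set (Fin 4 → ℝ))) := by
  have hphi : ∀ x : Fin 4 → ℝ, phiv e' f' g' h' x = c • phiv e f g h x := by
    intro x
    funext k
    fin_cases k <;> simp [phiv, hw] <;> ring
  have hlin4 : ∀ (α β γ δ : ℝ) (x1 x2 x3 x4 : Fin 4 → ℝ),
      phiv e f g h (α • x1 + β • x2 + γ • x3 + δ • x4)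
        = α • phiv e f g h x1 + β • phiv e f g h x2 + γ • phiv e f g h x3
          + δ • phiv e f g h x4 := by
    intro α β γ δ x1 x2 x3 x4
    funext k
    fin_cases k <;> simp [phiv, pk] <;> ring
  have key : ∀ x : Fin 4 → ℝ, phiv e' f' g' h' x = -x →
      ∃ α β γ δ : ℝ, x = α • e + β • f + γ • g + δ • h ∧
        α - c * α = 0 ∧ β - c * β = 0 ∧ γ + c * γ = 0 ∧ δ + c * δ = 0 := by
    intro x hex
    obtain ⟨α, β, γ, δ, hx⟩ := span4 e f g h h1 h2 h3 h4 h5 h6 x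
    have eq1 : c • phiv e f g h x = -x := by rw [← hphi]; exact hex
    rw [hx, hlin4, phiv_e e f g h h2 h3 h4, phiv_f e f g h h2 h5 h6,
      phiv_g e f g h h1 h3 h5, phiv_h e f g h h1 h4 h6] at eq1
    have eq2 : (α - c * α) • e + (β - c * β) • f + (γ + c * γ) • g + (δ + c * δ) • h = 0 := by
      funext k
      have hk := congrFun eq1 k
      simp only [Pi.add_apply, Pi.smul_apply, Pi.neg_apply, smul_eq_mul, Pi.zero_apply,
        mul_neg, neg_add_rev, neg_neg] at hk ⊢
      linear_combination hk
    obtain ⟨ha, hb, hg, hd⟩ := indep4 e f g h h1 h2 h3 h4 h5 h6 _ _ _ _ eq2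
    exact ⟨α, β, γ, δ, hx, ha, hb, hg, hd⟩
  obtain ⟨α, β, γ, δ, hx, ha, hb, hg, hd⟩ :=
    key e' (phiv_e e' f' g' h' h2' h3' h4')
  obtain ⟨α2, β2, γ2, δ2, hx2, ha2, hb2, hg2, hd2⟩ :=
    key f' (phiv_f e' f' g' h' h2' h5' h6')
  have hne : e' ≠ 0 := by
    intro h0
    rw [h0] at h1'
    simp [omega4] at h1'
  by_cases hc1 : c = 1
  · subst hc1
    have hγ : γ = 0 := by linarith
    have hδ : δ = 0 := by linarith
    have hγ2 : γ2 = 0 := by linarith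
    have hδ2 : δ2 = 0 := by linarith
    refine Or.inl ⟨rfl, ?_, ?_⟩
    · rw [Submodule.mem_span_pair]
      exact ⟨α, β, by rw [hx, hγ, hδ]; simp⟩
    · rw [Submodule.mem_span_pair]
      exact ⟨α2, β2, by rw [hx2, hγ2, hδ2]; simp⟩
  · by_cases hc2 : c = -1
    · subst hc2
      have hα : α = 0 := by linarith
      have hβ : β = 0 := by linarith
      have hα2 : α2 = 0 := by linarith
      have hβ2 : β2 = 0 := by linarith
      refine Or.inr ⟨rfl, ?_, ?_⟩
      · rw [Submodule.mem_span_pair]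
        exact ⟨γ, δ, by rw [hx, hα, hβ]; simp⟩
      · rw [Submodule.mem_span_pair]
        exact ⟨γ2, δ2, by rw [hx2, hα2, hβ2]; simp⟩
    · exfalso
      have hα : α = 0 := by
        have hm : α * (1 - c) = 0 := by linear_combination ha
        rcases mul_eq_zero.mp hm with h | h
        · exact h
        · exact absurd (by linarith) hc1
      have hβ : β = 0 := by
        have hm : β * (1 - c) = 0 := by linear_combination hb
        rcases mul_eq_zero.mp hm with h | h
        · exact h
        · exact absurd (by linarith) hc1
      have hγ : γ = 0 := by
        have hm : γ * (1 + c) = 0 := by linear_combination hg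
        rcases mul_eq_zero.mp hm with h | h
        · exact h
        · exact absurd (by linarith) hc2
      have hδ : δ = 0 := by
        have hm : δ * (1 + c) = 0 := by linear_combination hd
        rcases mul_eq_zero.mp hm with h | h
        · exact h
        · exact absurd (by linarith) hc2
      apply hne
      rw [hx, hα, hβ, hγ, hδ]
      simp

theorem stmt_14 :
    (∀ H : Submodule ℝ (Fin 4 → ℝ), IsSympPlane H →
      ∀ e f e' f' : Fin 4 → ℝ,
        Submodule.span ℝ {e, f} = H → omega4 e f = 1 →
        Submodule.span ℝ {e', f'} = H → omega4 e' f' = 1 →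
        wedge e f = wedge e' f') ∧
    (∀ H H' Hp H'p : Submodule ℝ (Fin 4 → ℝ),
      IsSympPlane H → IsSympPlane H' →
      (Hp : Set (Fin 4 → ℝ)) = {x | ∀ y ∈ H, omega4 x y = 0} →
      (H'p : Set (Fin 4 → ℝ)) = {x | ∀ y ∈ H', omega4 x y = 0} →
      ∀ e f g h e' f' g' h' : Fin 4 → ℝ,
        Submodule.span ℝ {e, f} = H → omega4 e f = 1 →
        Submodule.span ℝ {g, h} = Hp → omega4 g h = 1 →
        Submodule.span ℝ {e', f'} = H' → omega4 e' f' = 1 →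
        Submodule.span ℝ {g', h'} = H'p → omega4 g' h' = 1 →
        ((∃ c : ℝ, wedge e' f' - wedge g' h' = c • (wedge e f - wedge g h)) ↔
          (H' = H ∨ H' = Hp))) := by
  constructor
  · -- part 1
    intro H _ e f e' f' hspan h1 hspan' h1'
    have hEE : Submodule.span ℝ ({e, f} : Set (Fin 4 → ℝ))
        = Submodule.span ℝ ({e', f'} : Set (Fin 4 → ℝ)) := by rw [hspan, hspan']
    refine wedge_eq_of_mem e' f' e f ?_ ?_ h1' h1
    · rw [← hEE]; exact Submodule.subset_span (by simp)
    · rw [← hEE]; exact Submodule.subset_span (by simp)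
  · -- part 2
    intro H H' Hp H'p _ _ hHp hH'p e f g h e' f' g' h' sE h1 sG h2 sE' h1' sG' h2'
    -- memberships
    have heH : e ∈ H := by rw [← sE]; exact Submodule.subset_span (by simp)
    have hfH : f ∈ H := by rw [← sE]; exact Submodule.subset_span (by simp)
    have hgHp : g ∈ Hp := by rw [← sG]; exact Submodule.subset_span (by simp)
    have hhHp : h ∈ Hp := by rw [← sG]; exact Submodule.subset_span (by simp)
    have heH' : e' ∈ H' := by rw [← sE']; exact Submodule.subset_span (by simp)
    have hfH' : f' ∈ H' := by rw [← sE']; exact Submodule.subset_span (by simp)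
    have hgH'p : g' ∈ H'p := by rw [← sG']; exact Submodule.subset_span (by simp)
    have hhH'p : h' ∈ H'p := by rw [← sG']; exact Submodule.subset_span (by simp)
    -- orthogonality relations
    have hgperp : ∀ y ∈ H, omega4 g y = 0 := by
      have hm : g ∈ (Hp : Set (Fin 4 → ℝ)) := hgHp
      rw [hHp] at hm; exact hm
    have hhperp : ∀ y ∈ H, omega4 h y = 0 := by
      have hm : h ∈ (Hp : Set (Fin 4 → ℝ)) := hhHp
      rw [hHp] at hm; exact hm
    have hg'perp : ∀ y ∈ H', omega4 g' y = 0 := by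
      have hm : g' ∈ (H'p : Set (Fin 4 → ℝ)) := hgH'p
      rw [hH'p] at hm; exact hm
    have hh'perp : ∀ y ∈ H', omega4 h' y = 0 := by
      have hm : h' ∈ (H'p : Set (Fin 4 → ℝ)) := hhH'p
      rw [hH'p] at hm; exact hm
    have h3 : omega4 e g = 0 := by rw [omega4_skew, hgperp e heH, neg_zero]
    have h4 : omega4 e h = 0 := by rw [omega4_skew, hhperp e heH, neg_zero]
    have h5 : omega4 f g = 0 := by rw [omega4_skew, hgperp f hfH, neg_zero]
    have h6 : omega4 f h = 0 := by rw [omega4_skew, hhperp f hfH, neg_zero]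
    have h3' : omega4 e' g' = 0 := by rw [omega4_skew, hg'perp e' heH', neg_zero]
    have h4' : omega4 e' h' = 0 := by rw [omega4_skew, hh'perp e' heH', neg_zero]
    have h5' : omega4 f' g' = 0 := by rw [omega4_skew, hg'perp f' hfH', neg_zero]
    have h6' : omega4 f' h' = 0 := by rw [omega4_skew, hh'perp f' hfH', neg_zero]
    constructor
    · rintro ⟨c, hc⟩
      have hw : ∀ i j : Fin 4, pk e' f' g' h' i j = c * pk e f g h i j := by
        intro i j
        have hh := congrArg (pl i j) hc
        simp only [map_sub, map_smul, pl_wedge, smul_eq_mul] at hh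
        simp only [pk]
        linarith [hh]
      rcases lemA c e f g h e' f' g' h' h1 h2 h3 h4 h5 h6 h1' h2' h3' h4' h5' h6' hw with
        ⟨hc1, hm1, hm2⟩ | ⟨hc1, hm1, hm2⟩
      · -- c = 1 : H' = H
        left
        subst hc1
        have hw_rev : ∀ i j : Fin 4, pk e f g h i j = (1:ℝ) * pk e' f' g' h' i j := by
          intro i j
          rw [hw i j]; ring
        rcases lemA 1 e' f' g' h' e f g h h1' h2' h3' h4' h5' h6' h1 h2 h3 h4 h5 h6 hw_rev with
          ⟨_, hm1', hm2'⟩ | ⟨habs, _, _⟩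
        · refine le_antisymm ?_ ?_
          · rw [← sE', ← sE]; exact span_pair_le hm1 hm2
          · rw [← sE, ← sE']; exact span_pair_le hm1' hm2'
        · norm_num at habs
      · -- c = -1 : H' = Hp
        right
        subst hc1
        have hw2 : ∀ i j : Fin 4, pk g h e f i j = (1:ℝ) * pk e' f' g' h' i j := by
          intro i j
          have hh := hw i j
          simp only [pk] at hh ⊢
          linarith [hh]
        have h3s : omega4 g e = 0 := by rw [omega4_skew, h3, neg_zero]
        have h4s : omega4 h e = 0 := by rw [omega4_skew, h4, neg_zero]
        have h5s : omega4 g f = 0 := by rw [omega4_skew, h5, neg_zero]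
        have h6s : omega4 h f = 0 := by rw [omega4_skew, h6, neg_zero]
        rcases lemA 1 e' f' g' h' g h e f h1' h2' h3' h4' h5' h6'
            h2 h1 h3s h5s h4s h6s hw2 with ⟨_, hg'', hh''⟩ | ⟨habs, _, _⟩
        · refine le_antisymm ?_ ?_
          · rw [← sE', ← sG]; exact span_pair_le hm1 hm2
          · rw [← sG, ← sE']; exact span_pair_le hg'' hh''
        · norm_num at habs
    · intro hor
      rcases hor with hEq | hEq
      · -- H' = H : take c = 1
        refine ⟨1, ?_⟩
        rw [one_smul]
        have hA : wedge e' f' = wedge e f := by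
          refine wedge_eq_of_mem e f e' f' ?_ ?_ h1 h1'
          · rw [sE, ← hEq]; exact heH'
          · rw [sE, ← hEq]; exact hfH'
        have hPerpEq : H'p = Hp := SetLike.coe_injective (by rw [hH'p, hHp, hEq])
        have hB : wedge g' h' = wedge g h := by
          refine wedge_eq_of_mem g h g' h' ?_ ?_ h2 h2'
          · rw [sG, ← hPerpEq]; exact hgH'p
          · rw [sG, ← hPerpEq]; exact hhH'p
        rw [hA, hB]
      · -- H' = Hp : take c = -1
        refine ⟨-1, ?_⟩
        have hA : wedge e' f' = wedge g h := by
          refine wedge_eq_of_mem g h e' f' ?_ ?_ h2 h1'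
          · rw [sG, ← hEq]; exact heH'
          · rw [sG, ← hEq]; exact hfH'
        -- the perp of Hp is contained in span {e, f}
        have hperp_sub : ∀ x : Fin 4 → ℝ, x ∈ H'p →
            x ∈ Submodule.span ℝ ({e, f} : Set (Fin 4 → ℝ)) := by
          intro x hx
          have hxp : ∀ y ∈ H', omega4 x y = 0 := by
            have hm : x ∈ (H'p : Set (Fin 4 → ℝ)) := hx
            rw [hH'p] at hm; exact hm
          have hxg : omega4 x g = 0 := hxp g (by rw [hEq]; exact hgHp)
          have hxh : omega4 x h = 0 := hxp h (by rw [hEq]; exact hhHp)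
          obtain ⟨α, β, γ, δ, hxd⟩ := span4 e f g h h1 h2 h3 h4 h5 h6 x
          have h2p : g 0 * h 2 - g 2 * h 0 + g 1 * h 3 - g 3 * h 1 = 1 := h2
          have h3p : e 0 * g 2 - e 2 * g 0 + e 1 * g 3 - e 3 * g 1 = 0 := h3
          have h4p : e 0 * h 2 - e 2 * h 0 + e 1 * h 3 - e 3 * h 1 = 0 := h4
          have h5p : f 0 * g 2 - f 2 * g 0 + f 1 * g 3 - f 3 * g 1 = 0 := h5
          have h6p : f 0 * h 2 - f 2 * h 0 + f 1 * h 3 - f 3 * h 1 = 0 := h6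
          have hxgp : x 0 * g 2 - x 2 * g 0 + x 1 * g 3 - x 3 * g 1 = 0 := hxg
          have hxhp : x 0 * h 2 - x 2 * h 0 + x 1 * h 3 - x 3 * h 1 = 0 := hxh
          have E0 : x 0 = α * e 0 + β * f 0 + γ * g 0 + δ * h 0 := by
            simpa using congrFun hxd 0
          have E1 : x 1 = α * e 1 + β * f 1 + γ * g 1 + δ * h 1 := by
            simpa using congrFun hxd 1
          have E2 : x 2 = α * e 2 + β * f 2 + γ * g 2 + δ * h 2 := by
            simpa using congrFun hxd 2
          have E3 : x 3 = α * e 3 + β * f 3 + γ * g 3 + δ * h 3 := by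
            simpa using congrFun hxd 3
          have hγ : γ = 0 := by
            linear_combination (-(h 2)) * E0 - (h 3) * E1 + (h 0) * E2 + (h 1) * E3
              + hxhp - α * h4p - β * h6p - γ * h2p
          have hδ : δ = 0 := by
            linear_combination (g 2) * E0 + (g 3) * E1 - (g 0) * E2 - (g 1) * E3
              - hxgp + α * h3p + β * h5p - δ * h2p
          rw [Submodule.mem_span_pair]
          exact ⟨α, β, by rw [hxd, hγ, hδ]; simp⟩
        have hB : wedge g' h' = wedge e f := by
          refine wedge_eq_of_mem e f g' h' ?_ ?_ h1 h2'
          · exact hperp_sub g' hgH'p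
          · exact hperp_sub h' hhH'p
        rw [hA, hB]
        module
end

section
/- Let P ∈ ℚ[x] be a monic polynomial of degree 2d whose roots are 2d distinct real numbers, none equal to ±1 or 0, coming in inverse pairs λ₁, λ₁⁻¹, …, λ_d, λ_d⁻¹, and assume that the Galois group of P over ℚ is the largest possible, i.e., every permutation of the set of roots commuting with the involution λ ↦ λ⁻¹ is induced by a field automorphism of the splitting field of P (so the Galois group has order 2^d·d!). Let k ≥ 1 and let Λ and Λ′ be two distinct k-element subsets of the set of roots of P such that Λ contains no inverse pair {λ, λ⁻¹}. Then the product of the elements of Λ is equal neither to the product of the elements of Λ′ nor to its negative: ∏_{λ∈Λ} λ ≠ ± ∏_{μ∈Λ′} μ. -/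
open Polynomial

lemma aux_pow8 {l : ℝ} (h8 : l ^ 8 = 1) : l = 1 ∨ l = -1 := by
  have hfac : (l ^ 2 - 1) * (l ^ 6 + l ^ 4 + l ^ 2 + 1) = 0 := by linear_combination h8
  have hpos : 0 < l ^ 6 + l ^ 4 + l ^ 2 + 1 := by positivity
  have h2 : l ^ 2 = 1 := by
    rcases mul_eq_zero.mp hfac with h | h
    · linarith
    · exact absurd h (ne_of_gt hpos)
  have hfac2 : (l - 1) * (l + 1) = 0 := by linear_combination h2
  rcases mul_eq_zero.mp hfac2 with h | h
  · left; linarith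
  · right; linarith

/-- Let `P ∈ ℚ[x]` be monic of degree `2d` with `2d` distinct real roots,
none equal to `0`, `±1`, coming in inverse pairs, and with the largest possible Galois group
(every permutation of the roots commuting with inversion is induced by an automorphism of the
splitting field). If `Λ ≠ Λ′` are `k`-element subsets of the roots and `Λ` contains no inverse
pair, then `∏ Λ ≠ ± ∏ Λ′`. -/
theorem stmt_15 (d k : ℕ) (hk : 1 ≤ k)
    (P : Polynomial ℚ) (hmonic : P.Monic) (hdeg : P.natDegree = 2 * d)
    (S : Finset ℝ) (hcard : S.card = 2 * d)
    (hroots : ∀ x : ℝ, x ∈ S ↔ Polynomial.aeval x P = 0)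
    (h0 : ∀ x ∈ S, x ≠ 0) (h1 : ∀ x ∈ S, x ≠ 1 ∧ x ≠ -1)
    (hinv : ∀ x ∈ S, x⁻¹ ∈ S)
    (hGal : ∀ σ : Equiv.Perm {x : ℝ // x ∈ S},
      (∀ x x' : {x : ℝ // x ∈ S}, (x' : ℝ) = (x : ℝ)⁻¹ → (σ x' : ℝ) = ((σ x : ℝ))⁻¹) →
      ∃ φ : ↥(IntermediateField.adjoin ℚ (S : Set ℝ)) ≃ₐ[ℚ]
          ↥(IntermediateField.adjoin ℚ (S : Set ℝ)),
        ∀ (x : {x : ℝ // x ∈ S}) (y : ↥(IntermediateField.adjoin ℚ (S : Set ℝ))),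
          (y : ℝ) = (x : ℝ) → (φ y : ℝ) = (σ x : ℝ))
    (Λ Λ' : Finset ℝ) (hΛS : Λ ⊆ S) (hΛ'S : Λ' ⊆ S)
    (hΛ : Λ.card = k) (hΛ' : Λ'.card = k) (hne : Λ ≠ Λ')
    (hnopair : ∀ x ∈ Λ, x⁻¹ ∉ Λ) :
    (∏ x ∈ Λ, x) ≠ (∏ x ∈ Λ', x) ∧ (∏ x ∈ Λ, x) ≠ -(∏ x ∈ Λ', x) := by
  suffices h : (∏ x ∈ Λ, x) ^ 2 ≠ (∏ x ∈ Λ', x) ^ 2 by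
    refine ⟨fun he => h (by rw [he]), fun he => h (by rw [he]; ring)⟩
  intro hsq
  obtain ⟨l, hlΛ, hlΛ'⟩ : ∃ l, l ∈ Λ ∧ l ∉ Λ' := by
    by_contra hc
    push_neg at hc
    exact hne (Finset.eq_of_subset_of_card_le hc (by rw [hΛ, hΛ']))
  have hlS : l ∈ S := hΛS hlΛ
  have hliS : l⁻¹ ∈ S := hinv l hlS
  have hl0 : l ≠ 0 := h0 l hlS
  have hl1 := h1 l hlS
  have hinvc : l * l⁻¹ = 1 := mul_inv_cancel₀ hl0
  have hlinv_ne : l⁻¹ ≠ l := by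
    intro h
    have h2 : l * l = 1 := by rw [h] at hinvc; exact hinvc
    have hfac : (l - 1) * (l + 1) = 0 := by linear_combination h2
    rcases mul_eq_zero.mp hfac with h' | h'
    · exact hl1.1 (by linarith)
    · exact hl1.2 (by linarith)
  have hliΛ : l⁻¹ ∉ Λ := hnopair l hlΛ
  set a : {x : ℝ // x ∈ S} := ⟨l, hlS⟩ with ha
  set b : {x : ℝ // x ∈ S} := ⟨l⁻¹, hliS⟩ with hb
  set F : ℝ → ℝ := fun y => if y = l then l⁻¹ else if y = l⁻¹ then l else y with hF
  have hσ : ∀ x : {x : ℝ // x ∈ S},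
      ((Equiv.swap a b x : {x : ℝ // x ∈ S}) : ℝ) = F (x : ℝ) := by
    intro x
    by_cases h1' : (x : ℝ) = l
    · have hxa : x = a := Subtype.ext h1'
      rw [hxa, Equiv.swap_apply_left]
      simp [hF, h1', hb, ha]
    · by_cases h2' : (x : ℝ) = l⁻¹
      · have hxb : x = b := Subtype.ext h2'
        rw [hxb, Equiv.swap_apply_right]
        simp [hF, h2', ha, hb, hlinv_ne]
      · have hxa : x ≠ a := fun h => h1' (congrArg Subtype.val h)
        have hxb : x ≠ b := fun h => h2' (congrArg Subtype.val h)
        rw [Equiv.swap_apply_of_ne_of_ne hxa hxb]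
        simp [hF, h1', h2']
  have hFinv : ∀ x : ℝ, F x⁻¹ = (F x)⁻¹ := by
    intro x
    by_cases h1' : x = l
    · subst h1'
      simp [hF, hlinv_ne]
    · by_cases h2' : x = l⁻¹
      · subst h2'
        simp [hF, inv_inv, hlinv_ne]
      · have h3 : x⁻¹ ≠ l := fun h => h2' (by rw [← h, inv_inv])
        have h4 : x⁻¹ ≠ l⁻¹ := fun h => h1' (inv_injective h)
        simp [hF, h1', h2', h3, h4]
  have hcomm : ∀ x x' : {x : ℝ // x ∈ S}, (x' : ℝ) = (x : ℝ)⁻¹ →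
      ((Equiv.swap a b x' : {x : ℝ // x ∈ S}) : ℝ)
        = ((Equiv.swap a b x : {x : ℝ // x ∈ S}) : ℝ)⁻¹ := by
    intro x x' h
    rw [hσ, hσ, h, hFinv]
  obtain ⟨φ, hφ⟩ := hGal (Equiv.swap a b) hcomm
  have hmemK : ∀ x ∈ S, x ∈ IntermediateField.adjoin ℚ (S : Set ℝ) := fun x hx =>
    IntermediateField.subset_adjoin ℚ _ (Finset.mem_coe.mpr hx)
  have hprod : ∀ (T : Finset ℝ) (hTS : T ⊆ S),
      ∃ p : IntermediateField.adjoin ℚ (S : Set ℝ),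
        (p : ℝ) = ∏ x ∈ T, x ∧ ((φ p : IntermediateField.adjoin ℚ (S : Set ℝ)) : ℝ)
          = ∏ x ∈ T, F x := by
    intro T hTS
    refine ⟨∏ x ∈ T.attach, (⟨x.1, hmemK _ (hTS x.2)⟩ :
        IntermediateField.adjoin ℚ (S : Set ℝ)), ?_, ?_⟩
    · push_cast
      exact Finset.prod_attach T (fun x => x)
    · rw [map_prod]
      push_cast
      rw [← Finset.prod_attach T F]
      refine Finset.prod_congr rfl fun x _ => ?_
      rw [hφ ⟨x.1, hTS x.2⟩ _ rfl, hσ]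
  obtain ⟨p, hp, hφp⟩ := hprod Λ hΛS
  obtain ⟨p', hp', hφp'⟩ := hprod Λ' hΛ'S
  have hKeq : p ^ 2 = p' ^ 2 := by
    apply Subtype.coe_injective
    push_cast [hp, hp']
    exact hsq
  have hφeq : (∏ x ∈ Λ, F x) ^ 2 = (∏ x ∈ Λ', F x) ^ 2 := by
    have h := congrArg φ hKeq
    rw [map_pow, map_pow] at h
    have h2 := congrArg (fun z : IntermediateField.adjoin ℚ (S : Set ℝ) => (z : ℝ)) h
    push_cast at h2
    rwa [hφp, hφp'] at h2
  set Q := ∏ x ∈ Λ.erase l, x with hQ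
  have hQ0 : Q ≠ 0 := Finset.prod_ne_zero_iff.mpr fun x hx =>
    h0 x (hΛS (Finset.mem_of_mem_erase hx))
  have hPΛ : ∏ x ∈ Λ, x = l * Q := (Finset.mul_prod_erase Λ (fun x => x) hlΛ).symm
  have hFΛ : ∏ x ∈ Λ, F x = l⁻¹ * Q := by
    rw [← Finset.mul_prod_erase Λ F hlΛ]
    congr 1
    · simp [hF]
    · refine Finset.prod_congr rfl fun x hx => ?_
      have hx1 : x ≠ l := Finset.ne_of_mem_erase hx
      have hx2 : x ≠ l⁻¹ := fun h => hliΛ (h ▸ Finset.mem_of_mem_erase hx)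
      simp [hF, hx1, hx2]
  by_cases hli' : l⁻¹ ∈ Λ'
  · set Q' := ∏ x ∈ Λ'.erase l⁻¹, x with hQ'
    have hQ'0 : Q' ≠ 0 := Finset.prod_ne_zero_iff.mpr fun x hx =>
      h0 x (hΛ'S (Finset.mem_of_mem_erase hx))
    have hPΛ' : ∏ x ∈ Λ', x = l⁻¹ * Q' :=
      (Finset.mul_prod_erase Λ' (fun x => x) hli').symm
    have hFΛ' : ∏ x ∈ Λ', F x = l * Q' := by
      rw [← Finset.mul_prod_erase Λ' F hli']
      congr 1
      · simp [hF, hlinv_ne]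
      · refine Finset.prod_congr rfl fun x hx => ?_
        have hx1 : x ≠ l⁻¹ := Finset.ne_of_mem_erase hx
        have hx2 : x ≠ l := fun h => hlΛ' (h ▸ Finset.mem_of_mem_erase hx)
        simp [hF, hx1, hx2]
    rw [hPΛ, hPΛ'] at hsq
    rw [hFΛ, hFΛ'] at hφeq
    have e1 : l ^ 4 * Q ^ 2 = Q' ^ 2 := by
      linear_combination l ^ 2 * hsq + Q' ^ 2 * (l * l⁻¹ + 1) * hinvc
    have e2 : Q ^ 2 = l ^ 4 * Q' ^ 2 := by
      linear_combination l ^ 2 * hφeq - Q ^ 2 * (l * l⁻¹ + 1) * hinvc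
    have hc : (l ^ 8 - 1) * Q ^ 2 = 0 := by linear_combination l ^ 4 * e1 - e2
    have h8 : l ^ 8 = 1 := by
      rcases mul_eq_zero.mp hc with h | h
      · linarith
      · exact absurd h (pow_ne_zero _ hQ0)
    rcases aux_pow8 h8 with h | h
    · exact hl1.1 h
    · exact hl1.2 h
  · have hFΛ' : ∏ x ∈ Λ', F x = ∏ x ∈ Λ', x := by
      refine Finset.prod_congr rfl fun x hx => ?_
      have hx1 : x ≠ l := fun h => hlΛ' (h ▸ hx)
      have hx2 : x ≠ l⁻¹ := fun h => hli' (h ▸ hx)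
      simp [hF, hx1, hx2]
    rw [hPΛ] at hsq
    rw [hFΛ, hFΛ'] at hφeq
    have hc : (l ^ 4 - 1) * Q ^ 2 = 0 := by
      linear_combination l ^ 2 * hsq - l ^ 2 * hφeq + Q ^ 2 * (l * l⁻¹ + 1) * hinvc
    have h4 : l ^ 4 = 1 := by
      rcases mul_eq_zero.mp hc with h | h
      · linarith
      · exact absurd h (pow_ne_zero _ hQ0)
    have h8 : l ^ 8 = 1 := by linear_combination (l ^ 4 + 1) * h4
    rcases aux_pow8 h8 with h | h
    · exact hl1.1 h
    · exact hl1.2 h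
end

section
/- Fix an integer d ≥ 1 and let R̂_d be the set of all d-element subsets of E = {±1, …, ±d} containing no pair {i, −i} (there are 2^d such subsets). For J ⊆ {0, 1, …, d}, let Γ_d(J) be the directed graph with vertex set R̂_d and an arrow from A to B whenever #(A ∩ B) ∈ J. If J contains two consecutive integers ℓ̃ and ℓ̃ + 1 for some 0 ≤ ℓ̃ ≤ d − 1, then Γ_d(J) is mixing: there exists m ≥ 1 such that every ordered pair of vertices is joined by a directed path of length exactly m. -/
/-- The directed graph on `R̂_k` with arrows given by `Arrow` is mixing: there is `m ≥ 1` such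
that any ordered pair of vertices is joined by a directed path of length exactly `m`. -/
def GammaMixing (d k : ℕ) (Arrow : Finset ℤ → Finset ℤ → Prop) : Prop :=
  ∃ m : ℕ, 1 ≤ m ∧ ∀ A B : Finset ℤ, RhatP d k A → RhatP d k B →
    ∃ f : ℕ → Finset ℤ, f 0 = A ∧ f m = B ∧
      (∀ i ≤ m, RhatP d k (f i)) ∧ ∀ i < m, Arrow (f i) (f (i + 1))

namespace Stmt16

def flip (X S : Finset ℤ) : Finset ℤ := (X \ S) ∪ S.image (fun a => -a)

lemma neg_mem_Eset {d : ℕ} {a : ℤ} (h : a ∈ Eset d) : -a ∈ Eset d := by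
  simp only [Eset, Finset.mem_filter, Finset.mem_Icc] at h ⊢
  omega

lemma mem_flip {X S : Finset ℤ} {a : ℤ} :
    a ∈ flip X S ↔ (a ∈ X ∧ a ∉ S) ∨ -a ∈ S := by
  simp only [flip, Finset.mem_union, Finset.mem_sdiff, Finset.mem_image]
  constructor
  · rintro (h | ⟨s, hs, rfl⟩)
    · exact Or.inl h
    · exact Or.inr (by simpa using hs)
  · rintro (h | h)
    · exact Or.inl h
    · exact Or.inr ⟨-a, h, by ring⟩

lemma flip_empty (X : Finset ℤ) : flip X ∅ = X := by
  simp [flip]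

lemma flip_RhatP {d : ℕ} {X S : Finset ℤ} (hX : RhatP d d X) (hS : S ⊆ X) :
    RhatP d d (flip X S) := by
  obtain ⟨hXE, hXc, hXp⟩ := hX
  have hdisj : Disjoint (X \ S) (S.image (fun a => -a)) := by
    rw [Finset.disjoint_right]
    rintro a ha hb
    simp only [Finset.mem_image] at ha
    obtain ⟨s, hs, rfl⟩ := ha
    exact hXp s (hS hs) (Finset.mem_sdiff.mp hb).1
  refine ⟨?_, ?_, ?_⟩
  · intro a ha
    rcases Finset.mem_union.mp ha with h | h
    · exact hXE (Finset.mem_sdiff.mp h).1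
    · simp only [Finset.mem_image] at h
      obtain ⟨s, hs, rfl⟩ := h
      exact neg_mem_Eset (hXE (hS hs))
  · have hcS : S.card ≤ d := hXc ▸ Finset.card_le_card hS
    rw [flip, Finset.card_union_of_disjoint hdisj,
      Finset.card_image_of_injective _ neg_injective, Finset.card_sdiff_of_subset hS, hXc]
    omega
  · intro a ha hna
    rw [mem_flip] at ha hna
    rcases ha with ⟨haX, haS⟩ | ha <;> rcases hna with ⟨hnaX, hnaS⟩ | hna
    · exact hXp a haX hnaX
    · simp only [neg_neg] at hna; exact haS hna
    · exact hnaS ha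
    · exact hXp (-a) (hS ha) (hS hna)

lemma inter_flip_flip {d : ℕ} {X S T : Finset ℤ} (hX : RhatP d d X) (hS : S ⊆ X) (hT : T ⊆ X) :
    flip X S ∩ flip X T = (X \ (S ∪ T)) ∪ (S ∩ T).image (fun a => -a) := by
  obtain ⟨hXE, hXc, hXp⟩ := hX
  ext a
  simp only [Finset.mem_inter, mem_flip, Finset.mem_union, Finset.mem_sdiff,
    Finset.mem_image]
  constructor
  · rintro ⟨hS', hT'⟩
    rcases hS' with ⟨haX, haS⟩ | haS
    · rcases hT' with ⟨_, haT⟩ | haT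
      · exact Or.inl ⟨haX, fun h => h.elim haS haT⟩
      · exact absurd haX (by simpa using hXp (-a) (hT haT))
    · have haX : a ∉ X := fun h => hXp a h (hS haS)
      rcases hT' with ⟨haX', _⟩ | haT
      · exact absurd haX' haX
      · exact Or.inr ⟨-a, ⟨haS, haT⟩, by ring⟩
  · rintro (⟨haX, h⟩ | ⟨s, ⟨hsS, hsT⟩, rfl⟩)
    · exact ⟨Or.inl ⟨haX, fun hh => h (Or.inl hh)⟩, Or.inl ⟨haX, fun hh => h (Or.inr hh)⟩⟩
    · exact ⟨Or.inr (by simpa using hsS), Or.inr (by simpa using hsT)⟩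

lemma inter_flip_flip_card {d : ℕ} {X S T : Finset ℤ} (hX : RhatP d d X)
    (hS : S ⊆ X) (hT : T ⊆ X) :
    (flip X S ∩ flip X T).card + (S ∪ T).card = d + (S ∩ T).card := by
  have hXp := hX.2.2
  have hdisj : Disjoint (X \ (S ∪ T)) ((S ∩ T).image (fun a => -a)) := by
    rw [Finset.disjoint_right]
    rintro a ha hb
    simp only [Finset.mem_image] at ha
    obtain ⟨s, hs, rfl⟩ := ha
    exact hXp s (hS (Finset.mem_inter.mp hs).1) (Finset.mem_sdiff.mp hb).1
  have hUX : S ∪ T ⊆ X := Finset.union_subset hS hT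
  have hUc : (S ∪ T).card ≤ d := hX.2.1 ▸ Finset.card_le_card hUX
  rw [inter_flip_flip hX hS hT, Finset.card_union_of_disjoint hdisj,
    Finset.card_image_of_injective _ neg_injective, Finset.card_sdiff_of_subset hUX, hX.2.1]
  omega

lemma inter_flip_card {d : ℕ} {X T : Finset ℤ} (hX : RhatP d d X) (hT : T ⊆ X) :
    (X ∩ flip X T).card + T.card = d := by
  have := inter_flip_flip_card hX (Finset.empty_subset X) hT
  simpa [flip_empty] using this

lemma mem_or_neg_mem {d : ℕ} {X : Finset ℤ} (hX : RhatP d d X) {b : ℤ} (hb : b ∈ Eset d) :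
    b ∈ X ∨ -b ∈ X := by
  obtain ⟨hXE, hXc, hXp⟩ := hX
  have hinj : Set.InjOn Int.natAbs X := by
    intro a ha c hc h
    rcases Int.natAbs_eq_natAbs_iff.mp h with rfl | rfl
    · rfl
    · exact absurd ha (hXp c hc)
  have himg : X.image Int.natAbs = Finset.Icc 1 d := by
    apply Finset.eq_of_subset_of_card_le
    · intro n hn
      simp only [Finset.mem_image] at hn
      obtain ⟨a, ha, rfl⟩ := hn
      have := hXE ha
      simp only [Eset, Finset.mem_filter, Finset.mem_Icc] at this
      simp only [Finset.mem_Icc]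
      omega
    · rw [Finset.card_image_of_injOn hinj, hXc, Nat.card_Icc]
      omega
  have hbmem : b.natAbs ∈ X.image Int.natAbs := by
    rw [himg]
    simp only [Eset, Finset.mem_filter, Finset.mem_Icc] at hb
    simp only [Finset.mem_Icc]
    omega
  simp only [Finset.mem_image] at hbmem
  obtain ⟨a, ha, hab⟩ := hbmem
  rcases Int.natAbs_eq_natAbs_iff.mp hab with rfl | rfl
  · exact Or.inl ha
  · exact Or.inr (by simpa using ha)

lemma eq_flip_sdiff {d : ℕ} {X X' : Finset ℤ} (hX : RhatP d d X) (hX' : RhatP d d X') :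
    X' = flip X (X \ X') := by
  have himg : (X \ X').image (fun a => -a) = X' \ X := by
    ext a
    simp only [Finset.mem_image, Finset.mem_sdiff]
    constructor
    · rintro ⟨s, ⟨hsX, hsX'⟩, rfl⟩
      constructor
      · rcases mem_or_neg_mem hX' (neg_mem_Eset (hX.1 hsX)) with h | h
        · exact h
        · simp only [neg_neg] at h; exact absurd h hsX'
      · exact fun h => hX.2.2 s hsX (by simpa using h)
    · rintro ⟨haX', haX⟩
      refine ⟨-a, ⟨?_, fun h => hX'.2.2 a haX' (by simpa using h)⟩, by ring⟩
      rcases mem_or_neg_mem hX (hX'.1 haX') with h | h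
      · exact absurd h haX
      · exact h
  rw [flip, Finset.sdiff_sdiff_self_left, himg, Finset.inter_comm,
    Finset.union_comm, Finset.sdiff_union_inter]


lemma twostep {d l : ℕ} {J : Set ℕ} (hl : l + 1 ≤ d) (h0 : l ∈ J) (h1 : l + 1 ∈ J)
    {X X' : Finset ℤ} (hX : RhatP d d X) (hX' : RhatP d d X')
    (h2 : (X \ X').card ≤ 2) :
    ∃ Z, RhatP d d Z ∧ (X ∩ Z).card ∈ J ∧ (Z ∩ X').card ∈ J := by
  set w : ℕ := d - l - 1 with hw
  have hwd : w + l + 1 = d := by omega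
  set T : Finset ℤ := X \ X' with hTdef
  have hT : T ⊆ X := Finset.sdiff_subset
  have hX'T : X' = flip X T := eq_flip_sdiff hX hX'
  interval_cases h : T.card
  · -- T = ∅, X' = X
    have hTe : T = ∅ := Finset.card_eq_zero.mp h
    obtain ⟨S, hSX, hScard⟩ := Finset.exists_subset_card_eq (n := w) (by rw [hX.2.1]; omega)
    refine ⟨flip X S, flip_RhatP hX hSX, ?_, ?_⟩
    · have := inter_flip_card hX hSX
      have : (X ∩ flip X S).card = l + 1 := by omega
      rwa [this]
    · have hXX : X' = X := by rw [hX'T, hTe, flip_empty]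
      rw [hXX, Finset.inter_comm]
      have := inter_flip_card hX hSX
      have h' : (X ∩ flip X S).card = l + 1 := by omega
      rwa [h']
  · -- |T| = 1
    obtain ⟨S, hTS, hSX, hScard⟩ := Finset.exists_subsuperset_card_eq hT
      (by omega) (by rw [hX.2.1]; omega : w + 1 ≤ X.card)
    refine ⟨flip X S, flip_RhatP hX hSX, ?_, ?_⟩
    · have := inter_flip_card hX hSX
      have h' : (X ∩ flip X S).card = l := by omega
      rwa [h']
    · rw [hX'T]
      have := inter_flip_flip_card hX hSX hT
      rw [Finset.union_eq_left.mpr hTS, Finset.inter_eq_right.mpr hTS] at this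
      have h' : (flip X S ∩ flip X T).card = l + 1 := by omega
      rwa [h']
  · -- |T| = 2
    obtain ⟨a, b, hab, hTab⟩ := Finset.card_eq_two.mp h
    have haX : a ∈ X := hT (by rw [hTab]; simp)
    have hbX : b ∈ X := hT (by rw [hTab]; simp)
    have hd2 : 2 ≤ d := by
      have := Finset.card_le_card hT
      rw [h, hX.2.1] at this; omega
    set s : ℕ := if w = 0 then 1 else w with hs
    have hs1 : 1 ≤ s := by rw [hs]; split <;> omega
    have hsd : s ≤ d - 1 := by rw [hs]; split <;> omega
    have hsw : s = w ∨ s = w + 1 := by rw [hs]; split <;> omega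
    have haXb : {a} ⊆ X \ {b} := by
      intro x hx
      simp only [Finset.mem_singleton] at hx
      subst hx
      simp [Finset.mem_sdiff, haX, hab]
    obtain ⟨S, haS, hSXb, hScard⟩ := Finset.exists_subsuperset_card_eq haXb
      (by simpa using hs1)
      (by rw [Finset.card_sdiff_of_subset (by simpa using hbX), hX.2.1]; simpa using hsd)
    have hSX : S ⊆ X := hSXb.trans Finset.sdiff_subset
    have haS' : a ∈ S := haS (by simp)
    have hbS : b ∉ S := fun hb => (Finset.mem_sdiff.mp (hSXb hb)).2 (by simp)
    have hST_union : (S ∪ T).card = s + 1 := by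
      have : S ∪ T = insert b S := by
        rw [hTab]
        ext x
        simp only [Finset.mem_union, Finset.mem_insert, Finset.mem_singleton]
        constructor
        · rintro (hx | hx | hx)
          · exact Or.inr hx
          · exact Or.inr (hx ▸ haS')
          · exact Or.inl hx
        · rintro (rfl | hx)
          · exact Or.inr (Or.inr rfl)
          · exact Or.inl hx
      rw [this, Finset.card_insert_of_notMem hbS, hScard]
    have hST_inter : (S ∩ T).card = 1 := by
      have : S ∩ T = {a} := by
        ext x
        simp only [Finset.mem_inter, hTab, Finset.mem_insert, Finset.mem_singleton]
        constructor
        · rintro ⟨hxS, rfl | rfl⟩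
          · rfl
          · exact absurd hxS hbS
        · rintro rfl
          exact ⟨haS', Or.inl rfl⟩
      rw [this, Finset.card_singleton]
    have hdsJ : d - s ∈ J := by
      rcases hsw with h' | h'
      · have : d - s = l + 1 := by omega
        rwa [this]
      · have : d - s = l := by omega
        rwa [this]
    refine ⟨flip X S, flip_RhatP hX hSX, ?_, ?_⟩
    · have := inter_flip_card hX hSX
      have h' : (X ∩ flip X S).card = d - s := by omega
      rwa [h']
    · rw [hX'T]
      have := inter_flip_flip_card hX hSX hT
      rw [hST_union, hST_inter] at this
      have h' : (flip X S ∩ flip X T).card = d - s := by omega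
      rwa [h']

lemma path {d l : ℕ} {J : Set ℕ} (hl : l + 1 ≤ d) (h0 : l ∈ J) (h1 : l + 1 ∈ J) :
    ∀ t : ℕ, ∀ A B : Finset ℤ, RhatP d d A → RhatP d d B → (A \ B).card ≤ 2 * t →
    ∃ f : ℕ → Finset ℤ, f 0 = A ∧ f (2 * t) = B ∧
      (∀ i ≤ 2 * t, RhatP d d (f i)) ∧ ∀ i < 2 * t, (f i ∩ f (i + 1)).card ∈ J := by
  intro t
  induction t with
  | zero =>
    intro A B hA hB hcard
    have hAB : A = B := by
      have hsub : A ⊆ B := by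
        have : A \ B = ∅ := Finset.card_eq_zero.mp (by omega)
        rwa [Finset.sdiff_eq_empty_iff_subset] at this
      exact Finset.eq_of_subset_of_card_le hsub (by rw [hA.2.1, hB.2.1])
    exact ⟨fun _ => A, rfl, by simpa using hAB, fun i _ => hA, fun i hi => by omega⟩
  | succ t ih =>
    intro A B hA hB hcard
    obtain ⟨T0, hT0sub, hT0card⟩ := Finset.exists_subset_card_eq
      (n := min (A \ B).card 2) (min_le_left _ _)
    have hT0A : T0 ⊆ A := hT0sub.trans Finset.sdiff_subset
    set A' : Finset ℤ := flip A T0 with hA'def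
    have hA' : RhatP d d A' := flip_RhatP hA hT0A
    -- A \ A' ⊆ T0
    have hAA' : (A \ A').card ≤ 2 := by
      have hsub : A \ A' ⊆ T0 := by
        intro x hx
        obtain ⟨hxA, hxA'⟩ := Finset.mem_sdiff.mp hx
        by_contra hxT
        exact hxA' (mem_flip.mpr (Or.inl ⟨hxA, hxT⟩))
      calc (A \ A').card ≤ T0.card := Finset.card_le_card hsub
        _ ≤ 2 := by omega
    obtain ⟨Z, hZ, hAZ, hZA'⟩ := twostep hl h0 h1 hA hA' hAA'
    -- (A' \ B).card ≤ 2 * t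
    have hA'B : (A' \ B).card ≤ 2 * t := by
      have hsub : A' \ B ⊆ (A \ B) \ T0 := by
        intro x hx
        obtain ⟨hxA', hxB⟩ := Finset.mem_sdiff.mp hx
        rcases mem_flip.mp hxA' with ⟨hxA, hxT⟩ | hxT
        · exact Finset.mem_sdiff.mpr ⟨Finset.mem_sdiff.mpr ⟨hxA, hxB⟩, hxT⟩
        · exfalso
          have hnx : -x ∈ A \ B := hT0sub hxT
          obtain ⟨hnxA, hnxB⟩ := Finset.mem_sdiff.mp hnx
          rcases mem_or_neg_mem hB (hA.1 hnxA) with h' | h'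
          · exact hnxB h'
          · simp only [neg_neg] at h'
            exact hxB h'
      have := Finset.card_le_card hsub
      rw [Finset.card_sdiff_of_subset hT0sub] at this
      omega
    obtain ⟨g, hg0, hgend, hgvalid, hgarrow⟩ := ih A' B hA' hB hA'B
    refine ⟨fun i => if i = 0 then A else if i = 1 then Z else g (i - 2), by simp, ?_, ?_, ?_⟩
    · have h2t : 2 * (t + 1) = 2 * t + 2 := by ring
      rw [h2t]
      simp only [Nat.add_eq_zero, and_false, if_false]
      rw [if_neg (by omega)]
      simpa using hgend
    · intro i hi
      rcases Nat.lt_or_ge i 1 with h' | h'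
      · interval_cases i
        simpa using hA
      · rcases Nat.lt_or_ge i 2 with h'' | h''
        · interval_cases i
          simpa using hZ
        · simp only [if_neg (show i ≠ 0 by omega), if_neg (show i ≠ 1 by omega)]
          exact hgvalid (i - 2) (by omega)
    · intro i hi
      rcases Nat.lt_or_ge i 1 with h' | h'
      · interval_cases i
        simpa using hAZ
      · rcases Nat.lt_or_ge i 2 with h'' | h''
        · interval_cases i
          simp only [if_neg (by omega : (1:ℕ) ≠ 0), if_pos rfl, if_neg (by omega : (2:ℕ) ≠ 0),
            if_neg (by omega : (2:ℕ) ≠ 1)]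
          have : g (2 - 2) = A' := by simpa using hg0
          rwa [this]
        · simp only [if_neg (show i ≠ 0 by omega), if_neg (show i ≠ 1 by omega),
            if_neg (show i + 1 ≠ 0 by omega), if_neg (show i + 1 ≠ 1 by omega)]
          have hi' : i + 1 - 2 = (i - 2) + 1 := by omega
          rw [hi']
          exact hgarrow (i - 2) (by omega)

end Stmt16

/-- If `J ⊆ {0, …, d}` contains two consecutive integers `ℓ̃`, `ℓ̃ + 1` with
`ℓ̃ ≤ d − 1`, then the graph `Γ_d(J)` on `R̂_d` (arrow `A → B` iff `#(A ∩ B) ∈ J`) is mixing. -/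
theorem stmt_16 (d : ℕ) (hd : 1 ≤ d) (J : Set ℕ) (hJ : ∀ j ∈ J, j ≤ d)
    (l : ℕ) (hl : l + 1 ≤ d) (h0 : l ∈ J) (h1 : l + 1 ∈ J) :
    GammaMixing d d (fun A B => (A ∩ B).card ∈ J) := by
  refine ⟨2 * d, by omega, fun A B hA hB => ?_⟩
  have hcard : (A \ B).card ≤ 2 * d := by
    have := Finset.card_le_card (Finset.sdiff_subset (s := A) (t := B))
    rw [hA.2.1] at this
    omega
  obtain ⟨f, h1', h2', h3', h4'⟩ := Stmt16.path hl h0 h1 d A B hA hB hcard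
  exact ⟨f, h1', h2', h3', h4'⟩
end

section
/- Let V be a 6-dimensional real vector space spanned by vectors τ_i, σ_i, ζ_i (i ∈ ℤ/3ℤ) subject exactly to the relations τ₀+τ₁+τ₂ = 0, σ₀+σ₁+σ₂ = 0, ζ₀+ζ₁+ζ₂ = 0 (so that {τ₁, τ₂, σ₁, σ₂, ζ₁, ζ₂} is a basis). Define linear endomorphisms S and T of V by S(τ_i) = −τ_{i+1}, S(σ_i) = σ_i + ζ_{i−1}, S(ζ_i) = ζ_{i+1}, and T(τ_i) = −τ_{i−1}, T(σ_i) = σ_{i−1}, T(ζ_i) = ζ_i + σ_{i+1} (indices modulo 3). Then S and T are well-defined invertible linear maps, both preserve the direct sum decomposition V = span{τ_i} ⊕ span{σ_i, ζ_i}, both map the 24-element set R = {±σ_i, ±ζ_i, ±(σ_i + ζ_{i−1}), ±(σ_i − ζ_{i+1}) : i ∈ ℤ/3ℤ} bijectively onto itself, and the subgroup of GL(V) generated by S and T is finite. -/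
section OqAux
variable {V : Type*} [AddCommGroup V] [Module ℝ V]

/-- coordinate map for the root system -/
def oqM (σ ζ : ZMod 3 → V) (q : Fin 4 → ℤ) : V :=
  (q 0 : ℝ) • σ 1 + (q 1 : ℝ) • σ 2 + (q 2 : ℝ) • ζ 1 + (q 3 : ℝ) • ζ 2

end OqAux

/-- the 24 coordinate vectors of the `D₄` root system -/
def oqR0 : Finset (Fin 4 → ℤ) :=
  { ![-1,-1,0,0], ![1,0,0,0], ![0,1,0,0],
    ![1,1,0,0], ![-1,0,0,0], ![0,-1,0,0],
    ![0,0,-1,-1], ![0,0,1,0], ![0,0,0,1],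
    ![0,0,1,1], ![0,0,-1,0], ![0,0,0,-1],
    ![-1,-1,0,1], ![1,0,-1,-1], ![0,1,1,0],
    ![1,1,0,-1], ![-1,0,1,1], ![0,-1,-1,0],
    ![-1,-1,-1,0], ![1,0,0,-1], ![0,1,1,1],
    ![1,1,1,0], ![-1,0,0,1], ![0,-1,-1,-1] }


/-- On the 6-dimensional space spanned by `τ_i, σ_i, ζ_i` (`i ∈ ℤ/3ℤ`)
subject exactly to the relations `Στ_i = Σσ_i = Σζ_i = 0`, the formulas for `S` and `T` define
invertible linear maps which preserve the decomposition `span{τ} ⊕ span{σ, ζ}`, map the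
24-element `D₄` root system `R` bijectively onto itself, and generate a finite subgroup of
`GL(V)`. -/
theorem stmt_18 (V : Type*) [AddCommGroup V] [Module ℝ V]
    (τ σ ζ : ZMod 3 → V)
    (hτ : τ 0 + τ 1 + τ 2 = 0) (hσ : σ 0 + σ 1 + σ 2 = 0) (hζ : ζ 0 + ζ 1 + ζ 2 = 0)
    (hindep : LinearIndependent ℝ ![τ 1, τ 2, σ 1, σ 2, ζ 1, ζ 2])
    (hspan : Submodule.span ℝ {τ 1, τ 2, σ 1, σ 2, ζ 1, ζ 2} = ⊤)
    (R : Set V)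
    (hR : R = {v : V | ∃ i : ZMod 3,
      v = σ i ∨ v = -σ i ∨ v = ζ i ∨ v = -ζ i ∨
      v = σ i + ζ (i - 1) ∨ v = -(σ i + ζ (i - 1)) ∨
      v = σ i - ζ (i + 1) ∨ v = -(σ i - ζ (i + 1))}) :
    ∃ S T : V ≃ₗ[ℝ] V,
      (∀ i : ZMod 3, S (τ i) = -τ (i + 1) ∧ S (σ i) = σ i + ζ (i - 1) ∧ S (ζ i) = ζ (i + 1) ∧
        T (τ i) = -τ (i - 1) ∧ T (σ i) = σ (i - 1) ∧ T (ζ i) = ζ i + σ (i + 1)) ∧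
      Submodule.span ℝ (Set.range τ) ⊓ Submodule.span ℝ (Set.range σ ∪ Set.range ζ) = ⊥ ∧
      Submodule.span ℝ (Set.range τ) ⊔ Submodule.span ℝ (Set.range σ ∪ Set.range ζ) = ⊤ ∧
      (∀ x ∈ Submodule.span ℝ (Set.range τ),
        S x ∈ Submodule.span ℝ (Set.range τ) ∧ T x ∈ Submodule.span ℝ (Set.range τ)) ∧
      (∀ x ∈ Submodule.span ℝ (Set.range σ ∪ Set.range ζ),
        S x ∈ Submodule.span ℝ (Set.range σ ∪ Set.range ζ) ∧
          T x ∈ Submodule.span ℝ (Set.range σ ∪ Set.range ζ)) ∧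
      R.ncard = 24 ∧
      Set.BijOn (fun x => S x) R R ∧ Set.BijOn (fun x => T x) R R ∧
      Set.Finite ((Subgroup.closure {S, T} : Subgroup (V ≃ₗ[ℝ] V)) : Set (V ≃ₗ[ℝ] V)) := by
  have hτ0 : τ 0 = -τ 1 - τ 2 := by linear_combination (norm := module) hτ
  have hσ0 : σ 0 = -σ 1 - σ 2 := by linear_combination (norm := module) hσ
  have hζ0 : ζ 0 = -ζ 1 - ζ 2 := by linear_combination (norm := module) hζ
  have hz3 : ∀ i : ZMod 3, i = 0 ∨ i = 1 ∨ i = 2 := by decide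
  have hsr : ⊤ ≤ Submodule.span ℝ (Set.range ![τ 1, τ 2, σ 1, σ 2, ζ 1, ζ 2]) := by
    rw [show Set.range ![τ 1, τ 2, σ 1, σ 2, ζ 1, ζ 2] = {τ 1, τ 2, σ 1, σ 2, ζ 1, ζ 2} by
      ext x; simp [Matrix.range_cons, Matrix.range_empty]; tauto]
    exact hspan.ge
  set B : Module.Basis (Fin 6) ℝ V := Module.Basis.mk hindep hsr with hBdef
  have key : ∀ (w : Fin 6 → V) (k : Fin 6),
      (B.constr ℝ w) (![τ 1, τ 2, σ 1, σ 2, ζ 1, ζ 2] k) = w k := by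
    intro w k
    conv_lhs => rw [← Module.Basis.mk_apply hindep hsr k]
    exact B.constr_basis ℝ w k
  set wS : Fin 6 → V := ![-τ 2, τ 1 + τ 2, σ 1 - ζ 1 - ζ 2, σ 2 + ζ 1, ζ 2, -ζ 1 - ζ 2] with hwS
  set wSi : Fin 6 → V := ![τ 1 + τ 2, -τ 1, σ 1 - ζ 2, σ 2 + ζ 1 + ζ 2, -ζ 1 - ζ 2, ζ 1] with hwSi
  set wT : Fin 6 → V := ![τ 1 + τ 2, -τ 1, -σ 1 - σ 2, σ 1, ζ 1 + σ 2, ζ 2 - σ 1 - σ 2] with hwT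
  set wTi : Fin 6 → V := ![-τ 2, τ 1 + τ 2, σ 2, -σ 1 - σ 2, ζ 1 + σ 1 + σ 2, ζ 2 - σ 1] with hwTi
  set Smap := B.constr ℝ wS with hSmap
  set Simap := B.constr ℝ wSi with hSimap
  set Tmap := B.constr ℝ wT with hTmap
  set Timap := B.constr ℝ wTi with hTimap
  have S0 : Smap (τ 1) = -τ 2 := key wS 0
  have S1 : Smap (τ 2) = τ 1 + τ 2 := key wS 1
  have S2 : Smap (σ 1) = σ 1 - ζ 1 - ζ 2 := key wS 2
  have S3 : Smap (σ 2) = σ 2 + ζ 1 := key wS 3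
  have S4 : Smap (ζ 1) = ζ 2 := key wS 4
  have S5 : Smap (ζ 2) = -ζ 1 - ζ 2 := key wS 5
  have Si0 : Simap (τ 1) = τ 1 + τ 2 := key wSi 0
  have Si1 : Simap (τ 2) = -τ 1 := key wSi 1
  have Si2 : Simap (σ 1) = σ 1 - ζ 2 := key wSi 2
  have Si3 : Simap (σ 2) = σ 2 + ζ 1 + ζ 2 := key wSi 3
  have Si4 : Simap (ζ 1) = -ζ 1 - ζ 2 := key wSi 4
  have Si5 : Simap (ζ 2) = ζ 1 := key wSi 5
  have T0 : Tmap (τ 1) = τ 1 + τ 2 := key wT 0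
  have T1 : Tmap (τ 2) = -τ 1 := key wT 1
  have T2 : Tmap (σ 1) = -σ 1 - σ 2 := key wT 2
  have T3 : Tmap (σ 2) = σ 1 := key wT 3
  have T4 : Tmap (ζ 1) = ζ 1 + σ 2 := key wT 4
  have T5 : Tmap (ζ 2) = ζ 2 - σ 1 - σ 2 := key wT 5
  have Ti0 : Timap (τ 1) = -τ 2 := key wTi 0
  have Ti1 : Timap (τ 2) = τ 1 + τ 2 := key wTi 1
  have Ti2 : Timap (σ 1) = σ 2 := key wTi 2
  have Ti3 : Timap (σ 2) = -σ 1 - σ 2 := key wTi 3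
  have Ti4 : Timap (ζ 1) = ζ 1 + σ 1 + σ 2 := key wTi 4
  have Ti5 : Timap (ζ 2) = ζ 2 - σ 1 := key wTi 5
  have compSimp : ∀ (f g : V →ₗ[ℝ] V), (∀ x ∈ ({τ 1, τ 2, σ 1, σ 2, ζ 1, ζ 2} : Set V),
      f (g x) = x) → f.comp g = LinearMap.id := by
    intro f g h
    apply LinearMap.ext_on hspan
    intro x hx
    exact h x hx
  have mem6 : ∀ x, x = τ 1 ∨ x = τ 2 ∨ x = σ 1 ∨ x = σ 2 ∨ x = ζ 1 ∨ x = ζ 2 →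
      x ∈ ({τ 1, τ 2, σ 1, σ 2, ζ 1, ζ 2} : Set V) := by
    intro x h
    simp only [Set.mem_insert_iff, Set.mem_singleton_iff]
    exact h
  have hSS : Smap.comp Simap = LinearMap.id := by
    apply compSimp
    intro x hx
    simp only [Set.mem_insert_iff, Set.mem_singleton_iff] at hx
    rcases hx with rfl|rfl|rfl|rfl|rfl|rfl <;>
      simp only [LinearMap.comp_apply, LinearMap.id_apply, map_add, map_sub, map_neg,
        S0, S1, S2, S3, S4, S5, Si0, Si1, Si2, Si3, Si4, Si5] <;> abel
  have hSiS : Simap.comp Smap = LinearMap.id := by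
    apply compSimp
    intro x hx
    simp only [Set.mem_insert_iff, Set.mem_singleton_iff] at hx
    rcases hx with rfl|rfl|rfl|rfl|rfl|rfl <;>
      simp only [LinearMap.comp_apply, LinearMap.id_apply, map_add, map_sub, map_neg,
        S0, S1, S2, S3, S4, S5, Si0, Si1, Si2, Si3, Si4, Si5] <;> abel
  have hTT : Tmap.comp Timap = LinearMap.id := by
    apply compSimp
    intro x hx
    simp only [Set.mem_insert_iff, Set.mem_singleton_iff] at hx
    rcases hx with rfl|rfl|rfl|rfl|rfl|rfl <;>
      simp only [LinearMap.comp_apply, LinearMap.id_apply, map_add, map_sub, map_neg,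
        T0, T1, T2, T3, T4, T5, Ti0, Ti1, Ti2, Ti3, Ti4, Ti5] <;> abel
  have hTiT : Timap.comp Tmap = LinearMap.id := by
    apply compSimp
    intro x hx
    simp only [Set.mem_insert_iff, Set.mem_singleton_iff] at hx
    rcases hx with rfl|rfl|rfl|rfl|rfl|rfl <;>
      simp only [LinearMap.comp_apply, LinearMap.id_apply, map_add, map_sub, map_neg,
        T0, T1, T2, T3, T4, T5, Ti0, Ti1, Ti2, Ti3, Ti4, Ti5] <;> abel
  set S : V ≃ₗ[ℝ] V := LinearEquiv.ofLinear Smap Simap hSS hSiS with hSdef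
  set T : V ≃ₗ[ℝ] V := LinearEquiv.ofLinear Tmap Timap hTT hTiT with hTdef
  have hSapp : ∀ x, S x = Smap x := fun _ => rfl
  have hTapp : ∀ x, T x = Tmap x := fun _ => rfl
  have e01 : (0+1:ZMod 3) = 1 := by decide
  have e12 : (1+1:ZMod 3) = 2 := by decide
  have e20 : (2+1:ZMod 3) = 0 := by decide
  have d02 : (0-1:ZMod 3) = 2 := by decide
  have d10 : (1-1:ZMod 3) = 0 := by decide
  have d21 : (2-1:ZMod 3) = 1 := by decide
  have hiA : ∀ i : ZMod 3, i - 1 + 1 = i := by decide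
  have hiB : ∀ i : ZMod 3, i + 1 - 1 = i := by decide
  have hiC : ∀ i : ZMod 3, i + 1 + 1 = i - 1 := by decide
  have hiD : ∀ i : ZMod 3, i - 1 - 1 = i + 1 := by decide
  have hσc : ∀ i : ZMod 3, σ (i-1) + σ i + σ (i+1) = 0 := by
    intro i; rcases hz3 i with rfl|rfl|rfl <;>
      simp only [e01, e12, e20, d02, d10, d21] <;> linear_combination (norm := module) hσ
  have hζc : ∀ i : ZMod 3, ζ (i-1) + ζ i + ζ (i+1) = 0 := by
    intro i; rcases hz3 i with rfl|rfl|rfl <;>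
      simp only [e01, e12, e20, d02, d10, d21] <;> linear_combination (norm := module) hζ
  have hSτ : ∀ i : ZMod 3, S (τ i) = -τ (i + 1) := by
    intro i; rcases hz3 i with rfl|rfl|rfl <;>
      simp only [hSapp, e01, e12, e20, hτ0, map_add, map_sub, map_neg, S0, S1] <;> abel
  have hSσ : ∀ i : ZMod 3, S (σ i) = σ i + ζ (i - 1) := by
    intro i; rcases hz3 i with rfl|rfl|rfl <;>
      simp only [hSapp, d02, d10, d21, hσ0, hζ0, map_add, map_sub, map_neg, S2, S3] <;> abel
  have hSζ : ∀ i : ZMod 3, S (ζ i) = ζ (i + 1) := by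
    intro i; rcases hz3 i with rfl|rfl|rfl <;>
      simp only [hSapp, e01, e12, e20, hζ0, map_add, map_sub, map_neg, S4, S5] <;> abel
  have hTτ : ∀ i : ZMod 3, T (τ i) = -τ (i - 1) := by
    intro i; rcases hz3 i with rfl|rfl|rfl <;>
      simp only [hTapp, d02, d10, d21, hτ0, map_add, map_sub, map_neg, T0, T1] <;> abel
  have hTσ : ∀ i : ZMod 3, T (σ i) = σ (i - 1) := by
    intro i; rcases hz3 i with rfl|rfl|rfl <;>
      simp only [hTapp, d02, d10, d21, hσ0, map_add, map_sub, map_neg, T2, T3] <;> abel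
  have hTζ : ∀ i : ZMod 3, T (ζ i) = ζ i + σ (i + 1) := by
    intro i; rcases hz3 i with rfl|rfl|rfl <;>
      simp only [hTapp, e01, e12, e20, hσ0, hζ0, map_add, map_sub, map_neg, T4, T5] <;> abel
  -- spans
  set Pτ := Submodule.span ℝ (Set.range τ) with hPτ
  set Pσζ := Submodule.span ℝ (Set.range σ ∪ Set.range ζ) with hPσζ
  have memτ : ∀ i : ZMod 3, τ i ∈ Pτ := fun i => Submodule.subset_span ⟨i, rfl⟩
  have memσ : ∀ i : ZMod 3, σ i ∈ Pσζ := fun i => Submodule.subset_span (Or.inl ⟨i, rfl⟩)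
  have memζ : ∀ i : ZMod 3, ζ i ∈ Pσζ := fun i => Submodule.subset_span (Or.inr ⟨i, rfl⟩)
  have hPτ' : Pτ = Submodule.span ℝ (![τ 1, τ 2, σ 1, σ 2, ζ 1, ζ 2] '' {0, 1}) := by
    rw [show (![τ 1, τ 2, σ 1, σ 2, ζ 1, ζ 2] '' {0, 1} : Set V) = {τ 1, τ 2} by
      simp [Set.image_insert_eq]]
    apply le_antisymm
    · rw [hPτ, Submodule.span_le]
      rintro x ⟨i, rfl⟩
      rcases hz3 i with rfl|rfl|rfl
      · rw [hτ0]
        exact sub_mem (neg_mem (Submodule.subset_span (by simp)))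
          (Submodule.subset_span (by simp))
      · exact Submodule.subset_span (by simp)
      · exact Submodule.subset_span (by simp)
    · apply Submodule.span_le.2
      rintro x hx
      rcases hx with rfl | rfl
      exacts [memτ 1, memτ 2]
  have hPσζ' : Pσζ = Submodule.span ℝ (![τ 1, τ 2, σ 1, σ 2, ζ 1, ζ 2] '' {2, 3, 4, 5}) := by
    rw [show (![τ 1, τ 2, σ 1, σ 2, ζ 1, ζ 2] '' {2, 3, 4, 5} : Set V) = {σ 1, σ 2, ζ 1, ζ 2} by
      simp [Set.image_insert_eq, show ![τ 1, τ 2, σ 1, σ 2, ζ 1, ζ 2] 5 = ζ 2 from rfl]]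
    apply le_antisymm
    · rw [hPσζ, Submodule.span_le]
      rintro x (⟨i, rfl⟩ | ⟨i, rfl⟩)
      · rcases hz3 i with rfl|rfl|rfl
        · rw [hσ0]
          exact sub_mem (neg_mem (Submodule.subset_span (by simp)))
            (Submodule.subset_span (by simp))
        · exact Submodule.subset_span (by simp)
        · exact Submodule.subset_span (by simp)
      · rcases hz3 i with rfl|rfl|rfl
        · rw [hζ0]
          exact sub_mem (neg_mem (Submodule.subset_span (by simp)))
            (Submodule.subset_span (by simp))
        · exact Submodule.subset_span (by simp)
        · exact Submodule.subset_span (by simp)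
    · apply Submodule.span_le.2
      rintro x hx
      simp only [Set.mem_insert_iff, Set.mem_singleton_iff] at hx
      rcases hx with rfl | rfl | rfl | rfl
      exacts [memσ 1, memσ 2, memζ 1, memζ 2]
  have hdisj : Disjoint ({0,1} : Set (Fin 6)) {2,3,4,5} := by
    rw [Set.disjoint_left]
    rintro a ha ha'
    simp only [Set.mem_insert_iff, Set.mem_singleton_iff] at ha ha'
    rcases ha with rfl|rfl <;> rcases ha' with h|h|h|h <;> exact absurd h (by decide)
  have hinf : Pτ ⊓ Pσζ = ⊥ := by
    rw [hPτ', hPσζ']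
    exact disjoint_iff.mp (hindep.disjoint_span_image hdisj)
  have hsup : Pτ ⊔ Pσζ = ⊤ := by
    refine le_antisymm le_top ?_
    rw [← hspan]
    apply Submodule.span_le.2
    rintro x hx
    simp only [Set.mem_insert_iff, Set.mem_singleton_iff] at hx
    rcases hx with rfl|rfl|rfl|rfl|rfl|rfl
    exacts [Submodule.mem_sup_left (memτ 1), Submodule.mem_sup_left (memτ 2),
      Submodule.mem_sup_right (memσ 1), Submodule.mem_sup_right (memσ 2),
      Submodule.mem_sup_right (memζ 1), Submodule.mem_sup_right (memζ 2)]
  -- preservation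
  have generic : ∀ (g : V →ₗ[ℝ] V) (s : Set V) (p : Submodule ℝ V), (∀ y ∈ s, g y ∈ p) →
      ∀ x ∈ Submodule.span ℝ s, g x ∈ p := by
    intro g s p h x hx
    have hle : Submodule.span ℝ s ≤ p.comap g :=
      Submodule.span_le.2 (fun y hy => Submodule.mem_comap.mpr (h y hy))
    exact Submodule.mem_comap.mp (hle hx)
  have presτ : ∀ x ∈ Pτ, S x ∈ Pτ ∧ T x ∈ Pτ := by
    intro x hx
    constructor
    · refine generic S.toLinearMap (Set.range τ) Pτ ?_ x hx
      rintro y ⟨i, rfl⟩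
      show S (τ i) ∈ Pτ
      rw [hSτ i]; exact neg_mem (memτ (i+1))
    · refine generic T.toLinearMap (Set.range τ) Pτ ?_ x hx
      rintro y ⟨i, rfl⟩
      show T (τ i) ∈ Pτ
      rw [hTτ i]; exact neg_mem (memτ (i-1))
  have presσζ : ∀ x ∈ Pσζ, S x ∈ Pσζ ∧ T x ∈ Pσζ := by
    intro x hx
    constructor
    · refine generic S.toLinearMap (Set.range σ ∪ Set.range ζ) Pσζ ?_ x hx
      rintro y (⟨i, rfl⟩ | ⟨i, rfl⟩)
      · show S (σ i) ∈ Pσζ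
        rw [hSσ i]; exact add_mem (memσ i) (memζ (i-1))
      · show S (ζ i) ∈ Pσζ
        rw [hSζ i]; exact memζ (i+1)
    · refine generic T.toLinearMap (Set.range σ ∪ Set.range ζ) Pσζ ?_ x hx
      rintro y (⟨i, rfl⟩ | ⟨i, rfl⟩)
      · show T (σ i) ∈ Pσζ
        rw [hTσ i]; exact memσ (i-1)
      · show T (ζ i) ∈ Pσζ
        rw [hTζ i]; exact add_mem (memζ i) (memσ (i+1))
  have E1 : oqM σ ζ ![-1,-1,0,0] = σ 0 := by
    norm_num [oqM, hσ0, hζ0, Matrix.cons_val_two, Matrix.cons_val_three, Matrix.vecHead, Matrix.vecTail]; try module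
  have E2 : oqM σ ζ ![1,0,0,0] = σ 1 := by
    norm_num [oqM, hσ0, hζ0, Matrix.cons_val_two, Matrix.cons_val_three, Matrix.vecHead, Matrix.vecTail]; try module
  have E3 : oqM σ ζ ![0,1,0,0] = σ 2 := by
    norm_num [oqM, hσ0, hζ0, Matrix.cons_val_two, Matrix.cons_val_three, Matrix.vecHead, Matrix.vecTail]; try module
  have E4 : oqM σ ζ ![1,1,0,0] = -σ 0 := by
    norm_num [oqM, hσ0, hζ0, Matrix.cons_val_two, Matrix.cons_val_three, Matrix.vecHead, Matrix.vecTail]; try module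
  have E5 : oqM σ ζ ![-1,0,0,0] = -σ 1 := by
    norm_num [oqM, hσ0, hζ0, Matrix.cons_val_two, Matrix.cons_val_three, Matrix.vecHead, Matrix.vecTail]; try module
  have E6 : oqM σ ζ ![0,-1,0,0] = -σ 2 := by
    norm_num [oqM, hσ0, hζ0, Matrix.cons_val_two, Matrix.cons_val_three, Matrix.vecHead, Matrix.vecTail]; try module
  have E7 : oqM σ ζ ![0,0,-1,-1] = ζ 0 := by
    norm_num [oqM, hσ0, hζ0, Matrix.cons_val_two, Matrix.cons_val_three, Matrix.vecHead, Matrix.vecTail]; try module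
  have E8 : oqM σ ζ ![0,0,1,0] = ζ 1 := by
    norm_num [oqM, hσ0, hζ0, Matrix.cons_val_two, Matrix.cons_val_three, Matrix.vecHead, Matrix.vecTail]; try module
  have E9 : oqM σ ζ ![0,0,0,1] = ζ 2 := by
    norm_num [oqM, hσ0, hζ0, Matrix.cons_val_two, Matrix.cons_val_three, Matrix.vecHead, Matrix.vecTail]; try module
  have E10 : oqM σ ζ ![0,0,1,1] = -ζ 0 := by
    norm_num [oqM, hσ0, hζ0, Matrix.cons_val_two, Matrix.cons_val_three, Matrix.vecHead, Matrix.vecTail]; try module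
  have E11 : oqM σ ζ ![0,0,-1,0] = -ζ 1 := by
    norm_num [oqM, hσ0, hζ0, Matrix.cons_val_two, Matrix.cons_val_three, Matrix.vecHead, Matrix.vecTail]; try module
  have E12 : oqM σ ζ ![0,0,0,-1] = -ζ 2 := by
    norm_num [oqM, hσ0, hζ0, Matrix.cons_val_two, Matrix.cons_val_three, Matrix.vecHead, Matrix.vecTail]; try module
  have E13 : oqM σ ζ ![-1,-1,0,1] = σ 0 + ζ 2 := by
    norm_num [oqM, hσ0, hζ0, Matrix.cons_val_two, Matrix.cons_val_three, Matrix.vecHead, Matrix.vecTail]; try module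
  have E14 : oqM σ ζ ![1,0,-1,-1] = σ 1 + ζ 0 := by
    norm_num [oqM, hσ0, hζ0, Matrix.cons_val_two, Matrix.cons_val_three, Matrix.vecHead, Matrix.vecTail]; try module
  have E15 : oqM σ ζ ![0,1,1,0] = σ 2 + ζ 1 := by
    norm_num [oqM, hσ0, hζ0, Matrix.cons_val_two, Matrix.cons_val_three, Matrix.vecHead, Matrix.vecTail]; try module
  have E16 : oqM σ ζ ![1,1,0,-1] = -(σ 0 + ζ 2) := by
    norm_num [oqM, hσ0, hζ0, Matrix.cons_val_two, Matrix.cons_val_three, Matrix.vecHead, Matrix.vecTail]; try module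
  have E17 : oqM σ ζ ![-1,0,1,1] = -(σ 1 + ζ 0) := by
    norm_num [oqM, hσ0, hζ0, Matrix.cons_val_two, Matrix.cons_val_three, Matrix.vecHead, Matrix.vecTail]; try module
  have E18 : oqM σ ζ ![0,-1,-1,0] = -(σ 2 + ζ 1) := by
    norm_num [oqM, hσ0, hζ0, Matrix.cons_val_two, Matrix.cons_val_three, Matrix.vecHead, Matrix.vecTail]; try module
  have E19 : oqM σ ζ ![-1,-1,-1,0] = σ 0 - ζ 1 := by
    norm_num [oqM, hσ0, hζ0, Matrix.cons_val_two, Matrix.cons_val_three, Matrix.vecHead, Matrix.vecTail]; try module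
  have E20 : oqM σ ζ ![1,0,0,-1] = σ 1 - ζ 2 := by
    norm_num [oqM, hσ0, hζ0, Matrix.cons_val_two, Matrix.cons_val_three, Matrix.vecHead, Matrix.vecTail]; try module
  have E21 : oqM σ ζ ![0,1,1,1] = σ 2 - ζ 0 := by
    norm_num [oqM, hσ0, hζ0, Matrix.cons_val_two, Matrix.cons_val_three, Matrix.vecHead, Matrix.vecTail]; try module
  have E22 : oqM σ ζ ![1,1,1,0] = -(σ 0 - ζ 1) := by
    norm_num [oqM, hσ0, hζ0, Matrix.cons_val_two, Matrix.cons_val_three, Matrix.vecHead, Matrix.vecTail]; try module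
  have E23 : oqM σ ζ ![-1,0,0,1] = -(σ 1 - ζ 2) := by
    norm_num [oqM, hσ0, hζ0, Matrix.cons_val_two, Matrix.cons_val_three, Matrix.vecHead, Matrix.vecTail]; try module
  have E24 : oqM σ ζ ![0,-1,-1,-1] = -(σ 2 - ζ 0) := by
    norm_num [oqM, hσ0, hζ0, Matrix.cons_val_two, Matrix.cons_val_three, Matrix.vecHead, Matrix.vecTail]; try module
  have hind4 : LinearIndependent ℝ ![σ 1, σ 2, ζ 1, ζ 2] := by
    have hf : Function.Injective (![2,3,4,5] : Fin 4 → Fin 6) := by decide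
    have h' := hindep.comp ![2,3,4,5] hf
    have he : (![τ 1, τ 2, σ 1, σ 2, ζ 1, ζ 2] ∘ ![2,3,4,5]) = ![σ 1, σ 2, ζ 1, ζ 2] := by
      funext k; fin_cases k <;> rfl
    rwa [he] at h'
  have hm_inj : Function.Injective (oqM σ ζ) := by
    intro q q' h
    have h4 := Fintype.linearIndependent_iff.mp hind4 (fun i => ((q i : ℝ) - (q' i : ℝ)))
    have hz' : ∑ i, ((q i : ℝ) - (q' i : ℝ)) • ![σ 1, σ 2, ζ 1, ζ 2] i = 0 := by
      rw [Fin.sum_univ_four]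
      show ((q 0 : ℝ) - (q' 0 : ℝ)) • σ 1 + ((q 1 : ℝ) - (q' 1 : ℝ)) • σ 2
        + ((q 2 : ℝ) - (q' 2 : ℝ)) • ζ 1 + ((q 3 : ℝ) - (q' 3 : ℝ)) • ζ 2 = 0
      have h' : (q 0 : ℝ) • σ 1 + (q 1 : ℝ) • σ 2 + (q 2 : ℝ) • ζ 1 + (q 3 : ℝ) • ζ 2
          = (q' 0 : ℝ) • σ 1 + (q' 1 : ℝ) • σ 2 + (q' 2 : ℝ) • ζ 1 + (q' 3 : ℝ) • ζ 2 := h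
      linear_combination (norm := module) h'
    funext i
    have h2 : (q i : ℝ) = (q' i : ℝ) := sub_eq_zero.mp (h4 hz' i)
    exact_mod_cast h2
  have hRR : R = oqM σ ζ '' ↑oqR0 := by
    ext v
    constructor
    · intro hv
      rw [hR] at hv
      obtain ⟨i, hv⟩ := hv
      rcases hz3 i with rfl|rfl|rfl
      · rcases hv with rfl|rfl|rfl|rfl|rfl|rfl|rfl|rfl
        · exact ⟨![-1,-1,0,0], Finset.mem_coe.mpr (by decide), E1⟩
        · exact ⟨![1,1,0,0], Finset.mem_coe.mpr (by decide), E4⟩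
        · exact ⟨![0,0,-1,-1], Finset.mem_coe.mpr (by decide), E7⟩
        · exact ⟨![0,0,1,1], Finset.mem_coe.mpr (by decide), E10⟩
        · rw [d02]; exact ⟨![-1,-1,0,1], Finset.mem_coe.mpr (by decide), E13⟩
        · rw [d02]; exact ⟨![1,1,0,-1], Finset.mem_coe.mpr (by decide), E16⟩
        · rw [e01]; exact ⟨![-1,-1,-1,0], Finset.mem_coe.mpr (by decide), E19⟩
        · rw [e01]; exact ⟨![1,1,1,0], Finset.mem_coe.mpr (by decide), E22⟩
      · rcases hv with rfl|rfl|rfl|rfl|rfl|rfl|rfl|rfl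
        · exact ⟨![1,0,0,0], Finset.mem_coe.mpr (by decide), E2⟩
        · exact ⟨![-1,0,0,0], Finset.mem_coe.mpr (by decide), E5⟩
        · exact ⟨![0,0,1,0], Finset.mem_coe.mpr (by decide), E8⟩
        · exact ⟨![0,0,-1,0], Finset.mem_coe.mpr (by decide), E11⟩
        · rw [d10]; exact ⟨![1,0,-1,-1], Finset.mem_coe.mpr (by decide), E14⟩
        · rw [d10]; exact ⟨![-1,0,1,1], Finset.mem_coe.mpr (by decide), E17⟩
        · rw [e12]; exact ⟨![1,0,0,-1], Finset.mem_coe.mpr (by decide), E20⟩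
        · rw [e12]; exact ⟨![-1,0,0,1], Finset.mem_coe.mpr (by decide), E23⟩
      · rcases hv with rfl|rfl|rfl|rfl|rfl|rfl|rfl|rfl
        · exact ⟨![0,1,0,0], Finset.mem_coe.mpr (by decide), E3⟩
        · exact ⟨![0,-1,0,0], Finset.mem_coe.mpr (by decide), E6⟩
        · exact ⟨![0,0,0,1], Finset.mem_coe.mpr (by decide), E9⟩
        · exact ⟨![0,0,0,-1], Finset.mem_coe.mpr (by decide), E12⟩
        · rw [d21]; exact ⟨![0,1,1,0], Finset.mem_coe.mpr (by decide), E15⟩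
        · rw [d21]; exact ⟨![0,-1,-1,0], Finset.mem_coe.mpr (by decide), E18⟩
        · rw [e20]; exact ⟨![0,1,1,1], Finset.mem_coe.mpr (by decide), E21⟩
        · rw [e20]; exact ⟨![0,-1,-1,-1], Finset.mem_coe.mpr (by decide), E24⟩
    · rintro ⟨q, hq, rfl⟩
      rw [hR]
      rw [Finset.mem_coe] at hq
      fin_cases hq
      · refine ⟨0, Or.inl ?_⟩; exact E1
      · refine ⟨1, Or.inl ?_⟩; exact E2
      · refine ⟨2, Or.inl ?_⟩; exact E3
      · refine ⟨0, Or.inr (Or.inl ?_)⟩; exact E4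
      · refine ⟨1, Or.inr (Or.inl ?_)⟩; exact E5
      · refine ⟨2, Or.inr (Or.inl ?_)⟩; exact E6
      · refine ⟨0, Or.inr (Or.inr (Or.inl ?_))⟩; exact E7
      · refine ⟨1, Or.inr (Or.inr (Or.inl ?_))⟩; exact E8
      · refine ⟨2, Or.inr (Or.inr (Or.inl ?_))⟩; exact E9
      · refine ⟨0, Or.inr (Or.inr (Or.inr (Or.inl ?_)))⟩; exact E10
      · refine ⟨1, Or.inr (Or.inr (Or.inr (Or.inl ?_)))⟩; exact E11
      · refine ⟨2, Or.inr (Or.inr (Or.inr (Or.inl ?_)))⟩; exact E12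
      · refine ⟨0, Or.inr (Or.inr (Or.inr (Or.inr (Or.inl ?_))))⟩; rw [d02]; exact E13
      · refine ⟨1, Or.inr (Or.inr (Or.inr (Or.inr (Or.inl ?_))))⟩; rw [d10]; exact E14
      · refine ⟨2, Or.inr (Or.inr (Or.inr (Or.inr (Or.inl ?_))))⟩; rw [d21]; exact E15
      · refine ⟨0, Or.inr (Or.inr (Or.inr (Or.inr (Or.inr (Or.inl ?_)))))⟩; rw [d02]; exact E16
      · refine ⟨1, Or.inr (Or.inr (Or.inr (Or.inr (Or.inr (Or.inl ?_)))))⟩; rw [d10]; exact E17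
      · refine ⟨2, Or.inr (Or.inr (Or.inr (Or.inr (Or.inr (Or.inl ?_)))))⟩; rw [d21]; exact E18
      · refine ⟨0, Or.inr (Or.inr (Or.inr (Or.inr (Or.inr (Or.inr (Or.inl ?_))))))⟩; rw [e01]; exact E19
      · refine ⟨1, Or.inr (Or.inr (Or.inr (Or.inr (Or.inr (Or.inr (Or.inl ?_))))))⟩; rw [e12]; exact E20
      · refine ⟨2, Or.inr (Or.inr (Or.inr (Or.inr (Or.inr (Or.inr (Or.inl ?_))))))⟩; rw [e20]; exact E21
      · refine ⟨0, Or.inr (Or.inr (Or.inr (Or.inr (Or.inr (Or.inr (Or.inr ?_))))))⟩; rw [e01]; exact E22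
      · refine ⟨1, Or.inr (Or.inr (Or.inr (Or.inr (Or.inr (Or.inr (Or.inr ?_))))))⟩; rw [e12]; exact E23
      · refine ⟨2, Or.inr (Or.inr (Or.inr (Or.inr (Or.inr (Or.inr (Or.inr ?_))))))⟩; rw [e20]; exact E24
  have hcard : R.ncard = 24 := by
    rw [hRR, Set.ncard_image_of_injective _ hm_inj, Set.ncard_coe_finset]
    decide
  have hRfin : R.Finite := by
    rw [hRR]; exact oqR0.finite_toSet.image _
  have hσe : ∀ i : ZMod 3, σ (i+1) = -σ (i-1) - σ i := by
    intro i; linear_combination (norm := module) hσc i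
  have hζe : ∀ i : ZMod 3, ζ (i+1) = -ζ (i-1) - ζ i := by
    intro i; linear_combination (norm := module) hζc i
  have hmapS : Set.MapsTo (fun x => S x) R R := by
    intro v hv
    rw [hR] at hv ⊢
    obtain ⟨i, hv⟩ := hv
    rcases hv with rfl|rfl|rfl|rfl|rfl|rfl|rfl|rfl
    · exact ⟨i, Or.inr (Or.inr (Or.inr (Or.inr (Or.inl (hSσ i)))))⟩
    · refine ⟨i, Or.inr (Or.inr (Or.inr (Or.inr (Or.inr (Or.inl ?_)))))⟩
      show S (-σ i) = _; rw [map_neg, hSσ i]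
    · exact ⟨i+1, Or.inr (Or.inr (Or.inl (hSζ i)))⟩
    · refine ⟨i+1, Or.inr (Or.inr (Or.inr (Or.inl ?_)))⟩
      show S (-ζ i) = _; rw [map_neg, hSζ i]
    · refine ⟨i, Or.inr (Or.inr (Or.inr (Or.inr (Or.inr (Or.inr (Or.inl ?_))))))⟩
      show S (σ i + ζ (i-1)) = σ i - ζ (i+1)
      rw [map_add, hSσ i, hSζ (i-1), hiA i, hζe i]; module
    · refine ⟨i, Or.inr (Or.inr (Or.inr (Or.inr (Or.inr (Or.inr (Or.inr ?_))))))⟩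
      show S (-(σ i + ζ (i-1))) = -(σ i - ζ (i+1))
      rw [map_neg, map_add, hSσ i, hSζ (i-1), hiA i, hζe i]; module
    · refine ⟨i, Or.inl ?_⟩
      show S (σ i - ζ (i+1)) = σ i
      rw [map_sub, hSσ i, hSζ (i+1), hiC i]; module
    · refine ⟨i, Or.inr (Or.inl ?_)⟩
      show S (-(σ i - ζ (i+1))) = -σ i
      rw [map_neg, map_sub, hSσ i, hSζ (i+1), hiC i]; module
  have hmapT : Set.MapsTo (fun x => T x) R R := by
    intro v hv
    rw [hR] at hv ⊢
    obtain ⟨i, hv⟩ := hv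
    rcases hv with rfl|rfl|rfl|rfl|rfl|rfl|rfl|rfl
    · exact ⟨i-1, Or.inl (hTσ i)⟩
    · refine ⟨i-1, Or.inr (Or.inl ?_)⟩
      show T (-σ i) = _; rw [map_neg, hTσ i]
    · refine ⟨i+1, Or.inr (Or.inr (Or.inr (Or.inr (Or.inl ?_))))⟩
      show T (ζ i) = σ (i+1) + ζ (i+1-1)
      rw [hTζ i, hiB i]; module
    · refine ⟨i+1, Or.inr (Or.inr (Or.inr (Or.inr (Or.inr (Or.inl ?_)))))⟩
      show T (-ζ i) = -(σ (i+1) + ζ (i+1-1))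
      rw [map_neg, hTζ i, hiB i]; module
    · refine ⟨i+1, Or.inr (Or.inr (Or.inr (Or.inr (Or.inr (Or.inr (Or.inr ?_))))))⟩
      show T (σ i + ζ (i-1)) = -(σ (i+1) - ζ (i+1+1))
      rw [map_add, hTσ i, hTζ (i-1), hiA i, hiC i, hσe i]; module
    · refine ⟨i+1, Or.inr (Or.inr (Or.inr (Or.inr (Or.inr (Or.inr (Or.inl ?_))))))⟩
      show T (-(σ i + ζ (i-1))) = σ (i+1) - ζ (i+1+1)
      rw [map_neg, map_add, hTσ i, hTζ (i-1), hiA i, hiC i, hσe i]; module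
    · refine ⟨i+1, Or.inr (Or.inr (Or.inr (Or.inl ?_)))⟩
      show T (σ i - ζ (i+1)) = -ζ (i+1)
      rw [map_sub, hTσ i, hTζ (i+1), hiC i]; module
    · refine ⟨i+1, Or.inr (Or.inr (Or.inl ?_))⟩
      show T (-(σ i - ζ (i+1))) = ζ (i+1)
      rw [map_neg, map_sub, hTσ i, hTζ (i+1), hiC i]; module
  have hbijS : Set.BijOn (fun x => S x) R R :=
    (hRfin.injOn_iff_bijOn_of_mapsTo hmapS).mp (S.injective.injOn)
  have hbijT : Set.BijOn (fun x => T x) R R :=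
    (hRfin.injOn_iff_bijOn_of_mapsTo hmapT).mp (T.injective.injOn)
  set F : Set V := R ∪ (Set.range τ ∪ Set.range fun i => -τ i) with hFdef
  have hFfin : F.Finite :=
    hRfin.union ((Set.finite_range τ).union (Set.finite_range _))
  have hSF : Set.MapsTo ⇑S F F := by
    rintro v (hv | (⟨i, rfl⟩ | ⟨i, rfl⟩))
    · exact Or.inl (hmapS hv)
    · refine Or.inr (Or.inr ⟨i+1, ?_⟩)
      show -τ (i+1) = S (τ i); rw [hSτ i]
    · refine Or.inr (Or.inl ⟨i+1, ?_⟩)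
      show τ (i+1) = S (-τ i); rw [map_neg, hSτ i, neg_neg]
  have hTF : Set.MapsTo ⇑T F F := by
    rintro v (hv | (⟨i, rfl⟩ | ⟨i, rfl⟩))
    · exact Or.inl (hmapT hv)
    · refine Or.inr (Or.inr ⟨i-1, ?_⟩)
      show -τ (i-1) = T (τ i); rw [hTτ i]
    · refine Or.inr (Or.inl ⟨i-1, ?_⟩)
      show τ (i-1) = T (-τ i); rw [map_neg, hTτ i, neg_neg]
  have hstab : ∀ g ∈ Subgroup.closure {S, T}, Set.MapsTo ⇑g F F := by
    intro g hg
    induction hg using Subgroup.closure_induction with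
    | mem x hx =>
      rcases hx with rfl | rfl
      · exact hSF
      · exact hTF
    | one => intro v hv; simpa using hv
    | mul x y hx hy ihx ihy => exact fun v hv => ihx (ihy hv)
    | inv x hx ih =>
      intro v hv
      obtain ⟨w, hw, hxw⟩ :=
        ((hFfin.injOn_iff_bijOn_of_mapsTo ih).mp x.injective.injOn).surjOn hv
      have hxi : x⁻¹ v = w := by
        rw [← hxw]
        show (x⁻¹ * x) w = w
        rw [inv_mul_cancel]
        rfl
      rwa [hxi]
  have hFsub : ({τ 1, τ 2, σ 1, σ 2, ζ 1, ζ 2} : Set V) ⊆ F := by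
    intro x hx
    simp only [Set.mem_insert_iff, Set.mem_singleton_iff] at hx
    rcases hx with rfl|rfl|rfl|rfl|rfl|rfl
    · exact Or.inr (Or.inl ⟨1, rfl⟩)
    · exact Or.inr (Or.inl ⟨2, rfl⟩)
    · exact Or.inl (by rw [hR]; exact ⟨1, Or.inl rfl⟩)
    · exact Or.inl (by rw [hR]; exact ⟨2, Or.inl rfl⟩)
    · exact Or.inl (by rw [hR]; exact ⟨1, Or.inr (Or.inr (Or.inl rfl))⟩)
    · exact Or.inl (by rw [hR]; exact ⟨2, Or.inr (Or.inr (Or.inl rfl))⟩)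
  have hfin : Set.Finite ((Subgroup.closure {S, T} : Subgroup (V ≃ₗ[ℝ] V)) :
      Set (V ≃ₗ[ℝ] V)) := by
    rw [← Set.finite_coe_iff]
    have hFt : Finite ↥F := hFfin.to_subtype
    refine Finite.of_injective
      (fun g : ↥((Subgroup.closure {S, T} : Subgroup (V ≃ₗ[ℝ] V)) : Set (V ≃ₗ[ℝ] V)) =>
        (fun x : ↥F => (⟨g.1 x.1, hstab g.1 g.2 x.2⟩ : ↥F))) ?_
    intro g1 g2 h
    apply Subtype.ext
    have heq : ∀ v ∈ F, g1.1 v = g2.1 v := by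
      intro v hv
      exact congrArg Subtype.val (congrFun h ⟨v, hv⟩)
    exact LinearEquiv.toLinearMap_injective (LinearMap.ext_on hspan (fun x hx => heq x (hFsub hx)))
  exact ⟨S, T, fun i => ⟨hSτ i, hSσ i, hSζ i, hTτ i, hTσ i, hTζ i⟩, hinf, hsup,
    presτ, presσζ, hcard, hbijS, hbijT, hfin⟩
end

section
/- Let A be a 2×2 matrix with rational entries whose characteristic polynomial is irreducible over ℚ and has two distinct real roots λ and μ (necessarily irrational), with corresponding eigenlines L_λ and L_μ in ℝ². If B is an invertible 2×2 matrix with rational entries such that B maps L_λ onto L_μ, then B maps L_μ onto L_λ; in particular B² preserves each of the two eigenlines of A. -/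
open Polynomial Matrix

private lemma vec2_ext' {x y : Fin 2 → ℝ} (h0 : x 0 = y 0) (h1 : x 1 = y 1) : x = y := by
  funext i
  fin_cases i
  · exact h0
  · exact h1

private lemma charpoly_fin_two' (A : Matrix (Fin 2) (Fin 2) ℚ) :
    A.charpoly = (X - C (A 0 0)) * (X - C (A 1 1)) - C (A 0 1) * C (A 1 0) := by
  rw [Matrix.charpoly, Matrix.det_fin_two, charmatrix_apply_eq, charmatrix_apply_eq,
    charmatrix_apply_ne _ _ _ (by decide), charmatrix_apply_ne _ _ _ (by decide)]
  ring

private lemma no_rat_root' (A : Matrix (Fin 2) (Fin 2) ℚ)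
    (hA : Irreducible (Matrix.charpoly A)) (q : ℚ) : ¬ A.charpoly.IsRoot q := by
  intro h
  have h1 := Polynomial.degree_eq_one_of_irreducible_of_root hA h
  have h2 := Matrix.charpoly_degree_eq_dim A
  rw [h1] at h2
  norm_num [Fintype.card_fin] at h2

private lemma real_root_quadratic' (A : Matrix (Fin 2) (Fin 2) ℚ) (t : ℝ)
    (ht : (Matrix.charpoly (A.map ((↑) : ℚ → ℝ))).IsRoot t) :
    (t - (A 0 0 : ℝ)) * (t - (A 1 1 : ℝ)) - (A 0 1 : ℝ) * (A 1 0 : ℝ) = 0 := by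
  have h : A.map ((↑) : ℚ → ℝ) = A.map (Rat.castHom ℝ) := rfl
  rw [h, Matrix.charpoly_map, Polynomial.IsRoot, charpoly_fin_two' A] at ht
  simpa using ht

private lemma mv2' (M : Matrix (Fin 2) (Fin 2) ℚ) (x : Fin 2 → ℝ) (i : Fin 2) :
    ((M.map ((↑) : ℚ → ℝ)).mulVec x) i = (M i 0 : ℝ) * x 0 + (M i 1 : ℝ) * x 1 := by
  simp [Matrix.mulVec, dotProduct, Fin.sum_univ_two]

private lemma eig_span' (A : Matrix (Fin 2) (Fin 2) ℚ) (t : ℝ)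
    (hb : (A 0 1 : ℝ) ≠ 0)
    (hq : (t - (A 0 0 : ℝ)) * (t - (A 1 1 : ℝ)) - (A 0 1 : ℝ) * (A 1 0 : ℝ) = 0) :
    Module.End.eigenspace (Matrix.toLin' (A.map ((↑) : ℚ → ℝ))) t
      = Submodule.span ℝ {![(A 0 1 : ℝ), t - (A 0 0 : ℝ)]} := by
  ext x
  rw [Module.End.mem_eigenspace_iff, Submodule.mem_span_singleton]
  constructor
  · intro h
    have h0 : (A 0 0 : ℝ) * x 0 + (A 0 1 : ℝ) * x 1 = t * x 0 := by
      have h' := congrFun h 0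
      rw [Matrix.toLin'_apply, mv2' A x 0] at h'
      simpa using h'
    refine ⟨x 0 / (A 0 1 : ℝ), vec2_ext' ?_ ?_⟩
    · simp; field_simp
    · simp; rw [div_mul_eq_mul_div, div_eq_iff hb]; linear_combination -h0
  · rintro ⟨r, rfl⟩
    rw [Matrix.toLin'_apply]
    refine vec2_ext' ?_ ?_
    · rw [mv2']; simp; ring
    · rw [mv2']; simp; linear_combination (-r) * hq

/-- Let `A` be a rational `2×2` matrix whose characteristic polynomial is
irreducible over `ℚ` with two distinct real roots `λ`, `μ`, with eigenlines `L_λ`, `L_μ` in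
`ℝ²`. If an invertible rational matrix `B` maps `L_λ` onto `L_μ`, then `B` maps `L_μ` onto
`L_λ`; in particular `B²` preserves each eigenline. -/
theorem stmt_19 (A B : Matrix (Fin 2) (Fin 2) ℚ)
    (hA : Irreducible (Matrix.charpoly A))
    (lam mu : ℝ) (hne : lam ≠ mu)
    (hlam : (Matrix.charpoly (A.map ((↑) : ℚ → ℝ))).IsRoot lam)
    (hmu : (Matrix.charpoly (A.map ((↑) : ℚ → ℝ))).IsRoot mu)
    (hB : IsUnit B)
    (hmap : Submodule.map (Matrix.toLin' (B.map ((↑) : ℚ → ℝ)))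
        (Module.End.eigenspace (Matrix.toLin' (A.map ((↑) : ℚ → ℝ))) lam) =
      Module.End.eigenspace (Matrix.toLin' (A.map ((↑) : ℚ → ℝ))) mu) :
    Submodule.map (Matrix.toLin' (B.map ((↑) : ℚ → ℝ)))
        (Module.End.eigenspace (Matrix.toLin' (A.map ((↑) : ℚ → ℝ))) mu) =
      Module.End.eigenspace (Matrix.toLin' (A.map ((↑) : ℚ → ℝ))) lam ∧
    Submodule.map (Matrix.toLin' ((B * B).map ((↑) : ℚ → ℝ)))
        (Module.End.eigenspace (Matrix.toLin' (A.map ((↑) : ℚ → ℝ))) lam) =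
      Module.End.eigenspace (Matrix.toLin' (A.map ((↑) : ℚ → ℝ))) lam ∧
    Submodule.map (Matrix.toLin' ((B * B).map ((↑) : ℚ → ℝ)))
        (Module.End.eigenspace (Matrix.toLin' (A.map ((↑) : ℚ → ℝ))) mu) =
      Module.End.eigenspace (Matrix.toLin' (A.map ((↑) : ℚ → ℝ))) mu := by
  -- basic abbreviations
  have hql := real_root_quadratic' A lam hlam
  have hqm := real_root_quadratic' A mu hmu
  -- A 0 1 ≠ 0
  have hb : A 0 1 ≠ 0 := by
    intro h
    exact no_rat_root' A hA (A 0 0) (by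
      rw [Polynomial.IsRoot, charpoly_fin_two' A, h]; simp)
  have hbR : (A 0 1 : ℝ) ≠ 0 := by exact_mod_cast hb
  -- irrationality of lam
  have hirr : ∀ q : ℚ, lam ≠ (q : ℝ) := by
    intro q hq'
    rw [hq'] at hql
    have h2 : (q - A 0 0) * (q - A 1 1) - A 0 1 * A 1 0 = 0 := by exact_mod_cast hql
    exact no_rat_root' A hA q (by
      rw [Polynomial.IsRoot, charpoly_fin_two' A]; simpa using h2)
  -- sum of the roots
  have hsum : lam + mu = (A 0 0 : ℝ) + (A 1 1 : ℝ) := by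
    have h2 : (lam - mu) * (lam + mu - ((A 0 0 : ℝ) + (A 1 1 : ℝ))) = 0 := by
      linear_combination hql - hqm
    rcases mul_eq_zero.mp h2 with h3 | h3
    · exact absurd (sub_eq_zero.mp h3) hne
    · linarith [sub_eq_zero.mp h3]
  have hmu2 : mu = (A 0 0 : ℝ) + (A 1 1 : ℝ) - lam := by linarith
  -- eigenspace descriptions
  have hEl := eig_span' A lam hbR hql
  have hEm := eig_span' A mu hbR hqm
  set vl : Fin 2 → ℝ := ![(A 0 1 : ℝ), lam - (A 0 0 : ℝ)] with hvl
  set vm : Fin 2 → ℝ := ![(A 0 1 : ℝ), mu - (A 0 0 : ℝ)] with hvm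
  -- the image of the lam-eigenline
  have hmap' : Submodule.span ℝ {Matrix.toLin' (B.map ((↑) : ℚ → ℝ)) vl}
      = Submodule.span ℝ {vm} := by
    rw [← Set.image_singleton, ← Submodule.map_span, ← hEl, hmap, hEm]
  have h1 : Matrix.toLin' (B.map ((↑) : ℚ → ℝ)) vl ∈ Submodule.span ℝ {vm} := by
    rw [← hmap']; exact Submodule.mem_span_singleton_self _
  obtain ⟨α, hα⟩ := Submodule.mem_span_singleton.mp h1
  have hc0 : α * (A 0 1 : ℝ) = (B 0 0 : ℝ) * (A 0 1 : ℝ) + (B 0 1 : ℝ) * (lam - (A 0 0 : ℝ)) := by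
    have h' := congrFun hα 0
    rw [Matrix.toLin'_apply, mv2' B vl 0] at h'
    simpa [hvl, hvm] using h'
  have hc1 : α * (mu - (A 0 0 : ℝ))
      = (B 1 0 : ℝ) * (A 0 1 : ℝ) + (B 1 1 : ℝ) * (lam - (A 0 0 : ℝ)) := by
    have h' := congrFun hα 1
    rw [Matrix.toLin'_apply, mv2' B vl 1] at h'
    simpa [hvl, hvm] using h'
  -- the key polynomial identity
  have key : ((B 0 0 : ℝ) * (A 0 1 : ℝ) + (B 0 1 : ℝ) * (lam - (A 0 0 : ℝ))) * (mu - (A 0 0 : ℝ))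
      = ((B 1 0 : ℝ) * (A 0 1 : ℝ) + (B 1 1 : ℝ) * (lam - (A 0 0 : ℝ))) * (A 0 1 : ℝ) := by
    linear_combination (A 0 1 : ℝ) * hc1 - (mu - (A 0 0 : ℝ)) * hc0
  -- trace of B vanishes
  have htr : B 0 0 + B 1 1 = 0 := by
    by_contra htr0
    have hm : ((B 0 0 + B 1 1) * A 0 1 : ℚ) ≠ 0 := mul_ne_zero htr0 hb
    have key2 := key
    rw [hmu2] at key2
    have hlin : ((B 0 0 : ℝ) + (B 1 1 : ℝ)) * (A 0 1 : ℝ) * lam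
        = (B 0 0 : ℝ) * (A 0 1 : ℝ) * (A 1 1 : ℝ) - (B 0 1 : ℝ) * (A 0 1 : ℝ) * (A 1 0 : ℝ)
          - (B 1 0 : ℝ) * (A 0 1 : ℝ) ^ 2 + (B 1 1 : ℝ) * (A 0 1 : ℝ) * (A 0 0 : ℝ) := by
      linear_combination (-1 : ℝ) * key2 - (B 0 1 : ℝ) * hql
    refine hirr ((B 0 0 * A 0 1 * A 1 1 - B 0 1 * A 0 1 * A 1 0
        - B 1 0 * A 0 1 ^ 2 + B 1 1 * A 0 1 * A 0 0) / ((B 0 0 + B 1 1) * A 0 1)) ?_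
    have hmR : (((B 0 0 + B 1 1) * A 0 1 : ℚ) : ℝ) ≠ 0 := by exact_mod_cast hm
    rw [Rat.cast_div, eq_div_iff (by push_cast at hmR ⊢; exact hmR)]
    push_cast
    linear_combination hlin
  have hsR : (B 1 1 : ℝ) = -(B 0 0 : ℝ) := by
    have : (B 1 1 : ℚ) = -(B 0 0) := by linarith
    exact_mod_cast this
  -- B sends the mu-eigenline to the lam-eigenline
  set β : ℝ := ((B 0 0 : ℝ) * (A 0 1 : ℝ) + (B 0 1 : ℝ) * (mu - (A 0 0 : ℝ))) / (A 0 1 : ℝ)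
    with hβdef
  have hBvm : Matrix.toLin' (B.map ((↑) : ℚ → ℝ)) vm = β • vl := by
    rw [Matrix.toLin'_apply]
    refine vec2_ext' ?_ ?_
    · rw [mv2' B vm 0]
      simp only [hvl, hvm, hβdef, Pi.smul_apply, Matrix.cons_val_zero, Matrix.cons_val_one,
        Matrix.head_cons, smul_eq_mul]
      field_simp
    · rw [mv2' B vm 1]
      simp only [hvl, hvm, hβdef, Pi.smul_apply, Matrix.cons_val_zero, Matrix.cons_val_one,
        Matrix.head_cons, smul_eq_mul]
      rw [div_mul_eq_mul_div, eq_div_iff hbR]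
      linear_combination (-1 : ℝ) * key + (A 0 1 : ℝ) * (mu - lam) * hsR
  -- β is nonzero
  have hinj : Function.Injective (B.map ((↑) : ℚ → ℝ)).mulVec := by
    rw [Matrix.mulVec_injective_iff_isUnit]
    have := hB.map (RingHom.mapMatrix (Rat.castHom ℝ))
    simpa [RingHom.mapMatrix_apply] using this
  have hβ : β ≠ 0 := by
    intro h0
    rw [h0, zero_smul, Matrix.toLin'_apply] at hBvm
    have hvm0 : vm = 0 := hinj (by rw [Matrix.mulVec_zero]; exact hBvm)
    have := congrFun hvm0 0
    simp [hvm] at this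
    exact hbR (by exact_mod_cast this)
  -- first conclusion
  have first : Submodule.map (Matrix.toLin' (B.map ((↑) : ℚ → ℝ)))
      (Module.End.eigenspace (Matrix.toLin' (A.map ((↑) : ℚ → ℝ))) mu) =
      Module.End.eigenspace (Matrix.toLin' (A.map ((↑) : ℚ → ℝ))) lam := by
    rw [hEm, hEl, Submodule.map_span, Set.image_singleton, hBvm]
    exact Submodule.span_singleton_smul_eq (isUnit_iff_ne_zero.mpr hβ) vl
  -- B * B
  have hBB : (B * B).map ((↑) : ℚ → ℝ) = (B.map ((↑) : ℚ → ℝ)) * (B.map ((↑) : ℚ → ℝ)) := by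
    ext i j
    simp [Matrix.mul_apply, Fin.sum_univ_two]
  refine ⟨first, ?_, ?_⟩
  · rw [hBB, Matrix.toLin'_mul, Submodule.map_comp, hmap, first]
  · rw [hBB, Matrix.toLin'_mul, Submodule.map_comp, first, hmap]
end
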